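/- arXiv:2209.06142 — 8 statements merged into one kernel-verified Lean document; each statement's English description precedes it below -/
import Mathlib

section
/- For every connected simple graph G with n vertices and m edges (n ≥ 2), the number of spanning trees of G is at most (1/n)·(2m/(n−1))^(n−1). -/
open Matrix Finset SimpleGraph

section GrimmettHelpers
set_option linter.unusedSectionVars false
set_option maxHeartbeats 1000000

section MatrixHelpers
variable {W E : Type} [Fintype W] [Fintype E] [DecidableEq W] [DecidableEq E]

lemma det_mul_expand (A : Matrix W E ℝ) (C : Matrix E W ℝ) :
    (A * C).det = ∑ f : W → E, (∏ i, A i (f i)) * (C.submatrix f id).det := by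
  have h0 : (A * C) = Matrix.of fun i => ∑ e, A i e • C e := by
    ext i j
    simp [Matrix.mul_apply]
  rw [h0]
  calc Matrix.det (Matrix.of fun i => ∑ e, A i e • C e)
      = (Matrix.detRowAlternating : (W → ℝ) [⋀^W]→ₗ[ℝ] ℝ) (fun i => ∑ e, A i e • C e) := rfl
    _ = ∑ r : W → E,
        (Matrix.detRowAlternating : (W → ℝ) [⋀^W]→ₗ[ℝ] ℝ) (fun i => A i (r i) • C (r i)) :=
        (Matrix.detRowAlternating : (W → ℝ) [⋀^W]→ₗ[ℝ] ℝ).toMultilinearMap.map_sum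
          (g := fun i e => A i e • C e)
    _ = ∑ r : W → E, (∏ i, A i (r i)) •
        (Matrix.detRowAlternating : (W → ℝ) [⋀^W]→ₗ[ℝ] ℝ) (fun i => C (r i)) := by
        refine Finset.sum_congr rfl fun r _ => ?_
        exact (Matrix.detRowAlternating : (W → ℝ) [⋀^W]→ₗ[ℝ] ℝ).toMultilinearMap.map_smul_univ _ _
    _ = _ := by
        refine Finset.sum_congr rfl fun r _ => ?_
        rw [smul_eq_mul]
        rfl
lemma fiber_sum (A : Matrix W E ℝ) (S : Finset E) (hS : S.card = Fintype.card W) (g0 : W ≃ ↥S) :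
    ∑ f ∈ univ.filter (fun f : W → E => univ.image f = S),
        (∏ i, A i (f i)) * (Aᵀ.submatrix f id).det
      = (A.submatrix id (fun w => ((g0 w : E)))).det ^ 2 := by
  classical
  set P : Matrix W W ℝ := A.submatrix id (fun w => ((g0 w : E))) with hP
  have hmemS : ∀ (f : W → E), f ∈ univ.filter (fun f : W → E => univ.image f = S) →
      ∀ w, f w ∈ S := by
    intro f hf w
    rw [Finset.mem_filter] at hf
    have : f w ∈ univ.image f := Finset.mem_image_of_mem f (Finset.mem_univ w)
    rwa [hf.2] at this
  have key : ∑ f ∈ univ.filter (fun f : W → E => univ.image f = S),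
        (∏ i, A i (f i)) * (Aᵀ.submatrix f id).det
      = ∑ h ∈ univ.filter (fun h : W → W => Function.Bijective h),
        (∏ i, P i (h i)) * ((Pᵀ).submatrix h id).det := by
    refine Finset.sum_bij'
      (i := fun f hf => fun w => g0.symm ⟨f w, hmemS f hf w⟩)
      (j := fun h _ => fun w => ((g0 (h w) : E))) ?_ ?_ ?_ ?_ ?_
    · -- i lands in bijective
      intro f hf
      rw [Finset.mem_filter] at hf ⊢
      refine ⟨Finset.mem_univ _, ?_⟩
      have hinj : Function.Injective f := by
        have h2 : Set.InjOn f ↑(univ : Finset W) := by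
          rw [← Finset.card_image_iff, hf.2, hS, ← Finset.card_univ]
        exact fun a b hab => h2 (Finset.mem_coe.2 (Finset.mem_univ a))
          (Finset.mem_coe.2 (Finset.mem_univ b)) hab
      have : Function.Injective (fun w => g0.symm ⟨f w, hmemS f (by simpa using hf) w⟩ : W → W) := by
        intro a b hab
        simp only [EmbeddingLike.apply_eq_iff_eq, Subtype.mk.injEq] at hab
        exact hinj hab
      exact Finite.injective_iff_bijective.1 this
    · -- j lands in fiber
      intro h hh
      rw [Finset.mem_filter] at hh ⊢
      refine ⟨Finset.mem_univ _, ?_⟩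
      have h1 : univ.image (fun w => ((g0 (h w) : E))) = univ.image (fun w : W => ((g0 w : E))) := by
        rw [show (fun w => ((g0 (h w) : E))) = (fun w : W => ((g0 w : E))) ∘ h from rfl,
          ← Finset.image_image, Finset.image_univ_of_surjective hh.2.surjective]
      rw [h1, show (fun w : W => ((g0 w : E))) = Subtype.val ∘ g0 from rfl, ← Finset.image_image,
        Finset.image_univ_equiv, Finset.univ_eq_attach, Finset.attach_image_val]
    · intro f hf
      funext w
      simp
    · intro h hh
      funext w
      simp
    · intro f hf
      have hPp : (∏ i, P i (g0.symm ⟨f i, hmemS f hf i⟩)) = ∏ i, A i (f i) := by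
        refine Finset.prod_congr rfl fun i _ => ?_
        simp [hP]
      have hMat : (Aᵀ).submatrix f id
          = (Pᵀ).submatrix (fun w => g0.symm ⟨f w, hmemS f hf w⟩) id := by
        ext i w
        simp [hP]
      rw [hPp, hMat]
  rw [key]
  have step2 : ∑ h ∈ univ.filter (fun h : W → W => Function.Bijective h),
        (∏ i, P i (h i)) * ((Pᵀ).submatrix h id).det
      = ∑ h : W → W, (∏ i, P i (h i)) * ((Pᵀ).submatrix h id).det := by
    rw [← Finset.sum_filter_add_sum_filter_not univ (fun h : W → W => Function.Bijective h)]
    have hz : ∑ h ∈ univ.filter (fun h : W → W => ¬ Function.Bijective h),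
        (∏ i, P i (h i)) * ((Pᵀ).submatrix h id).det = 0 := by
      refine Finset.sum_eq_zero fun h hh => ?_
      rw [Finset.mem_filter] at hh
      have : ¬ Function.Injective h := fun hinj => hh.2 (Finite.injective_iff_bijective.1 hinj)
      rw [Function.not_injective_iff] at this
      obtain ⟨a, b, hab, hne⟩ := this
      have hdet : ((Pᵀ).submatrix h id).det = 0 := by
        refine Matrix.det_zero_of_row_eq hne ?_
        funext w
        simp [Matrix.submatrix_apply, hab]
      rw [hdet, mul_zero]
    rw [hz, add_zero]
  rw [step2, ← det_mul_expand P Pᵀ, Matrix.det_mul, Matrix.det_transpose, sq]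
lemma det_self_mul_transpose_ge (A : Matrix W E ℝ) (P : Finset E → Prop) [DecidablePred P]
    (h1 : ∀ S, P S → S.card = Fintype.card W)
    (h2 : ∀ S, P S → ∀ g0 : W ≃ ↥S, 1 ≤ (A.submatrix id (fun w => ((g0 w : E)))).det ^ 2) :
    ((univ.filter P).card : ℝ) ≤ (A * Aᵀ).det := by
  classical
  set F : Finset E → ℝ := fun S => ∑ f ∈ univ.filter (fun f : W → E => univ.image f = S),
      (∏ i, A i (f i)) * (Aᵀ.submatrix f id).det with hF
  have hdet : (A * Aᵀ).det = ∑ S : Finset E, F S := by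
    rw [det_mul_expand]
    exact (Finset.sum_fiberwise univ (fun f : W → E => univ.image f)
      (fun f => (∏ i, A i (f i)) * (Aᵀ.submatrix f id).det)).symm
  have hF0 : ∀ S : Finset E, 0 ≤ F S := by
    intro S
    by_cases hS : S.card = Fintype.card W
    · have g0 : W ≃ ↥S := Fintype.equivOfCardEq (by rw [Fintype.card_coe, hS])
      show (0:ℝ) ≤ ∑ f ∈ univ.filter (fun f : W → E => univ.image f = S),
          (∏ i, A i (f i)) * (Aᵀ.submatrix f id).det
      rw [fiber_sum A S hS g0]
      positivity
    · show (0:ℝ) ≤ ∑ f ∈ univ.filter (fun f : W → E => univ.image f = S),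
          (∏ i, A i (f i)) * (Aᵀ.submatrix f id).det
      refine le_of_eq (Finset.sum_eq_zero fun f hf => ?_).symm
      rw [Finset.mem_filter] at hf
      have hni : ¬ Function.Injective f := by
        intro hinj
        apply hS
        rw [← hf.2, Finset.card_image_of_injective _ hinj, Finset.card_univ]
      rw [Function.not_injective_iff] at hni
      obtain ⟨a, b, hab, hne⟩ := hni
      have hdet0 : ((Aᵀ).submatrix f id).det = 0 := by
        refine Matrix.det_zero_of_row_eq hne ?_
        funext w
        simp [Matrix.submatrix_apply, hab]
      rw [hdet0, mul_zero]
  have hF1 : ∀ S ∈ univ.filter P, (1 : ℝ) ≤ F S := by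
    intro S hS
    rw [Finset.mem_filter] at hS
    have hcard := h1 S hS.2
    have g0 : W ≃ ↥S := Fintype.equivOfCardEq (by rw [Fintype.card_coe, hcard])
    show (1:ℝ) ≤ ∑ f ∈ univ.filter (fun f : W → E => univ.image f = S),
        (∏ i, A i (f i)) * (Aᵀ.submatrix f id).det
    rw [fiber_sum A S hcard g0]
    exact h2 S hS.2 g0
  calc ((univ.filter P).card : ℝ) = ∑ _S ∈ univ.filter P, (1 : ℝ) := by simp
    _ ≤ ∑ S ∈ univ.filter P, F S := Finset.sum_le_sum hF1
    _ ≤ ∑ S : Finset E, F S :=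
        Finset.sum_le_sum_of_subset_of_nonneg (Finset.subset_univ _) fun S _ _ => hF0 S
    _ = (A * Aᵀ).det := hdet.symm
end MatrixHelpers

lemma adjugate_diag_eq (n : Type) [Fintype n] [DecidableEq n] (A : Matrix n n ℝ) (v : n) :
    A.adjugate v v = (A.submatrix (Subtype.val : {w // w ≠ v} → n) Subtype.val).det := by
  rw [Matrix.adjugate_apply]
  let e : ({w : n // w ≠ v} ⊕ PUnit.{1}) ≃ n :=
    (Equiv.optionEquivSumPUnit _).symm.trans (Equiv.optionSubtypeNe v)
  have he1 : ∀ w : {w : n // w ≠ v}, e (Sum.inl w) = (w : n) := fun w => rfl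
  have he2 : e (Sum.inr PUnit.unit) = v := rfl
  rw [← Matrix.det_submatrix_equiv_self e]
  have hM : (A.updateRow v (Pi.single v 1)).submatrix e e
      = Matrix.fromBlocks (A.submatrix (Subtype.val : {w // w ≠ v} → n) Subtype.val)
          (Matrix.of fun (w : {w : n // w ≠ v}) (_ : PUnit.{1}) => A (w : n) v)
          0 1 := by
    ext i j
    cases i with
    | inl w =>
      cases j with
      | inl w' =>
        simp [he1, Matrix.submatrix_apply, Matrix.updateRow_ne w.2]
      | inr u =>
        simp [he1, he2, Matrix.submatrix_apply, Matrix.updateRow_ne w.2]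
    | inr u =>
      cases j with
      | inl w' =>
        simp [he1, he2, Matrix.submatrix_apply, Matrix.updateRow_self,
          Pi.single_apply, (w'.2 : (w' : n) ≠ v)]
      | inr u' =>
        simp [he2, Matrix.submatrix_apply, Matrix.updateRow_self, Pi.single_apply]
  rw [hM, Matrix.det_fromBlocks_zero₂₁, Matrix.det_one, mul_one]

lemma walk_eq_of_adj_eq {V : Type} (H : SimpleGraph V) (y : V → ℝ)
    (hadj : ∀ p q : V, H.Adj p q → y p = y q) {z w : V} (p : H.Walk z w) : y z = y w := by
  induction p with
  | nil => rfl
  | cons h _ ih => exact (hadj _ _ h).trans ih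

lemma tree_minor_det_ge (V : Type) [Fintype V] [DecidableEq V] (G : SimpleGraph V)
    [Fintype ↥G.edgeSet]
    (a b : ↥G.edgeSet → V) (hs : ∀ e, s(a e, b e) = (e : Sym2 V)) (hne : ∀ e, a e ≠ b e)
    (Bz : Matrix V ↥G.edgeSet ℤ)
    (hBz : ∀ u e, Bz u e = if u = a e then 1 else if u = b e then -1 else 0)
    (v : V) (S : Finset ↥G.edgeSet)
    (htree : (SimpleGraph.fromEdgeSet (↑(S.image Subtype.val) : Set (Sym2 V))).IsTree)
    (g0 : {w : V // w ≠ v} ≃ ↥S) :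
    1 ≤ ((Bz.map (Int.cast : ℤ → ℝ)).submatrix (Subtype.val : {w // w ≠ v} → V)
        (fun w => ((g0 w : ↥G.edgeSet)))).det ^ 2 := by
  classical
  set Pz : Matrix {w : V // w ≠ v} {w : V // w ≠ v} ℤ := Bz.submatrix (Subtype.val : {w : V // w ≠ v} → V) (fun w => ((g0 w : ↥G.edgeSet)))
    with hPz
  have hmap : (Bz.map (Int.cast : ℤ → ℝ)).submatrix (Subtype.val : {w : V // w ≠ v} → V)
      (fun w => ((g0 w : ↥G.edgeSet))) = Pz.map (Int.cast : ℤ → ℝ) := by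
    ext i j; rfl
  rw [hmap]
  have hdet : (Pz.map (Int.cast : ℤ → ℝ)).det = ((Pz.det : ℤ) : ℝ) :=
    (RingHom.map_det (Int.castRingHom ℝ) Pz).symm
  -- main claim : real det nonzero
  have hne0 : (Pz.map (Int.cast : ℤ → ℝ)).det ≠ 0 := by
    intro h0
    obtain ⟨x, hx0, hxP⟩ := Matrix.exists_vecMul_eq_zero_iff.mpr h0
    set y : V → ℝ := fun u => if h : u = v then 0 else x ⟨u, h⟩ with hy
    have hyv : y v = 0 := by simp [hy]
    have hyw : ∀ w : {w : V // w ≠ v}, y (w : V) = x w := by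
      intro w
      simp [hy, w.2]
    -- each edge of S forces equality
    have claim1 : ∀ e : ↥G.edgeSet, e ∈ S → y (a e) = y (b e) := by
      intro e heS
      have h1 := congrFun hxP (g0.symm ⟨e, heS⟩)
      rw [Pi.zero_apply] at h1
      have h2 : ∀ u : V, y u * ((Bz u e : ℤ) : ℝ)
          = (if u = a e then y (a e) else 0) + (if u = b e then -(y (b e)) else 0) := by
        intro u
        by_cases h1' : u = a e
        · subst h1'
          rw [hBz]
          simp [hne e]
        · by_cases h2' : u = b e
          · subst h2'
            rw [hBz]
            simp [h1', Ne.symm (hne e)]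
          · rw [hBz]
            simp [h1', h2']
      have h3 : ∑ u : V, y u * ((Bz u e : ℤ) : ℝ) = y (a e) - y (b e) := by
        rw [Finset.sum_congr rfl (fun u _ => h2 u), Finset.sum_add_distrib]
        simp [Finset.sum_ite_eq', sub_eq_add_neg]
      have h4 : ∑ u : V, y u * ((Bz u e : ℤ) : ℝ)
          = ∑ w : {w : V // w ≠ v}, x w * ((Bz (w : V) e : ℤ) : ℝ) := by
        rw [← Finset.sum_erase (f := fun u : V => y u * ((Bz u e : ℤ) : ℝ))
          Finset.univ (show y v * ((Bz v e : ℤ) : ℝ) = 0 by rw [hyv, zero_mul])]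
        rw [Finset.sum_subtype (Finset.univ.erase v)
          (fun u => by simp [Finset.mem_erase] : ∀ u : V, u ∈ Finset.univ.erase v ↔ u ≠ v)
          (fun u => y u * ((Bz u e : ℤ) : ℝ))]
        refine Finset.sum_congr rfl fun w _ => ?_
        rw [hyw]
      have h5 : (x ᵥ* Pz.map (Int.cast : ℤ → ℝ)) (g0.symm ⟨e, heS⟩)
          = ∑ w : {w : V // w ≠ v}, x w * ((Bz (w : V) e : ℤ) : ℝ) := by
        simp only [Matrix.vecMul, dotProduct, Matrix.map_apply, Matrix.submatrix_apply,
          hPz, Equiv.apply_symm_apply]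
      rw [h1] at h5
      have := h3.symm.trans h4
      rw [← h5] at this
      linarith [this]
    -- y is zero everywhere by connectivity
    have hadj : ∀ p q : V, (SimpleGraph.fromEdgeSet (↑(S.image Subtype.val) : Set (Sym2 V))).Adj p q
        → y p = y q := by
      intro p q hpq
      rw [SimpleGraph.fromEdgeSet_adj] at hpq
      obtain ⟨hmem, hne'⟩ := hpq
      rw [Finset.coe_image, Set.mem_image] at hmem
      obtain ⟨e, heS, he⟩ := hmem
      have : s(a e, b e) = s(p, q) := by rw [hs e, he]
      rw [Sym2.eq_iff] at this
      rcases this with ⟨h1', h2'⟩ | ⟨h1', h2'⟩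
      · rw [← h1', ← h2']; exact claim1 e (Finset.mem_coe.1 heS)
      · rw [← h1', ← h2']; exact (claim1 e (Finset.mem_coe.1 heS)).symm
    have claim2 : ∀ u : V, y u = 0 := by
      intro u
      obtain ⟨p⟩ := htree.isConnected.preconnected u v
      exact (walk_eq_of_adj_eq _ y hadj p).trans hyv
    apply hx0
    funext w
    rw [Pi.zero_apply, ← hyw w, claim2]
  -- integrality
  rw [hdet] at hne0 ⊢
  have hz : Pz.det ≠ 0 := by exact_mod_cast hne0
  have h1 : (1 : ℤ) ≤ Pz.det ^ 2 := by
    rcases hz.lt_or_gt with h | h <;> nlinarith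
  calc (1 : ℝ) = ((1 : ℤ) : ℝ) := by norm_num
    _ ≤ ((Pz.det ^ 2 : ℤ) : ℝ) := by exact_mod_cast h1
    _ = ((Pz.det : ℤ) : ℝ) ^ 2 := by push_cast; ring

section Spectral
variable {n : Type} [Fintype n] [DecidableEq n] (L : Matrix n n ℝ) (hL : L.IsHermitian)

lemma trace_eq_sum_eigen : L.trace = ∑ i, hL.eigenvalues i := by
  conv_lhs => rw [hL.spectral_theorem, Unitary.conjStarAlgAut_apply]
  rw [Matrix.trace_mul_comm, ← Matrix.mul_assoc, Unitary.coe_star_mul_self, Matrix.one_mul,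
    Matrix.trace_diagonal]
  simp

lemma trace_adjugate_eq : L.adjugate.trace
    = ∑ j, ∏ i ∈ Finset.univ.erase j, hL.eigenvalues i := by
  conv_lhs => rw [hL.spectral_theorem, Unitary.conjStarAlgAut_apply]
  rw [Matrix.adjugate_mul_distrib, Matrix.adjugate_mul_distrib, Matrix.trace_mul_comm,
    Matrix.mul_assoc, ← Matrix.adjugate_mul_distrib, Unitary.coe_star_mul_self,
    Matrix.adjugate_one, Matrix.mul_one, Matrix.adjugate_diagonal, Matrix.trace_diagonal]
  simp
end Spectral



lemma prod_le_avg_pow {ι : Type} (s : Finset ι) (μ : ι → ℝ) (hμ : ∀ i ∈ s, 0 ≤ μ i)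
    (k : ℕ) (hk : s.card = k) (hk0 : k ≠ 0) :
    ∏ i ∈ s, μ i ≤ ((∑ i ∈ s, μ i) / k) ^ k := by
  have hkpos : (0:ℝ) < k := by
    have : 0 < k := Nat.pos_of_ne_zero hk0
    exact_mod_cast this
  have h := Real.geom_mean_le_arith_mean_weighted s (fun _ => (k:ℝ)⁻¹) μ
    (fun i _ => by positivity)
    (by rw [Finset.sum_const, hk, nsmul_eq_mul, mul_inv_cancel₀ (ne_of_gt hkpos)])
    hμ
  have hprod : ∏ i ∈ s, μ i = (∏ i ∈ s, μ i ^ ((k:ℝ)⁻¹)) ^ k := by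
    rw [← Finset.prod_pow]
    refine (Finset.prod_congr rfl fun i hi => ?_)
    rw [← Real.rpow_natCast (μ i ^ ((k:ℝ)⁻¹)) k, ← Real.rpow_mul (hμ i hi),
      inv_mul_cancel₀ (ne_of_gt hkpos), Real.rpow_one]
  rw [hprod]
  have hbase : (0:ℝ) ≤ ∏ i ∈ s, μ i ^ ((k:ℝ)⁻¹) :=
    Finset.prod_nonneg fun i hi => Real.rpow_nonneg (hμ i hi) _
  have hsum : ∑ i ∈ s, (k:ℝ)⁻¹ * μ i = (∑ i ∈ s, μ i) / k := by
    rw [← Finset.mul_sum]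
    ring
  calc (∏ i ∈ s, μ i ^ ((k:ℝ)⁻¹)) ^ k ≤ (∑ i ∈ s, (k:ℝ)⁻¹ * μ i) ^ k :=
        pow_le_pow_left₀ hbase h k
    _ = ((∑ i ∈ s, μ i) / k) ^ k := by rw [hsum]

/-- Grimmett's inequality: for a connected simple graph `G` with `n ≥ 2` vertices
and `m` edges, the number of spanning trees of `G` is at most
`(1/n) * (2m/(n-1))^(n-1)`. A spanning tree is encoded as a set of edges of `G`
whose associated graph on the full vertex set is a tree. -/
theorem grimmett_spanning_tree_bound (V : Type) [Fintype V] (G : SimpleGraph V)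
    (hconn : G.Connected) (hn : 2 ≤ Fintype.card V) :
    (Nat.card {t : Set (Sym2 V) // t ⊆ G.edgeSet ∧ (SimpleGraph.fromEdgeSet t).IsTree} : ℝ) ≤
      (1 / (Fintype.card V : ℝ)) *
        ((2 * (Nat.card G.edgeSet : ℝ)) / ((Fintype.card V : ℝ) - 1)) ^ (Fintype.card V - 1) := by
  classical
  set n := Fintype.card V with hn_def
  have hV : Nonempty V := Fintype.card_pos_iff.mp (by omega)
  -- edge set as fintype
  letI : Fintype ↥G.edgeSet := Fintype.ofFinite _
  have hm : (Nat.card G.edgeSet : ℝ) = (Fintype.card ↥G.edgeSet : ℝ) := by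
    rw [Nat.card_eq_fintype_card]
  set m := Fintype.card ↥G.edgeSet with hm_def
  -- incidence matrix data
  set a : ↥G.edgeSet → V := fun e => (Quot.out (e : Sym2 V)).1 with ha_def
  set b : ↥G.edgeSet → V := fun e => (Quot.out (e : Sym2 V)).2 with hb_def
  have hs : ∀ e : ↥G.edgeSet, s(a e, b e) = (e : Sym2 V) := by
    intro e
    rw [ha_def, hb_def]
    dsimp only
    exact Quot.out_eq _
  have hadj : ∀ e : ↥G.edgeSet, G.Adj (a e) (b e) := by
    intro e
    have h2 := e.2
    rw [← hs e] at h2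
    exact h2
  have hne : ∀ e : ↥G.edgeSet, a e ≠ b e := fun e => (hadj e).ne
  set Bz : Matrix V ↥G.edgeSet ℤ :=
    Matrix.of (fun u e => if u = a e then 1 else if u = b e then -1 else 0) with hBz_def
  have hBz : ∀ (u : V) (e : ↥G.edgeSet),
      Bz u e = if u = a e then 1 else if u = b e then -1 else 0 := fun u e => rfl
  set B : Matrix V ↥G.edgeSet ℝ := Bz.map (Int.cast : ℤ → ℝ) with hB_def
  set L : Matrix V V ℝ := B * Bᵀ with hL_def
  -- positive semidefiniteness and eigenvalues
  have hct : Bᴴ = Bᵀ := Matrix.conjTranspose_eq_transpose_of_trivial B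
  have hPSD : L.PosSemidef := by
    have h := Matrix.posSemidef_self_mul_conjTranspose B
    rwa [hct] at h
  have hherm : L.IsHermitian := hPSD.1
  set μ : V → ℝ := hherm.eigenvalues with hμ_def
  have hμnn : ∀ i, 0 ≤ μ i := fun i => hPSD.eigenvalues_nonneg i
  -- entrywise column sums
  have hcolsum : ∀ e : ↥G.edgeSet, ∑ u : V, B u e = 0 := by
    intro e
    have hpt : ∀ u : V, B u e
        = (if u = a e then (1:ℝ) else 0) + (if u = b e then (-1:ℝ) else 0) := by
      intro u
      by_cases h1 : u = a e
      · subst h1; simp [hB_def, hBz, hne e]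
      · by_cases h2 : u = b e
        · subst h2; simp [hB_def, hBz, h1]
        · simp [hB_def, hBz, h1, h2]
    rw [Finset.sum_congr rfl fun u _ => hpt u, Finset.sum_add_distrib]
    simp
  have hsqsum : ∀ e : ↥G.edgeSet, ∑ u : V, B u e * B u e = 2 := by
    intro e
    have hpt : ∀ u : V, B u e * B u e
        = (if u = a e then (1:ℝ) else 0) + (if u = b e then (1:ℝ) else 0) := by
      intro u
      by_cases h1 : u = a e
      · subst h1; simp [hB_def, hBz, hne e]
      · by_cases h2 : u = b e
        · subst h2; simp [hB_def, hBz, h1]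
        · simp [hB_def, hBz, h1, h2]
    rw [Finset.sum_congr rfl fun u _ => hpt u, Finset.sum_add_distrib]
    simp
    norm_num
  -- trace of L
  have htrace : L.trace = 2 * (m : ℝ) := by
    have h1 : L.trace = ∑ v : V, ∑ e, B v e * B v e := by
      simp [hL_def, Matrix.trace, Matrix.diag, Matrix.mul_apply]
    rw [h1, Finset.sum_comm, Finset.sum_congr rfl fun e _ => hsqsum e]
    simp [mul_comm]
    rw [hm_def, ← Nat.card_coe_set_eq, Nat.card_eq_fintype_card]
  -- L kills the all-ones vector
  have hker : L *ᵥ (fun _ => (1:ℝ)) = 0 := by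
    rw [hL_def, ← Matrix.mulVec_mulVec]
    have h2 : Bᵀ *ᵥ (fun _ => (1:ℝ)) = 0 := by
      funext e
      simp only [Matrix.mulVec, dotProduct, Matrix.transpose_apply, mul_one,
        Pi.zero_apply]
      exact hcolsum e
    rw [h2, Matrix.mulVec_zero]
  have hdetL : L.det = 0 := by
    refine Matrix.exists_mulVec_eq_zero_iff.mp ⟨fun _ => (1:ℝ), ?_, hker⟩
    intro h0
    obtain ⟨v0⟩ := hV
    have := congrFun h0 v0
    norm_num at this
  obtain ⟨j0, hj0⟩ : ∃ j0, μ j0 = 0 := by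
    have h := hherm.det_eq_prod_eigenvalues
    rw [hdetL] at h
    have h2 : ∏ i, μ i = 0 := by exact_mod_cast h.symm
    obtain ⟨i, _, hi⟩ := Finset.prod_eq_zero_iff.mp h2
    exact ⟨i, hi⟩
  -- the tree-counting predicate on finsets of edges
  set P : Finset ↥G.edgeSet → Prop :=
    fun S => (SimpleGraph.fromEdgeSet (↑(S.image Subtype.val) : Set (Sym2 V))).IsTree with hP_def
  set N := (Finset.univ.filter P).card with hN_def
  -- the number of spanning trees is at most N
  have htau : Nat.card {t : Set (Sym2 V) // t ⊆ G.edgeSet ∧ (SimpleGraph.fromEdgeSet t).IsTree}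
      ≤ N := by
    have himg : ∀ t : Set (Sym2 V), t ⊆ G.edgeSet →
        (↑((Finset.univ.filter (fun e : ↥G.edgeSet => (e : Sym2 V) ∈ t)).image Subtype.val)
          : Set (Sym2 V)) = t := by
      intro t ht
      ext x
      simp only [Finset.coe_image, Set.mem_image, Finset.mem_coe, Finset.mem_filter,
        Finset.mem_univ, true_and]
      constructor
      · rintro ⟨e, he, rfl⟩
        exact he
      · intro hx
        exact ⟨⟨x, ht hx⟩, hx, rfl⟩
    set F : {t : Set (Sym2 V) // t ⊆ G.edgeSet ∧ (SimpleGraph.fromEdgeSet t).IsTree}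
        → {S : Finset ↥G.edgeSet // P S} := fun t =>
      ⟨Finset.univ.filter (fun e : ↥G.edgeSet => (e : Sym2 V) ∈ t.1), by
        rw [hP_def]
        dsimp only
        rw [himg t.1 t.2.1]
        exact t.2.2⟩ with hF_def
    have hFinj : Function.Injective F := by
      intro t1 t2 h12
      have h3 : (F t1).1 = (F t2).1 := by rw [h12]
      apply Subtype.ext
      rw [← himg t1.1 t1.2.1, ← himg t2.1 t2.2.1]
      rw [hF_def] at h3
      dsimp only at h3
      rw [h3]
    calc Nat.card {t : Set (Sym2 V) // t ⊆ G.edgeSet ∧ (SimpleGraph.fromEdgeSet t).IsTree}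
        ≤ Nat.card {S : Finset ↥G.edgeSet // P S} := Nat.card_le_card_of_injective F hFinj
      _ = N := by rw [Nat.card_eq_fintype_card, Fintype.card_subtype, hN_def]
  -- cardinality facts
  have hcardW : ∀ v : V, Fintype.card {w : V // w ≠ v} = n - 1 := by
    intro v
    have := Fintype.card_subtype_compl (fun w : V => w = v)
    simp only [Fintype.card_subtype_eq] at this
    exact this
  have hScard : ∀ S : Finset ↥G.edgeSet, P S → S.card = n - 1 := by
    intro S hS
    set H := SimpleGraph.fromEdgeSet (↑(S.image Subtype.val) : Set (Sym2 V)) with hH_def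
    letI : Fintype ↥H.edgeSet := Fintype.ofFinite _
    have hE : H.edgeSet = (↑(S.image Subtype.val) : Set (Sym2 V)) := by
      rw [hH_def, SimpleGraph.edgeSet_fromEdgeSet]
      ext x
      simp only [Set.mem_diff, Set.mem_setOf_eq, and_iff_left_iff_imp]
      intro hx
      have hxG : x ∈ G.edgeSet := by
        rw [Finset.coe_image] at hx
        obtain ⟨e, _, rfl⟩ := hx
        exact e.2
      exact SimpleGraph.not_isDiag_of_mem_edgeSet G hxG
    have hEF : H.edgeFinset = S.image Subtype.val := by
      ext x
      rw [SimpleGraph.mem_edgeFinset, hE, Finset.mem_coe]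
    have hcard := hS.card_edgeFinset
    rw [hEF, Finset.card_image_of_injective S Subtype.val_injective] at hcard
    omega
  -- per-vertex lower bound on adjugate diagonal
  have hvertex : ∀ v : V, (N : ℝ) ≤ L.adjugate v v := by
    intro v
    rw [adjugate_diag_eq V L v]
    have hLsub : L.submatrix (Subtype.val : {w : V // w ≠ v} → V) Subtype.val
        = (B.submatrix (Subtype.val : {w : V // w ≠ v} → V) id)
          * (B.submatrix (Subtype.val : {w : V // w ≠ v} → V) id)ᵀ := by
      rw [hL_def, Matrix.submatrix_mul B Bᵀ Subtype.val id Subtype.val Function.bijective_id]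
      congr 1
    rw [hLsub]
    have := det_self_mul_transpose_ge
      (B.submatrix (Subtype.val : {w : V // w ≠ v} → V) id) P
      (fun S hS => by rw [hScard S hS, hcardW v])
      (fun S hS g0 => by
        have h2 := tree_minor_det_ge V G a b hs hne Bz hBz v S hS g0
        have heq : ((B.submatrix (Subtype.val : {w : V // w ≠ v} → V) id).submatrix id
            (fun w => ((g0 w : ↥G.edgeSet))))
            = (Bz.map (Int.cast : ℤ → ℝ)).submatrix (Subtype.val : {w : V // w ≠ v} → V)
              (fun w => ((g0 w : ↥G.edgeSet))) := by
          ext i j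
          rfl
        rw [heq]
        exact h2)
    rw [hN_def]
    exact this
  -- assemble: n * N ≤ trace of adjugate = e_{n-1} of eigenvalues
  have hsum_adj : (n : ℝ) * N ≤ L.adjugate.trace := by
    have h1 : L.adjugate.trace = ∑ v : V, L.adjugate v v := by
      simp [Matrix.trace, Matrix.diag]
    rw [h1]
    calc (n : ℝ) * N = ∑ _v : V, (N : ℝ) := by
          rw [Finset.sum_const, Finset.card_univ, nsmul_eq_mul, hn_def]
      _ ≤ ∑ v : V, L.adjugate v v := Finset.sum_le_sum fun v _ => hvertex v
  have hadj_eigen : L.adjugate.trace = ∏ i ∈ Finset.univ.erase j0, μ i := by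
    rw [trace_adjugate_eq L hherm]
    refine Finset.sum_eq_single j0 (fun j _ hj => ?_) (fun h => absurd (Finset.mem_univ j0) h)
    exact Finset.prod_eq_zero (Finset.mem_erase.mpr ⟨hj.symm, Finset.mem_univ j0⟩) hj0
  have herase_card : (Finset.univ.erase j0).card = n - 1 := by
    rw [Finset.card_erase_of_mem (Finset.mem_univ j0), Finset.card_univ, hn_def]
  have herase_sum : ∑ i ∈ Finset.univ.erase j0, μ i = 2 * (m : ℝ) := by
    rw [Finset.sum_erase _ hj0, ← trace_eq_sum_eigen L hherm, htrace]
  have hamgm : ∏ i ∈ Finset.univ.erase j0, μ i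
      ≤ ((2 * (m:ℝ)) / ((n:ℝ) - 1)) ^ (n - 1) := by
    have h := prod_le_avg_pow (Finset.univ.erase j0) μ (fun i _ => hμnn i) (n-1)
      herase_card (by omega)
    rw [herase_sum] at h
    have hcast : (((n - 1 : ℕ)) : ℝ) = (n : ℝ) - 1 := by
      have : 1 ≤ n := by omega
      push_cast [Nat.cast_sub this]
      ring
    rwa [hcast] at h
  -- final arithmetic
  have hkey : (n : ℝ) * N ≤ ((2 * (m:ℝ)) / ((n:ℝ) - 1)) ^ (n - 1) :=
    le_trans hsum_adj (le_trans (le_of_eq hadj_eigen) hamgm)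
  have hnpos : (0:ℝ) < n := by
    have : 0 < n := by omega
    exact_mod_cast this
  have htau_real : (Nat.card {t : Set (Sym2 V) // t ⊆ G.edgeSet
      ∧ (SimpleGraph.fromEdgeSet t).IsTree} : ℝ) ≤ (N : ℝ) := by
    exact_mod_cast htau
  rw [hm]
  calc (Nat.card {t : Set (Sym2 V) // t ⊆ G.edgeSet
      ∧ (SimpleGraph.fromEdgeSet t).IsTree} : ℝ) ≤ (N : ℝ) := htau_real
    _ ≤ (1 / (n:ℝ)) * ((2 * (m:ℝ)) / ((n:ℝ) - 1)) ^ (n - 1) := by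
        rw [one_div, inv_mul_eq_div, le_div_iff₀ hnpos]
        calc (N:ℝ) * n = (n:ℝ) * N := by ring
          _ ≤ _ := hkey
end GrimmettHelpers
end

section
/- For every simple graph G, if p(G,k) denotes the number of matchings of G with exactly k edges, then p(G,k)^2 ≥ p(G,k−1)·p(G,k+1) for all k ≥ 1. -/
open Finset
set_option linter.unusedSectionVars false
namespace HLaux


variable {α : Type*} [LinearOrder α]

/-- inclusive prefix sum -/
noncomputable def pre (K : Finset α) (σ : α → ℤ) (Q : α) : ℤ :=
  ∑ R ∈ K.filter (· ≤ Q), σ R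

/-- exclusive prefix sum -/
noncomputable def pre' (K : Finset α) (σ : α → ℤ) (Q : α) : ℤ :=
  ∑ R ∈ K.filter (· < Q), σ R

/-- the canonical global-minimum position of prefix sums -/
noncomputable def pick (K : Finset α) (τ : α → ℤ) : Option α :=
  if h : (K.filter (fun Q => ∀ R ∈ K, pre K τ Q ≤ pre K τ R)).Nonempty
  then some ((K.filter (fun Q => ∀ R ∈ K, pre K τ Q ≤ pre K τ R)).min' h)
  else none

lemma pre_eq_pre'_add (K : Finset α) (σ : α → ℤ) {Q : α} (hQ : Q ∈ K) :
    pre K σ Q = pre' K σ Q + σ Q := by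
  classical
  have h : K.filter (· ≤ Q) = insert Q (K.filter (· < Q)) := by
    ext R
    simp only [mem_filter, mem_insert]
    constructor
    · rintro ⟨hR, hle⟩
      rcases lt_or_eq_of_le hle with h | h
      · exact Or.inr ⟨hR, h⟩
      · exact Or.inl h
    · rintro (rfl | ⟨hR, hlt⟩)
      · exact ⟨hQ, le_refl _⟩
      · exact ⟨hR, le_of_lt hlt⟩
  rw [pre, pre', h, Finset.sum_insert (by simp)]
  ring

lemma pre_next (K : Finset α) (σ : α → ℤ) {R : α} (hR : R ∈ K) :
    (∃ N ∈ K, R < N ∧ pre K σ R = pre' K σ N) ∨ pre K σ R = ∑ Q ∈ K, σ Q := by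
  classical
  by_cases h : (K.filter (fun Q => R < Q)).Nonempty
  · left
    set N := (K.filter (fun Q => R < Q)).min' h with hN
    have hNmem := (K.filter (fun Q => R < Q)).min'_mem h
    rw [mem_filter] at hNmem
    refine ⟨N, hNmem.1, hNmem.2, ?_⟩
    have : K.filter (· ≤ R) = K.filter (· < N) := by
      ext Q
      simp only [mem_filter]
      constructor
      · rintro ⟨hQ, hle⟩; exact ⟨hQ, lt_of_le_of_lt hle hNmem.2⟩
      · rintro ⟨hQ, hlt⟩
        refine ⟨hQ, ?_⟩
        by_contra hc
        push_neg at hc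
        exact absurd ((K.filter (fun Q => R < Q)).min'_le Q (mem_filter.2 ⟨hQ, hc⟩)) (not_le.2 hlt)
    rw [pre, pre', this]
  · right
    have : K.filter (· ≤ R) = K := by
      apply Finset.filter_true_of_mem
      intro Q hQ
      by_contra hc
      exact h ⟨Q, mem_filter.2 ⟨hQ, not_le.1 hc⟩⟩
    rw [pre, this]

/-- The key combinatorial selection lemma: from a family with total weight 2
(weights ≤ 1) we can select an element `P` of weight 1 such that `P` is
recoverable from the flipped weight function. -/
lemma select (K : Finset α) (σ : α → ℤ)
    (hb : ∀ Q ∈ K, σ Q ≤ 1) (hs : ∑ Q ∈ K, σ Q = 2) :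
    ∃ P ∈ K, σ P = 1 ∧ ∀ (τ : α → ℤ), τ P = -1 → (∀ Q ∈ K, Q ≠ P → τ Q = σ Q) →
      pick K τ = some P := by
  classical
  have hne : K.Nonempty := by
    rcases K.eq_empty_or_nonempty with rfl | h
    · simp at hs
    · exact h
  set m : ℤ := (K.image (pre' K σ)).min' (hne.image _) with hm
  have hm_le : ∀ R ∈ K, m ≤ pre' K σ R := fun R hR =>
    Finset.min'_le _ _ (mem_image_of_mem _ hR)
  have hm0 : m ≤ 0 := by
    have h1 : pre' K σ (K.min' hne) = 0 := by
      rw [pre']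
      have : K.filter (· < K.min' hne) = ∅ := by
        apply Finset.filter_false_of_mem
        intro Q hQ
        exact not_lt.2 (K.min'_le Q hQ)
      rw [this, Finset.sum_empty]
    calc m ≤ pre' K σ (K.min' hne) := hm_le _ (K.min'_mem hne)
      _ = 0 := h1
  have hT0ne : (K.filter (fun Q => pre' K σ Q = m)).Nonempty := by
    have : m ∈ K.image (pre' K σ) := Finset.min'_mem _ _
    rw [Finset.mem_image] at this
    obtain ⟨Q, hQ, hQm⟩ := this
    exact ⟨Q, mem_filter.2 ⟨hQ, hQm⟩⟩
  obtain ⟨P, hPK, hPpre, hPmax⟩ :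
      ∃ P, P ∈ K ∧ pre' K σ P = m ∧ ∀ Q ∈ K, pre' K σ Q = m → Q ≤ P := by
    have h1 := (K.filter (fun Q => pre' K σ Q = m)).max'_mem hT0ne
    rw [mem_filter] at h1
    exact ⟨_, h1.1, h1.2, fun Q hQ hQm => Finset.le_max' _ Q (mem_filter.2 ⟨hQ, hQm⟩)⟩
  have h_after' : ∀ R ∈ K, P < R → m + 1 ≤ pre' K σ R := by
    intro R hR hlt
    rcases lt_or_eq_of_le (hm_le R hR) with h | h
    · omega
    · exact absurd hlt (not_lt.2 (hPmax R hR h.symm))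
  have h_after : ∀ R ∈ K, P ≤ R → m + 1 ≤ pre K σ R := by
    intro R hR hle
    rcases pre_next K σ hR with ⟨N, hN, hRN, hpre⟩ | hpre
    · rw [hpre]; exact h_after' N hN (lt_of_le_of_lt hle hRN)
    · rw [hpre, hs]; omega
  have h_all : ∀ R ∈ K, m ≤ pre K σ R := by
    intro R hR
    rcases pre_next K σ hR with ⟨N, hN, _, hpre⟩ | hpre
    · rw [hpre]; exact hm_le N hN
    · rw [hpre, hs]; omega
  have hσP : σ P = 1 := by
    have h1 := h_after P hPK (le_refl _)
    rw [pre_eq_pre'_add K σ hPK, hPpre] at h1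
    have := hb P hPK
    omega
  have hpreP : pre K σ P = m + 1 := by
    rw [pre_eq_pre'_add K σ hPK, hPpre, hσP]
  refine ⟨P, hPK, hσP, ?_⟩
  intro τ hτP hτ
  have hτpre_lt : ∀ R, R < P → pre K τ R = pre K σ R := by
    intro R hRP
    apply Finset.sum_congr rfl
    intro Q hQ
    rw [mem_filter] at hQ
    refine hτ Q hQ.1 ?_
    intro h; subst h; exact absurd hRP (not_lt.2 hQ.2)
  have hτpre_ge : ∀ R, P ≤ R → pre K τ R = pre K σ R - 2 := by
    intro R hPR
    have hPF : P ∈ K.filter (· ≤ R) := mem_filter.2 ⟨hPK, hPR⟩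
    have : pre K τ R - pre K σ R = ∑ Q ∈ K.filter (· ≤ R), (τ Q - σ Q) := by
      rw [Finset.sum_sub_distrib]; rfl
    have h2 : ∑ Q ∈ K.filter (· ≤ R), (τ Q - σ Q) = τ P - σ P := by
      apply Finset.sum_eq_single_of_mem P hPF
      intro Q hQ hQP
      rw [mem_filter] at hQ
      rw [hτ Q hQ.1 hQP]; ring
    rw [hτP, hσP] at h2
    omega
  have hτP : pre K τ P = m - 1 := by rw [hτpre_ge P (le_refl _), hpreP]; ring
  have hmin : ∀ R ∈ K, pre K τ P ≤ pre K τ R := by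
    intro R hR
    rcases lt_or_ge R P with h | h
    · rw [hτpre_lt R h, hτP]
      have := h_all R hR; omega
    · rw [hτpre_ge R h, hτP]
      have := h_after R hR h; omega
  have hPT : P ∈ K.filter (fun Q => ∀ R ∈ K, pre K τ Q ≤ pre K τ R) :=
    mem_filter.2 ⟨hPK, hmin⟩
  rw [pick, dif_pos ⟨P, hPT⟩]
  congr 1
  apply le_antisymm
  · exact Finset.min'_le _ _ hPT
  · apply Finset.le_min'
    intro Q hQ
    rw [mem_filter] at hQ
    by_contra hc
    push_neg at hc
    have h1 : pre K τ Q ≤ pre K τ P := hQ.2 P hPK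
    rw [hτpre_lt Q hc, hτP] at h1
    have := h_all Q hQ.1
    omega



open scoped Classical

variable {V : Type} [Fintype V]

/-- two edges share a vertex -/
def shares (e f : Sym2 V) : Prop := ∃ v : V, v ∈ e ∧ v ∈ f

lemma shares_symm {e f : Sym2 V} (h : shares e f) : shares f e := by
  obtain ⟨v, h1, h2⟩ := h; exact ⟨v, h2, h1⟩

lemma shares_self (e : Sym2 V) : shares e e := by
  induction e using Sym2.ind with
  | _ x y => exact ⟨x, by simp, by simp⟩

/-- adjacency relation among edges of `S` -/
def rel (S : Finset (Sym2 V)) (e f : Sym2 V) : Prop :=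
  e ∈ S ∧ f ∈ S ∧ shares e f

lemma rel_symm (S : Finset (Sym2 V)) : Symmetric (rel S) := by
  rintro e f ⟨h1, h2, h3⟩; exact ⟨h2, h1, shares_symm h3⟩

/-- the connected component of `e` in `S` -/
noncomputable def comp (S : Finset (Sym2 V)) (e : Sym2 V) : Finset (Sym2 V) :=
  S.filter (Relation.ReflTransGen (rel S) e)

lemma comp_subset (S : Finset (Sym2 V)) (e : Sym2 V) : comp S e ⊆ S :=
  Finset.filter_subset _ _

lemma mem_comp_self {S : Finset (Sym2 V)} {e : Sym2 V} (h : e ∈ S) : e ∈ comp S e :=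
  mem_filter.2 ⟨h, Relation.ReflTransGen.refl⟩

lemma comp_eq_of_mem {S : Finset (Sym2 V)} {e f : Sym2 V} (hf : f ∈ comp S e) :
    comp S f = comp S e := by
  rw [comp, mem_filter] at hf
  obtain ⟨hfS, hreach⟩ := hf
  ext g
  simp only [comp, mem_filter, and_congr_right_iff]
  intro hg
  constructor
  · exact fun h => hreach.trans h
  · intro h
    exact ((@Relation.ReflTransGen.symmetric _ (rel S) ⟨fun a b hab => rel_symm S hab⟩).symm _ _ hreach).trans h

lemma comp_disj {S : Finset (Sym2 V)} {P Q : Finset (Sym2 V)}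
    (hP : P ∈ S.image (comp S)) (hQ : Q ∈ S.image (comp S)) (hne : P ≠ Q) :
    Disjoint P Q := by
  rw [Finset.mem_image] at hP hQ
  obtain ⟨e, _, rfl⟩ := hP
  obtain ⟨f, _, rfl⟩ := hQ
  rw [Finset.disjoint_left]
  intro g hg hg'
  exact hne ((comp_eq_of_mem hg).symm.trans (comp_eq_of_mem hg'))

lemma biUnion_comps (S : Finset (Sym2 V)) :
    (S.image (comp S)).biUnion id = S := by
  apply Finset.Subset.antisymm
  · intro g hg
    rw [Finset.mem_biUnion] at hg
    obtain ⟨P, hP, hgP⟩ := hg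
    rw [Finset.mem_image] at hP
    obtain ⟨e, _, rfl⟩ := hP
    exact comp_subset S e hgP
  · intro e he
    rw [Finset.mem_biUnion]
    exact ⟨comp S e, mem_image_of_mem _ he, mem_comp_self he⟩

/-- card of the intersection with `X` sums over components -/
lemma sum_comps_card (S X : Finset (Sym2 V)) :
    ∑ P ∈ S.image (comp S), (P ∩ X).card = (S ∩ X).card := by
  have h1 : (S.image (comp S)).biUnion (fun P => P ∩ X) = S ∩ X := by
    have h2 := biUnion_comps S
    apply Finset.Subset.antisymm
    · intro g hg
      rw [Finset.mem_biUnion] at hg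
      obtain ⟨P, hP, hgP⟩ := hg
      rw [Finset.mem_inter] at hgP ⊢
      refine ⟨?_, hgP.2⟩
      rw [← h2, Finset.mem_biUnion]
      exact ⟨P, hP, hgP.1⟩
    · intro g hg
      rw [Finset.mem_inter] at hg
      rw [Finset.mem_biUnion]
      exact ⟨comp S g, mem_image_of_mem _ hg.1, Finset.mem_inter.2 ⟨mem_comp_self hg.1, hg.2⟩⟩
  rw [← h1, Finset.card_biUnion]
  intro P hP Q hQ hne
  exact (comp_disj hP hQ hne).mono Finset.inter_subset_left Finset.inter_subset_left

/-- vertex set of an edge -/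
noncomputable def ef (e : Sym2 V) : Finset V := Finset.univ.filter (· ∈ e)

lemma mem_ef {v : V} {e : Sym2 V} : v ∈ ef e ↔ v ∈ e := by simp [ef]

lemma ef_card_le (e : Sym2 V) : (ef e).card ≤ 2 := by
  induction e using Sym2.ind with
  | _ x y =>
    have : ef s(x, y) ⊆ {x, y} := by
      intro v hv
      rw [mem_ef, Sym2.mem_iff] at hv
      simp [hv]
    calc (ef s(x, y)).card ≤ ({x, y} : Finset V).card := Finset.card_le_card this
      _ ≤ 2 := Finset.card_insert_le _ _ |>.trans (by simp)

lemma ef_card_eq {e : Sym2 V} (h : ¬ e.IsDiag) : (ef e).card = 2 := by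
  induction e using Sym2.ind with
  | _ x y =>
    have hxy : x ≠ y := by simpa [Sym2.isDiag_iff_proj_eq] using h
    have : ef s(x, y) = {x, y} := by
      ext v
      rw [mem_ef, Sym2.mem_iff]
      simp
    rw [this, Finset.card_insert_of_notMem (by simpa using hxy), Finset.card_singleton]

/-- vertex set of a set of edges -/
noncomputable def vset (P : Finset (Sym2 V)) : Finset V := P.biUnion ef

lemma vset_mono {P Q : Finset (Sym2 V)} (h : P ⊆ Q) : vset P ⊆ vset Q :=
  Finset.biUnion_subset_biUnion_of_subset_left _ h

lemma mem_vset {v : V} {P : Finset (Sym2 V)} : v ∈ vset P ↔ ∃ e ∈ P, v ∈ e := by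
  simp [vset, mem_ef]

/-- a pairwise-disjoint set of nondiagonal edges has twice as many vertices -/
lemma two_card_le_vset {A : Finset (Sym2 V)}
    (hd : ∀ e ∈ A, ∀ f ∈ A, e ≠ f → ¬ shares e f)
    (hnd : ∀ e ∈ A, ¬ e.IsDiag) :
    2 * A.card ≤ (vset A).card := by
  rw [vset, Finset.card_biUnion]
  · rw [Finset.sum_congr rfl (fun e he => ef_card_eq (hnd e he)), Finset.sum_const,
      smul_eq_mul, mul_comm]
  · intro e he f hf hne
    rw [Function.onFun, Finset.disjoint_left]
    intro v hv hv'
    exact hd e he f hf hne ⟨v, mem_ef.1 hv, mem_ef.1 hv'⟩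





noncomputable def reachN (S : Finset (Sym2 V)) (e : Sym2 V) : ℕ → Finset (Sym2 V)
  | 0 => {e}
  | n+1 => reachN S e n ∪ S.filter (fun f => ∃ g ∈ reachN S e n, shares g f)

lemma sym2_three {α : Type*} {f : Sym2 α} {u u' v : α} (hu : u ∈ f) (hu' : u' ∈ f)
    (hv : v ∈ f) (hne : u ≠ u') : v = u ∨ v = u' := by
  induction f using Sym2.ind with
  | _ x y =>
    rw [Sym2.mem_iff] at hu hu' hv
    rcases hu with rfl | rfl <;> rcases hu' with rfl | rfl <;> rcases hv with rfl | rfl <;> tauto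

lemma reach_mono_succ (S : Finset (Sym2 V)) (e : Sym2 V) (n : ℕ) :
    reachN S e n ⊆ reachN S e (n+1) := Finset.subset_union_left

lemma reach_mono (S : Finset (Sym2 V)) (e : Sym2 V) {n m : ℕ} (h : n ≤ m) :
    reachN S e n ⊆ reachN S e m := by
  induction m with
  | zero => rw [Nat.le_zero.1 h]
  | succ m ih =>
    rcases Nat.lt_or_ge n (m+1) with h' | h'
    · exact (ih (Nat.lt_succ_iff.1 h')).trans (reach_mono_succ S e m)
    · rw [Nat.le_antisymm h h']

-- vertex bound along reach
lemma vset_reach_card (S : Finset (Sym2 V)) (e : Sym2 V) (n : ℕ) :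
    (vset (reachN S e n)).card ≤ (reachN S e n).card + 1 := by
  induction n with
  | zero =>
    rw [reachN]
    have h1 : vset ({e} : Finset (Sym2 V)) = ef e := by
      simp [vset]
    rw [h1, Finset.card_singleton]
    exact ef_card_le e
  | succ n ih =>
    set R := reachN S e n with hR
    set R' := reachN S e (n+1) with hR'
    have hRR' : R ⊆ R' := reach_mono_succ S e n
    -- new vertices inject into new edges
    have hnew : ((vset R') \ (vset R)).card ≤ (R' \ R).card := by
      have hch : ∀ u ∈ vset R' \ vset R, ∃ f ∈ R' \ R, u ∈ f := by
        intro u hu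
        rw [Finset.mem_sdiff] at hu
        obtain ⟨hu1, hu2⟩ := hu
        rw [mem_vset] at hu1
        obtain ⟨f, hf, huf⟩ := hu1
        refine ⟨f, Finset.mem_sdiff.2 ⟨hf, ?_⟩, huf⟩
        intro hfR
        exact hu2 (mem_vset.2 ⟨f, hfR, huf⟩)
      choose F hF1 hF2 using hch
      apply Finset.card_le_card_of_injOn (fun u => if h : u ∈ vset R' \ vset R then F u h else e)
      · intro u hu
        rw [Finset.mem_coe] at hu
        simp only [dif_pos hu, Finset.mem_coe]
        exact hF1 u hu
      · intro u hu u' hu' heq0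
        rw [Finset.mem_coe] at hu hu'
        have heq : (if h : u ∈ vset R' \ vset R then F u h else e) =
            (if h : u' ∈ vset R' \ vset R then F u' h else e) := heq0
        rw [dif_pos hu, dif_pos hu'] at heq
        by_contra hne
        -- F u hu = F u' hu' =: f contains u and u', distinct, so f = s(u,u')
        set f := F u hu with hfdef
        have hff : f ∈ R' \ R := hF1 u hu
        have huf : u ∈ f := hF2 u hu
        have huf' : u' ∈ f := heq ▸ hF2 u' hu'
        -- f is in the new filter part, so it shares a vertex with R
        have hfR' : f ∈ R' := (Finset.mem_sdiff.1 hff).1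
        have hfnR : f ∉ R := (Finset.mem_sdiff.1 hff).2
        rw [hR', reachN, Finset.mem_union] at hfR'
        rcases hfR' with h | h
        · exact hfnR h
        · rw [Finset.mem_filter] at h
          obtain ⟨-, g, hg, v, hvg, hvf⟩ := h
          have hvR : v ∈ vset R := mem_vset.2 ⟨g, hg, hvg⟩
          -- v ∈ f and u, u' ∈ f with u ≠ u' forces v = u or v = u'
          have : v = u ∨ v = u' := sym2_three huf huf' hvf hne
          have hu2 := (Finset.mem_sdiff.1 hu).2
          have hu2' := (Finset.mem_sdiff.1 hu').2
          rcases this with rfl | rfl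
          · exact hu2 hvR
          · exact hu2' hvR
    have hsub : vset R' ⊆ vset R ∪ (vset R' \ vset R) := by
      intro v hv
      rw [Finset.mem_union, Finset.mem_sdiff]
      by_cases h : v ∈ vset R
      · exact Or.inl h
      · exact Or.inr ⟨hv, h⟩
    calc (vset R').card
        ≤ (vset R ∪ (vset R' \ vset R)).card := Finset.card_le_card hsub
      _ ≤ (vset R).card + ((vset R') \ (vset R)).card := Finset.card_union_le _ _
      _ ≤ (R.card + 1) + (R' \ R).card := by
          exact Nat.add_le_add ih hnew
      _ = R'.card + 1 := by
          have := Finset.card_sdiff_add_card_eq_card hRR'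
          omega

lemma reach_subset {S : Finset (Sym2 V)} {e : Sym2 V} (he : e ∈ S) (n : ℕ) :
    reachN S e n ⊆ S := by
  induction n with
  | zero => simpa [reachN] using he
  | succ n ih =>
    rw [reachN]
    exact Finset.union_subset ih (Finset.filter_subset _ _)

lemma reach_sub_comp {S : Finset (Sym2 V)} {e : Sym2 V} (he : e ∈ S) (n : ℕ) :
    reachN S e n ⊆ comp S e := by
  induction n with
  | zero => simpa [reachN] using mem_comp_self he
  | succ n ih =>
    rw [reachN]
    apply Finset.union_subset ih
    intro f hf
    rw [Finset.mem_filter] at hf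
    obtain ⟨hfS, g, hg, hshare⟩ := hf
    have hgc := ih hg
    rw [comp, Finset.mem_filter] at hgc ⊢
    refine ⟨hfS, hgc.2.tail ⟨reach_subset he n hg, hfS, hshare⟩⟩

lemma comp_sub_reach {S : Finset (Sym2 V)} {e f : Sym2 V}
    (hf : f ∈ comp S e) : ∃ n, f ∈ reachN S e n := by
  have h2 : Relation.ReflTransGen (rel S) e f := (Finset.mem_filter.1 hf).2
  clear hf
  induction h2 with
  | refl => exact ⟨0, by simp [reachN]⟩
  | @tail b c hab hbc ih =>
    obtain ⟨n, hn⟩ := ih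
    exact ⟨n+1, by
      rw [reachN, Finset.mem_union]
      right
      rw [Finset.mem_filter]
      exact ⟨hbc.2.1, b, hn, hbc.2.2⟩⟩

lemma comp_eq_reach {S : Finset (Sym2 V)} {e : Sym2 V} (he : e ∈ S) :
    ∃ N, comp S e = reachN S e N := by
  have h : ∀ f ∈ comp S e, ∃ n, f ∈ reachN S e n := fun f hf => comp_sub_reach hf
  set g : Sym2 V → ℕ := fun f => if hf : ∃ n, f ∈ reachN S e n then Nat.find hf else 0 with hg
  refine ⟨(comp S e).sup g, ?_⟩
  apply Finset.Subset.antisymm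
  · intro f hf
    have hex := h f hf
    have : f ∈ reachN S e (g f) := by
      rw [hg]; simp only [dif_pos hex]
      exact Nat.find_spec hex
    exact reach_mono S e (Finset.le_sup hf) this
  · exact reach_sub_comp he _

/-- the key connectivity counting: a component covers at most `card + 1` vertices -/
lemma vset_comp_card {S : Finset (Sym2 V)} {e : Sym2 V} (he : e ∈ S) :
    (vset (comp S e)).card ≤ (comp S e).card + 1 := by
  obtain ⟨N, hN⟩ := comp_eq_reach he
  rw [hN]
  exact vset_reach_card S e N


-- ===== Part 2: swap lemmas =====

/-- pairwise disjointness of a set of edges -/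
def disjE (A : Finset (Sym2 V)) : Prop := ∀ e ∈ A, ∀ f ∈ A, e ≠ f → ¬ shares e f

lemma sdiff_eq_inter {A B P : Finset (Sym2 V)} (hP : P ⊆ symmDiff A B) :
    P \ A = P ∩ B := by
  ext x
  simp only [Finset.mem_sdiff, Finset.mem_inter]
  constructor
  · rintro ⟨hxP, hxA⟩
    have := hP hxP
    rw [Finset.mem_symmDiff] at this
    exact ⟨hxP, by tauto⟩
  · rintro ⟨hxP, hxB⟩
    have := hP hxP
    rw [Finset.mem_symmDiff] at this
    exact ⟨hxP, by tauto⟩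

lemma card_split {A B P : Finset (Sym2 V)} (hP : P ⊆ symmDiff A B) :
    P.card = (P ∩ A).card + (P ∩ B).card := by
  have h1 : (P ∩ A).card + (P \ A).card = P.card := Finset.card_inter_add_card_sdiff P A
  rw [sdiff_eq_inter hP] at h1
  omega

lemma surplus_le {A B S : Finset (Sym2 V)} (hS : S = symmDiff A B)
    (hdB : disjE B) (hnd : ∀ e ∈ S, ¬ e.IsDiag) {e0 : Sym2 V} (he0 : e0 ∈ S) :
    (comp S e0 ∩ B).card ≤ (comp S e0 ∩ A).card + 1 := by
  set P := comp S e0 with hPdef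
  have hPS : P ⊆ S := comp_subset S e0
  have h1 : 2 * (P ∩ B).card ≤ (vset (P ∩ B)).card := by
    apply two_card_le_vset
    · intro e he f hf hne
      exact hdB e (Finset.mem_inter.1 he).2 f (Finset.mem_inter.1 hf).2 hne
    · intro e he
      exact hnd e (hPS (Finset.mem_inter.1 he).1)
  have h2 : (vset (P ∩ B)).card ≤ (vset P).card :=
    Finset.card_le_card (vset_mono Finset.inter_subset_left)
  have h3 : (vset P).card ≤ P.card + 1 := vset_comp_card he0
  have h4 : P.card = (P ∩ A).card + (P ∩ B).card := card_split (hS ▸ hPS)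
  omega

lemma mem_comp_of_shares {S : Finset (Sym2 V)} {e0 f e : Sym2 V}
    (hf : f ∈ comp S e0) (heS : e ∈ S) (hsh : shares f e) : e ∈ comp S e0 := by
  rw [← comp_eq_of_mem hf]
  rw [comp, Finset.mem_filter]
  exact ⟨heS, Relation.ReflTransGen.single ⟨comp_subset S e0 hf, heS, hsh⟩⟩

lemma disjE_swap {A B S : Finset (Sym2 V)} (hS : S = symmDiff A B)
    (hdA : disjE A) (hdB : disjE B) {e0 : Sym2 V} (he0 : e0 ∈ S) :
    disjE (symmDiff A (comp S e0)) := by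
  set P := comp S e0 with hPdef
  have hPS : P ⊆ S := comp_subset S e0
  have hPB : ∀ x, x ∈ P → x ∉ A → x ∈ B := by
    intro x hx hxA
    have := hPS hx
    rw [hS, Finset.mem_symmDiff] at this
    tauto
  -- key: an edge of A that is not in P cannot share a vertex with an edge of P,
  -- unless it is in B
  have key : ∀ e, e ∈ A → e ∉ P → ∀ f, f ∈ P → f ∉ A → shares e f → e ∈ B := by
    intro e heA hePn f hfP hfA hsh
    by_contra heB
    have heS : e ∈ S := by rw [hS, Finset.mem_symmDiff]; tauto
    exact hePn (mem_comp_of_shares hfP heS (shares_symm hsh))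
  intro e he f hf hne hsh
  rw [Finset.mem_symmDiff] at he hf
  rcases he with ⟨heA, hePn⟩ | ⟨heP, heA⟩ <;> rcases hf with ⟨hfA, hfPn⟩ | ⟨hfP, hfA⟩
  · exact hdA e heA f hfA hne hsh
  · have heB : e ∈ B := key e heA hePn f hfP hfA hsh
    exact hdB e heB f (hPB f hfP hfA) hne hsh
  · have hfB : f ∈ B := key f hfA hfPn e heP heA (shares_symm hsh)
    exact hdB e (hPB e heP heA) f hfB hne hsh
  · exact hdB e (hPB e heP heA) f (hPB f hfP hfA) hne hsh

lemma card_swap {A B P : Finset (Sym2 V)} (hP : P ⊆ symmDiff A B) :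
    (symmDiff A P).card + (P ∩ A).card = A.card + (P ∩ B).card := by
  have hsd : symmDiff A P = (A \ P) ∪ (P \ A) := rfl
  have hdisj : Disjoint (A \ P) (P \ A) := by
    rw [Finset.disjoint_left]
    intro x hx hx'
    exact (Finset.mem_sdiff.1 hx').2 (Finset.mem_sdiff.1 hx).1
  have h1 : (symmDiff A P).card = (A \ P).card + (P \ A).card := by
    rw [hsd, Finset.card_union_of_disjoint hdisj]
  have h2 : (A ∩ P).card + (A \ P).card = A.card := Finset.card_inter_add_card_sdiff A P
  have h3 : P \ A = P ∩ B := sdiff_eq_inter hP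
  have h4 : (A ∩ P).card = (P ∩ A).card := by rw [Finset.inter_comm]
  rw [h3] at h1
  omega

lemma symmDiff_swap_swap (A B P : Finset (Sym2 V)) :
    symmDiff (symmDiff A P) (symmDiff B P) = symmDiff A B := by
  ext x
  simp only [Finset.mem_symmDiff]
  tauto

lemma inter_swap_self {A B P : Finset (Sym2 V)} (hP : P ⊆ symmDiff A B) :
    P ∩ (symmDiff A P) = P ∩ B := by
  have h1 : P ∩ symmDiff A P = P \ A := by
    ext x
    simp only [Finset.mem_inter, Finset.mem_symmDiff, Finset.mem_sdiff]
    tauto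
  rw [h1, sdiff_eq_inter hP]

lemma inter_swap_other {A P Q : Finset (Sym2 V)} (hdisj : Disjoint Q P) :
    Q ∩ (symmDiff A P) = Q ∩ A := by
  ext x
  simp only [Finset.mem_inter, Finset.mem_symmDiff]
  constructor
  · rintro ⟨hxQ, h⟩
    rcases h with ⟨h1, h2⟩ | ⟨h1, h2⟩
    · exact ⟨hxQ, h1⟩
    · exact absurd h1 (Finset.disjoint_left.1 hdisj hxQ)
  · rintro ⟨hxQ, hxA⟩
    exact ⟨hxQ, Or.inl ⟨hxA, Finset.disjoint_left.1 hdisj hxQ⟩⟩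

-- ===== index equivalence and recover =====

noncomputable def eidx : Finset (Sym2 V) ≃ Fin (Fintype.card (Finset (Sym2 V))) :=
  Fintype.equivFin _

noncomputable def recover' (S C D : Finset (Sym2 V)) : Finset (Sym2 V) :=
  let K := (S.image (comp S)).image (eidx (V := V))
  ((pick K (fun i => (((eidx.symm i) ∩ D).card : ℤ) - (((eidx.symm i) ∩ C).card : ℤ))).map
    eidx.symm).getD ∅

noncomputable def recover (C D : Finset (Sym2 V)) : Finset (Sym2 V) :=
  recover' (symmDiff C D) C D

-- ===== the main step lemma =====

set_option maxHeartbeats 2000000 in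
lemma step (G : SimpleGraph V) (A B : Finset (Sym2 V))
    (hAE : A ⊆ G.edgeFinset) (hBE : B ⊆ G.edgeFinset)
    (hdA : disjE A) (hdB : disjE B)
    (hcard : A.card + 2 = B.card) :
    ∃ P : Finset (Sym2 V),
      (symmDiff A P ⊆ G.edgeFinset ∧ (symmDiff A P).card = A.card + 1 ∧ disjE (symmDiff A P)) ∧
      (symmDiff B P ⊆ G.edgeFinset ∧ (symmDiff B P).card + 1 = B.card ∧ disjE (symmDiff B P)) ∧
      recover (symmDiff A P) (symmDiff B P) = P := by
  classical
  set S := symmDiff A B with hS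
  have hSE : S ⊆ G.edgeFinset := by
    intro e he
    rw [hS, Finset.mem_symmDiff] at he
    rcases he with ⟨h, -⟩ | ⟨h, -⟩
    · exact hAE h
    · exact hBE h
  have hnd : ∀ e ∈ S, ¬ e.IsDiag := by
    intro e he
    exact G.not_isDiag_of_mem_edgeSet (SimpleGraph.mem_edgeFinset.1 (hSE he))
  set comps := S.image (comp S) with hcomps
  set K := comps.image (eidx (V := V)) with hK
  set σ : Fin (Fintype.card (Finset (Sym2 V))) → ℤ :=
    fun i => (((eidx.symm i) ∩ B).card : ℤ) - (((eidx.symm i) ∩ A).card : ℤ) with hσ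
  -- bound on σ over K
  have hb : ∀ i ∈ K, σ i ≤ 1 := by
    intro i hi
    rw [hK, Finset.mem_image] at hi
    obtain ⟨Q, hQ, rfl⟩ := hi
    rw [hcomps, Finset.mem_image] at hQ
    obtain ⟨e0, he0, rfl⟩ := hQ
    have := surplus_le hS hdB hnd he0
    simp only [hσ, Equiv.symm_apply_apply]
    push_cast
    omega
  -- total of σ over K is 2
  have hs : ∑ i ∈ K, σ i = 2 := by
    rw [hK, Finset.sum_image (fun x _ y _ h => eidx.injective h)]
    have h1 : ∑ Q ∈ comps, σ (eidx Q)
        = ∑ Q ∈ comps, (((Q ∩ B).card : ℤ) - ((Q ∩ A).card : ℤ)) := by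
      apply Finset.sum_congr rfl
      intro Q hQ
      simp [hσ, Equiv.symm_apply_apply]
    rw [h1, Finset.sum_sub_distrib]
    have h2 : ∑ Q ∈ comps, ((Q ∩ B).card : ℤ) = ((S ∩ B).card : ℤ) := by
      rw [← Nat.cast_sum, hcomps, sum_comps_card]
    have h3 : ∑ Q ∈ comps, ((Q ∩ A).card : ℤ) = ((S ∩ A).card : ℤ) := by
      rw [← Nat.cast_sum, hcomps, sum_comps_card]
    rw [h2, h3]
    have h4 : S ∩ B = B \ A := by
      ext x
      rw [hS]
      simp only [Finset.mem_inter, Finset.mem_symmDiff, Finset.mem_sdiff]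
      tauto
    have h5 : S ∩ A = A \ B := by
      ext x
      rw [hS]
      simp only [Finset.mem_inter, Finset.mem_symmDiff, Finset.mem_sdiff]
      tauto
    have h6 : (B ∩ A).card + (B \ A).card = B.card := Finset.card_inter_add_card_sdiff B A
    have h7 : (A ∩ B).card + (A \ B).card = A.card := Finset.card_inter_add_card_sdiff A B
    have h8 : (B ∩ A).card = (A ∩ B).card := by rw [Finset.inter_comm]
    rw [h4, h5]
    push_cast
    omega
  obtain ⟨p, hpK, hσp, hrecov⟩ := select K σ hb hs
  set P := eidx.symm p with hPdef
  have hpP : eidx (V := V) P = p := eidx.apply_symm_apply p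
  have hPcomps : P ∈ comps := by
    rw [hK, Finset.mem_image] at hpK
    obtain ⟨Q, hQ, hQp⟩ := hpK
    rwa [hPdef, ← hQp, Equiv.symm_apply_apply]
  obtain ⟨e0, he0, hPe0⟩ : ∃ e0 ∈ S, comp S e0 = P := by
    rw [hcomps, Finset.mem_image] at hPcomps
    obtain ⟨e0, he0, h⟩ := hPcomps
    exact ⟨e0, he0, h⟩
  have hPS : P ⊆ S := hPe0 ▸ comp_subset S e0
  have hσP : ((P ∩ B).card : ℤ) - ((P ∩ A).card : ℤ) = 1 := by
    have := hσp
    simp only [hσ, hPdef] at this ⊢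
    exact this
  have hPB : (P ∩ B).card = (P ∩ A).card + 1 := by omega
  -- the swapped pair
  have hPsub : P ⊆ symmDiff A B := hS ▸ hPS
  have hPsubB : P ⊆ symmDiff B A := by
    rw [symmDiff_comm]; exact hPsub
  refine ⟨P, ⟨?_, ?_, ?_⟩, ⟨?_, ?_, ?_⟩, ?_⟩
  · -- C ⊆ edgeFinset
    intro x hx
    rw [Finset.mem_symmDiff] at hx
    rcases hx with ⟨h, -⟩ | ⟨h, -⟩
    · exact hAE h
    · exact hSE (hPS h)
  · -- card C
    have := card_swap hPsub
    omega
  · -- disjE C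
    rw [← hPe0]
    exact disjE_swap hS hdA hdB he0
  · -- D ⊆ edgeFinset
    intro x hx
    rw [Finset.mem_symmDiff] at hx
    rcases hx with ⟨h, -⟩ | ⟨h, -⟩
    · exact hBE h
    · exact hSE (hPS h)
  · -- card D
    have h1 := card_swap hPsubB
    have h2 : P ∩ A ⊆ A := Finset.inter_subset_right
    omega
  · -- disjE D
    have hSBA : S = symmDiff B A := by rw [hS, symmDiff_comm]
    rw [← hPe0]
    exact disjE_swap hSBA hdB hdA (hSBA ▸ he0)
  · -- recovery
    have hCD : symmDiff (symmDiff A P) (symmDiff B P) = S := by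
      rw [symmDiff_swap_swap, hS]
    have hτP : (fun i => (((eidx.symm i) ∩ symmDiff B P).card : ℤ)
        - (((eidx.symm i) ∩ symmDiff A P).card : ℤ)) p = -1 := by
      simp only [← hPdef]
      have h1 : P ∩ symmDiff A P = P ∩ B := inter_swap_self hPsub
      have h2 : P ∩ symmDiff B P = P ∩ A := inter_swap_self hPsubB
      rw [h1, h2]
      omega
    have hτ : ∀ i ∈ K, i ≠ p → (fun i => (((eidx.symm i) ∩ symmDiff B P).card : ℤ)
        - (((eidx.symm i) ∩ symmDiff A P).card : ℤ)) i = σ i := by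
      intro i hi hip
      rw [hK, Finset.mem_image] at hi
      obtain ⟨Q, hQ, rfl⟩ := hi
      have hQP : Q ≠ P := by
        intro h; exact hip (by rw [h, hpP])
      have hdisj : Disjoint Q P := comp_disj hQ hPcomps hQP
      have h1 : Q ∩ symmDiff A P = Q ∩ A := inter_swap_other hdisj
      have h2 : Q ∩ symmDiff B P = Q ∩ B := inter_swap_other hdisj
      simp only [hσ, Equiv.symm_apply_apply]
      rw [h1, h2]
    have hmin := hrecov
      (fun i => (((eidx.symm i) ∩ symmDiff B P).card : ℤ)
        - (((eidx.symm i) ∩ symmDiff A P).card : ℤ)) hτP hτ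
    rw [recover, hCD]
    show ((pick K (fun i => (((eidx.symm i) ∩ symmDiff B P).card : ℤ) - (((eidx.symm i) ∩ symmDiff A P).card : ℤ))).map eidx.symm).getD ∅ = P
    rw [hmin]
    exact hPdef.symm

end HLaux

open scoped Classical in
/-- The number of `k`-matchings of a simple graph `G`: sets of `k` pairwise
disjoint (non-adjacent) edges of `G`. -/
noncomputable def matchingCount (V : Type) [Fintype V] (G : SimpleGraph V) (k : ℕ) : ℕ :=
  (G.edgeFinset.powerset.filter (fun m => m.card = k ∧
    ∀ e ∈ m, ∀ f ∈ m, e ≠ f → ∀ v : V, ¬(v ∈ e ∧ v ∈ f))).card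

/-- Heilmann–Lieb theorem: the matching numbers of a simple graph are
log-concave: `p(G,k)^2 ≥ p(G,k-1) * p(G,k+1)` for all `k ≥ 1`. -/
theorem matching_log_concave (V : Type) [Fintype V] (G : SimpleGraph V) (k : ℕ) (hk : 1 ≤ k) :
    matchingCount V G (k - 1) * matchingCount V G (k + 1) ≤ (matchingCount V G k) ^ 2 := by
  classical
  set M : ℕ → Finset (Finset (Sym2 V)) := fun j => G.edgeFinset.powerset.filter (fun m =>
    m.card = j ∧ ∀ e ∈ m, ∀ f ∈ m, e ≠ f → ∀ v : V, ¬(v ∈ e ∧ v ∈ f)) with hMdef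
  have hM : ∀ j, matchingCount V G j = (M j).card := by
    intro j
    rw [matchingCount, hMdef]
  have hmem : ∀ (j : ℕ) (A : Finset (Sym2 V)),
      A ∈ M j ↔ (A ⊆ G.edgeFinset ∧ A.card = j ∧ HLaux.disjE A) := by
    intro j A
    rw [hMdef]
    simp only [Finset.mem_filter, Finset.mem_powerset]
    constructor
    · rintro ⟨h1, h2, h3⟩
      refine ⟨h1, h2, ?_⟩
      rintro e he f hf hne ⟨v, hv1, hv2⟩
      exact h3 e he f hf hne v ⟨hv1, hv2⟩
    · rintro ⟨h1, h2, h3⟩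
      refine ⟨h1, h2, ?_⟩
      intro e he f hf hne v hv
      exact h3 e he f hf hne ⟨v, hv.1, hv.2⟩
  -- the injection
  have key : (M (k-1) ×ˢ M (k+1)).card ≤ (M k ×ˢ M k).card := by
    have hgood : ∀ pr : Finset (Sym2 V) × Finset (Sym2 V),
        pr ∈ M (k-1) ×ˢ M (k+1) →
        ∃ P : Finset (Sym2 V),
          (symmDiff pr.1 P ⊆ G.edgeFinset ∧ (symmDiff pr.1 P).card = pr.1.card + 1 ∧
            HLaux.disjE (symmDiff pr.1 P)) ∧
          (symmDiff pr.2 P ⊆ G.edgeFinset ∧ (symmDiff pr.2 P).card + 1 = pr.2.card ∧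
            HLaux.disjE (symmDiff pr.2 P)) ∧
          HLaux.recover (symmDiff pr.1 P) (symmDiff pr.2 P) = P := by
      intro pr hpr
      rw [Finset.mem_product] at hpr
      obtain ⟨h1, h2, h3⟩ := (hmem _ _).1 hpr.1
      obtain ⟨h4, h5, h6⟩ := (hmem _ _).1 hpr.2
      have hcard : pr.1.card + 2 = pr.2.card := by omega
      exact HLaux.step G pr.1 pr.2 h1 h4 h3 h6 hcard
    apply Finset.card_le_card_of_injOn (fun pr =>
      if h : ∃ P : Finset (Sym2 V),
          (symmDiff pr.1 P ⊆ G.edgeFinset ∧ (symmDiff pr.1 P).card = pr.1.card + 1 ∧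
            HLaux.disjE (symmDiff pr.1 P)) ∧
          (symmDiff pr.2 P ⊆ G.edgeFinset ∧ (symmDiff pr.2 P).card + 1 = pr.2.card ∧
            HLaux.disjE (symmDiff pr.2 P)) ∧
          HLaux.recover (symmDiff pr.1 P) (symmDiff pr.2 P) = P
      then (symmDiff pr.1 h.choose, symmDiff pr.2 h.choose) else pr)
    · intro pr hpr
      have h := hgood pr hpr
      rw [Finset.mem_coe, Finset.mem_product] at hpr
      obtain ⟨h1, h2, h3⟩ := (hmem _ _).1 hpr.1
      obtain ⟨h4, h5, h6⟩ := (hmem _ _).1 hpr.2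
      simp only [dif_pos h]
      obtain ⟨⟨g1, g2, g3⟩, ⟨g4, g5, g6⟩, -⟩ := h.choose_spec
      have m1 : symmDiff pr.1 h.choose ∈ M k := (hmem _ _).2 ⟨g1, by omega, g3⟩
      have m2 : symmDiff pr.2 h.choose ∈ M k := (hmem _ _).2 ⟨g4, by omega, g6⟩
      exact Finset.mem_product.2 ⟨m1, m2⟩
    · intro pr hpr pr' hpr' heq
      rw [Finset.mem_coe] at hpr hpr'
      have h := hgood pr hpr
      have h' := hgood pr' hpr'
      simp only [dif_pos h, dif_pos h'] at heq
      obtain ⟨-, -, hrec⟩ := h.choose_spec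
      obtain ⟨-, -, hrec'⟩ := h'.choose_spec
      rw [Prod.mk.injEq] at heq
      obtain ⟨heq1, heq2⟩ := heq
      have hPP : h.choose = h'.choose := by
        rw [← hrec, ← hrec', heq1, heq2]
      have e1 : pr.1 = pr'.1 := by
        have := congrArg (fun X => symmDiff X h.choose) heq1
        rwa [symmDiff_symmDiff_cancel_right, hPP, symmDiff_symmDiff_cancel_right] at this
      have e2 : pr.2 = pr'.2 := by
        have := congrArg (fun X => symmDiff X h.choose) heq2
        rwa [symmDiff_symmDiff_cancel_right, hPP, symmDiff_symmDiff_cancel_right] at this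
      exact Prod.ext e1 e2
  rw [hM, hM, hM, pow_two]
  rwa [Finset.card_product, Finset.card_product] at key
end

section
/- Let A and B be hereditary collections of labeled graphs on the vertex set [n], meaning closed under taking spanning subgraphs (deleting edges). Then |A|·|B| ≤ 2^C(n,2) · |A ∩ B|. -/
open Finset

namespace KleitmanAux

variable {n : ℕ}

noncomputable def f (G : SimpleGraph (Fin n)) : Finset {x : Sym2 (Fin n) // ¬x.IsDiag} := by
  classical
  exact Finset.univ.filter (fun e => (e : Sym2 (Fin n)) ∈ G.edgeSet)

lemma mem_f {G : SimpleGraph (Fin n)} {e : {x : Sym2 (Fin n) // ¬x.IsDiag}} :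
    e ∈ f G ↔ (e : Sym2 (Fin n)) ∈ G.edgeSet := by
  classical
  simp [f]

lemma f_subset_f {G H : SimpleGraph (Fin n)} : f G ⊆ f H ↔ G ≤ H := by
  rw [← SimpleGraph.edgeSet_subset_edgeSet]
  constructor
  · intro h x hx
    have hd : ¬ x.IsDiag := SimpleGraph.not_isDiag_of_mem_edgeSet _ hx
    have := h (x := ⟨x, hd⟩) (by rwa [mem_f])
    rwa [mem_f] at this
  · intro h e he
    rw [mem_f] at he ⊢
    exact h he

lemma f_injective : Function.Injective (f (n := n)) := by
  intro G H h
  exact le_antisymm (f_subset_f.1 h.le) (f_subset_f.1 h.ge)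

noncomputable def g (s : Finset {x : Sym2 (Fin n) // ¬x.IsDiag}) : SimpleGraph (Fin n) :=
  SimpleGraph.fromEdgeSet {x | ∃ h : ¬x.IsDiag, ⟨x, h⟩ ∈ s}

lemma f_g (s : Finset {x : Sym2 (Fin n) // ¬x.IsDiag}) : f (g s) = s := by
  ext e
  rw [mem_f]
  simp only [g, SimpleGraph.edgeSet_fromEdgeSet, Set.mem_diff, Set.mem_setOf_eq]
  constructor
  · rintro ⟨⟨h, hs⟩, _⟩; exact hs
  · intro hs; exact ⟨⟨e.2, hs⟩, e.2⟩

end KleitmanAux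

open KleitmanAux

/-- Kleitman's inequality: if `A` and `B` are hereditary collections of labeled
graphs on `[n]` (closed under deleting edges, i.e. under taking spanning
subgraphs), then `|A| * |B| ≤ 2^C(n,2) * |A ∩ B|`. -/
theorem kleitman_inequality (n : ℕ) (A B : Set (SimpleGraph (Fin n)))
    (hA : ∀ G ∈ A, ∀ H : SimpleGraph (Fin n), H ≤ G → H ∈ A)
    (hB : ∀ G ∈ B, ∀ H : SimpleGraph (Fin n), H ≤ G → H ∈ B) :
    Nat.card A * Nat.card B ≤ 2 ^ n.choose 2 * Nat.card ↥(A ∩ B) := by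
  classical
  set 𝒜 : Finset (Finset {x : Sym2 (Fin n) // ¬x.IsDiag}) := A.toFinset.image f with h𝒜
  set ℬ : Finset (Finset {x : Sym2 (Fin n) // ¬x.IsDiag}) := B.toFinset.image f with hℬ
  have lower : ∀ (S : Set (SimpleGraph (Fin n))),
      (∀ G ∈ S, ∀ H : SimpleGraph (Fin n), H ≤ G → H ∈ S) →
      IsLowerSet ((S.toFinset.image f : Finset _) : Set (Finset {x : Sym2 (Fin n) // ¬x.IsDiag})) := by
    intro S hS s t hts ht
    simp only [coe_image, Set.mem_image, mem_coe, Set.mem_toFinset] at ht ⊢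
    obtain ⟨G, hG, rfl⟩ := ht
    refine ⟨g t, hS G hG _ ?_, f_g t⟩
    rw [← f_subset_f, f_g]
    exact hts
  have key := (lower A hA).le_card_inter_finset (lower B hB)
  have hcard : Fintype.card {x : Sym2 (Fin n) // ¬x.IsDiag} = n.choose 2 := by
    rw [Sym2.card_subtype_not_diag, Fintype.card_fin]
  rw [hcard] at key
  have hinter : 𝒜 ∩ ℬ = (A ∩ B).toFinset.image f := by
    rw [h𝒜, hℬ, ← Finset.image_inter _ _ f_injective]
    congr 1
    ext G
    simp
  have cA : Nat.card A = 𝒜.card := by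
    rw [h𝒜, Finset.card_image_of_injective _ f_injective, Set.toFinset_card,
      Nat.card_eq_fintype_card]
  have cB : Nat.card B = ℬ.card := by
    rw [hℬ, Finset.card_image_of_injective _ f_injective, Set.toFinset_card,
      Nat.card_eq_fintype_card]
  have cAB : Nat.card ↥(A ∩ B) = (𝒜 ∩ ℬ).card := by
    rw [hinter, Finset.card_image_of_injective _ f_injective, Set.toFinset_card,
      Nat.card_eq_fintype_card]
  rw [cA, cB, cAB]
  exact key
end

section
/- Let P = (X, ≺) be a finite poset with n elements, let e(P) be the number of linear extensions of P, and for x ∈ X let b(x) be the size of the upper order ideal {y : y ⪰ x}. Then e(P) · ∏_{x∈X} b(x) ≥ n!. -/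
open Finset

/-- Extend a linear extension of `X ∖ {m}` to one of `X`, placing `m` first. -/
def extEquiv {X : Type} [Fintype X] [DecidableEq X] [PartialOrder X] {n : ℕ} (hX : Fintype.card X = n + 1)
    (m : X) (hm : Fintype.card {y : X // y ≠ m} = n)
    (ρ : {y : X // y ≠ m} ≃ Fin (Fintype.card {y : X // y ≠ m})) : X ≃ Fin (Fintype.card X) :=
  (Equiv.optionSubtypeNe m).symm.trans
    (((ρ.trans (finCongr hm)).optionCongr).trans
      ((finSuccEquiv n).symm.trans (finCongr hX.symm)))

lemma extEquiv_self {X : Type} [Fintype X] [DecidableEq X] [PartialOrder X] {n : ℕ} (hX : Fintype.card X = n + 1)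
    (m : X) (hm : Fintype.card {y : X // y ≠ m} = n)
    (ρ : {y : X // y ≠ m} ≃ Fin (Fintype.card {y : X // y ≠ m})) :
    (extEquiv hX m hm ρ m : Fin (Fintype.card X)).val = 0 := by
  simp [extEquiv, Equiv.optionSubtypeNe_symm_self]

lemma extEquiv_ne {X : Type} [Fintype X] [DecidableEq X] [PartialOrder X] {n : ℕ} (hX : Fintype.card X = n + 1)
    (m : X) (hm : Fintype.card {y : X // y ≠ m} = n)
    (ρ : {y : X // y ≠ m} ≃ Fin (Fintype.card {y : X // y ≠ m})) (y : X) (hy : y ≠ m) :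
    (extEquiv hX m hm ρ y : Fin (Fintype.card X)).val = (ρ ⟨y, hy⟩).val + 1 := by
  simp [extEquiv, Equiv.optionSubtypeNe_symm_of_ne hy]

example : True := trivial

lemma extEquiv_mono {X : Type} [Fintype X] [DecidableEq X] [PartialOrder X] {n : ℕ}
    (hX : Fintype.card X = n + 1) (m : X) (hmin : IsMin m)
    (hm : Fintype.card {y : X // y ≠ m} = n)
    (ρ : {y : X // y ≠ m} ≃ Fin (Fintype.card {y : X // y ≠ m}))
    (hρ : ∀ x y : {y : X // y ≠ m}, x < y → ρ x < ρ y) :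
    ∀ x y : X, x < y → extEquiv hX m hm ρ x < extEquiv hX m hm ρ y := by
  intro x y hxy
  have hym : y ≠ m := fun h => hmin.not_lt (h ▸ hxy)
  rw [Fin.lt_def]
  by_cases hxm : x = m
  · subst hxm
    rw [extEquiv_self, extEquiv_ne (hy := hym)]
    omega
  · rw [extEquiv_ne (hy := hxm), extEquiv_ne (hy := hym)]
    have : ρ ⟨x, hxm⟩ < ρ ⟨y, hym⟩ := hρ _ _ (by exact hxy)
    omega

lemma extEquiv_inj {X : Type} [Fintype X] [DecidableEq X] [PartialOrder X] {n : ℕ}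
    (hX : Fintype.card X = n + 1) (m m' : X)
    (hm : Fintype.card {y : X // y ≠ m} = n) (hm' : Fintype.card {y : X // y ≠ m'} = n)
    (ρ : {y : X // y ≠ m} ≃ Fin (Fintype.card {y : X // y ≠ m}))
    (ρ' : {y : X // y ≠ m'} ≃ Fin (Fintype.card {y : X // y ≠ m'}))
    (h : extEquiv hX m hm ρ = extEquiv hX m' hm' ρ') : m = m' := by
  by_contra hne
  have h1 := extEquiv_self hX m hm ρ
  have h2 := extEquiv_ne hX m' hm' ρ' m hne
  rw [h] at h1
  omega

lemma extEquiv_inj2 {X : Type} [Fintype X] [DecidableEq X] [PartialOrder X] {n : ℕ}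
    (hX : Fintype.card X = n + 1) (m : X)
    (hm : Fintype.card {y : X // y ≠ m} = n)
    (ρ ρ' : {y : X // y ≠ m} ≃ Fin (Fintype.card {y : X // y ≠ m}))
    (h : extEquiv hX m hm ρ = extEquiv hX m hm ρ') : ρ = ρ' := by
  apply Equiv.ext
  intro z
  have h1 := extEquiv_ne hX m hm ρ z.1 z.2
  have h2 := extEquiv_ne hX m hm ρ' z.1 z.2
  rw [h] at h1
  apply Fin.ext
  simp only [Subtype.coe_eta] at h1 h2
  omega

/-- Upper ideals are unchanged when a minimal element is removed. -/
def upperEquiv {X : Type} [PartialOrder X] (m : X) (hmin : IsMin m)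
    (x : {y : X // y ≠ m}) : {y : {y : X // y ≠ m} // x ≤ y} ≃ {y : X // x.1 ≤ y} where
  toFun z := ⟨z.1.1, z.2⟩
  invFun z := ⟨⟨z.1, fun h => x.2 (by
    have hz := z.2
    rw [h] at hz
    exact le_antisymm hz (hmin hz))⟩, z.2⟩
  left_inv z := rfl
  right_inv z := rfl

set_option maxHeartbeats 2000000 in
lemma bw_aux : ∀ (n : ℕ) (X : Type) [Fintype X] [PartialOrder X], Fintype.card X = n →
    Nat.factorial n ≤
      Nat.card {ρ : X ≃ Fin (Fintype.card X) // ∀ x y : X, x < y → ρ x < ρ y} *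
        ∏ x : X, Nat.card {y : X // x ≤ y} := by
  intro n
  induction n with
  | zero =>
    intro X _ _ hX
    have hE : IsEmpty X := Fintype.card_eq_zero_iff.mp hX
    have hF : IsEmpty (Fin (Fintype.card X)) := by rw [hX]; infer_instance
    have hne : Nonempty {ρ : X ≃ Fin (Fintype.card X) // ∀ x y : X, x < y → ρ x < ρ y} :=
      ⟨⟨Equiv.equivOfIsEmpty _ _, fun x => (hE.false x).elim⟩⟩
    have h1 : 0 < Nat.card {ρ : X ≃ Fin (Fintype.card X) // ∀ x y : X, x < y → ρ x < ρ y} :=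
      Nat.card_pos
    rw [Finset.univ_eq_empty, Finset.prod_empty, mul_one]
    exact h1
  | succ n ih =>
    intro X _ _ hX
    classical
    have hcard : ∀ m : X, Fintype.card {y : X // y ≠ m} = n := by
      intro m
      have h1 : Fintype.card {y : X // ¬ y = m} =
          Fintype.card X - Fintype.card {y : X // y = m} := Fintype.card_subtype_compl _
      rw [Fintype.card_subtype_eq, hX] at h1
      simpa using h1
    set b : X → ℕ := fun x => Nat.card {y : X // x ≤ y} with hbdef
    -- the injection from disjoint unions of smaller linear extensions
    set Φ : (Σ m : {m : X // IsMin m},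
        {ρ : {y : X // y ≠ m.1} ≃ Fin (Fintype.card {y : X // y ≠ m.1}) //
          ∀ x y, x < y → ρ x < ρ y}) →
        {ρ : X ≃ Fin (Fintype.card X) // ∀ x y : X, x < y → ρ x < ρ y} :=
      fun p => ⟨extEquiv hX p.1.1 (hcard p.1.1) p.2.1,
        extEquiv_mono hX p.1.1 p.1.2 (hcard p.1.1) p.2.1 p.2.2⟩ with hΦdef
    have hΦinj : Function.Injective Φ := by
      rintro ⟨⟨m, hmin⟩, ρ, hρ⟩ ⟨⟨m', hmin'⟩, ρ', hρ'⟩ h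
      simp only [hΦdef, Subtype.mk.injEq] at h
      have hmm : m = m' := extEquiv_inj hX m m' (hcard m) (hcard m') ρ ρ' h
      subst hmm
      have : ρ = ρ' := extEquiv_inj2 hX m (hcard m) ρ ρ' h
      subst this
      rfl
    have h1 : Nat.card (Σ m : {m : X // IsMin m},
        {ρ : {y : X // y ≠ m.1} ≃ Fin (Fintype.card {y : X // y ≠ m.1}) //
          ∀ x y, x < y → ρ x < ρ y}) ≤
        Nat.card {ρ : X ≃ Fin (Fintype.card X) // ∀ x y : X, x < y → ρ x < ρ y} :=
      Nat.card_le_card_of_injective Φ hΦinj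
    have h2 : Nat.card (Σ m : {m : X // IsMin m},
        {ρ : {y : X // y ≠ m.1} ≃ Fin (Fintype.card {y : X // y ≠ m.1}) //
          ∀ x y, x < y → ρ x < ρ y}) =
        ∑ m : {m : X // IsMin m}, Nat.card
          {ρ : {y : X // y ≠ m.1} ≃ Fin (Fintype.card {y : X // y ≠ m.1}) //
            ∀ x y, x < y → ρ x < ρ y} := by
      simp [Nat.card_eq_fintype_card, Fintype.card_sigma]
    -- product decomposition for each minimal m
    have hprod : ∀ m : {m : X // IsMin m},
        ∏ x : X, b x = b m.1 * ∏ x : {y : X // y ≠ m.1},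
          Nat.card {y : {y' : X // y' ≠ m.1} // x ≤ y} := by
      intro m
      have e1 : ∏ x : {y : X // y ≠ m.1},
          Nat.card {y : {y' : X // y' ≠ m.1} // x ≤ y} =
          ∏ x : {y : X // y ≠ m.1}, b x.1 :=
        Finset.prod_congr rfl (fun x _ => Nat.card_congr (upperEquiv m.1 m.2 x))
      have e2 : ∏ x ∈ Finset.univ.erase m.1, b x = ∏ x : {y : X // y ≠ m.1}, b x.1 :=
        Finset.prod_subtype _ (fun x => by simp) b
      rw [e1, ← e2, ← Finset.mul_prod_erase Finset.univ b (Finset.mem_univ m.1)]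
    -- key bound for each minimal m
    have hkey : ∀ m : {m : X // IsMin m},
        b m.1 * Nat.factorial n ≤
          Nat.card {ρ : {y : X // y ≠ m.1} ≃ Fin (Fintype.card {y : X // y ≠ m.1}) //
            ∀ x y, x < y → ρ x < ρ y} * ∏ x : X, b x := by
      intro m
      have hih := ih {y : X // y ≠ m.1} (hcard m.1)
      calc b m.1 * Nat.factorial n
          ≤ b m.1 * (Nat.card {ρ : {y : X // y ≠ m.1} ≃ Fin (Fintype.card {y : X // y ≠ m.1}) //
              ∀ x y, x < y → ρ x < ρ y} *
            ∏ x : {y : X // y ≠ m.1}, Nat.card {y : {y' : X // y' ≠ m.1} // x ≤ y}) :=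
            Nat.mul_le_mul_left _ hih
        _ = Nat.card {ρ : {y : X // y ≠ m.1} ≃ Fin (Fintype.card {y : X // y ≠ m.1}) //
              ∀ x y, x < y → ρ x < ρ y} * ∏ x : X, b x := by rw [hprod m]; ring
    -- covering bound
    have hcover : n + 1 ≤ ∑ m : {m : X // IsMin m}, b m.1 := by
      have hsub : (Finset.univ : Finset X) ⊆
          (Finset.univ.filter (fun m : X => IsMin m)).biUnion
            (fun m => Finset.univ.filter (fun y => m ≤ y)) := by
        intro y _
        obtain ⟨c, hcle, hcmin⟩ := exists_minimal_le_of_wellFoundedLT (· ∈ (Finset.univ : Finset X)) y (Finset.mem_univ y)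
        have hc : IsMin c := fun d hd => hcmin.2 (Finset.mem_univ d) hd
        simp only [Finset.mem_biUnion, Finset.mem_filter, Finset.mem_univ, true_and]
        exact ⟨c, hc, hcle⟩
      have hb : ∀ m : X, b m = (Finset.univ.filter (fun y => m ≤ y)).card := by
        intro m
        rw [hbdef]
        simp [Nat.card_eq_fintype_card, Fintype.card_subtype]
      have hsum : ∑ m ∈ Finset.univ.filter (fun m : X => IsMin m), b m =
          ∑ m : {m : X // IsMin m}, b m.1 :=
        Finset.sum_subtype _ (fun x => by simp) b
      calc n + 1 = (Finset.univ : Finset X).card := by rw [Finset.card_univ, hX]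
        _ ≤ ((Finset.univ.filter (fun m : X => IsMin m)).biUnion
            (fun m => Finset.univ.filter (fun y => m ≤ y))).card := Finset.card_le_card hsub
        _ ≤ ∑ m ∈ Finset.univ.filter (fun m : X => IsMin m),
            (Finset.univ.filter (fun y => m ≤ y)).card := Finset.card_biUnion_le
        _ = ∑ m ∈ Finset.univ.filter (fun m : X => IsMin m), b m := by
            exact Finset.sum_congr rfl (fun m _ => (hb m).symm)
        _ = ∑ m : {m : X // IsMin m}, b m.1 := hsum
    -- put it together
    calc Nat.factorial (n + 1) = (n + 1) * Nat.factorial n := rfl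
      _ ≤ (∑ m : {m : X // IsMin m}, b m.1) * Nat.factorial n :=
          Nat.mul_le_mul_right _ hcover
      _ = ∑ m : {m : X // IsMin m}, b m.1 * Nat.factorial n := Finset.sum_mul ..
      _ ≤ ∑ m : {m : X // IsMin m},
            Nat.card {ρ : {y : X // y ≠ m.1} ≃ Fin (Fintype.card {y : X // y ≠ m.1}) //
              ∀ x y, x < y → ρ x < ρ y} * ∏ x : X, b x :=
          Finset.sum_le_sum (fun m _ => hkey m)
      _ = (∑ m : {m : X // IsMin m},
            Nat.card {ρ : {y : X // y ≠ m.1} ≃ Fin (Fintype.card {y : X // y ≠ m.1}) //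
              ∀ x y, x < y → ρ x < ρ y}) * ∏ x : X, b x := (Finset.sum_mul ..).symm
      _ ≤ Nat.card {ρ : X ≃ Fin (Fintype.card X) // ∀ x y : X, x < y → ρ x < ρ y} *
            ∏ x : X, b x := Nat.mul_le_mul_right _ (h2 ▸ h1)

/-- Björner–Wachs inequality: for a finite poset `P` on `n` elements,
`e(P) * ∏_x b(x) ≥ n!`, where `e(P)` is the number of linear extensions of `P`
and `b(x)` is the size of the upper order ideal `{y : y ≥ x}`. -/
theorem bjorner_wachs (X : Type) [Fintype X] [PartialOrder X] :
    Nat.factorial (Fintype.card X) ≤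
      Nat.card {ρ : X ≃ Fin (Fintype.card X) // ∀ x y : X, x < y → ρ x < ρ y} *
        ∏ x : X, Nat.card {y : X // x ≤ y} := by
  exact bw_aux (Fintype.card X) X rfl
end

section
/- Let P = (X,≺) and Q = (X,≺′) be two partial orders on the same n-element set X such that every chain of P and every chain of Q intersect in at most one element. Then e(P)·e(Q) ≥ n!, where e denotes the number of linear extensions. -/
open scoped Classical

namespace SidorenkoAux

variable {X : Type}

/-- transitivity for an explicit partial order -/
theorem plt_trans (P : PartialOrder X) {a b c : X} (h1 : P.lt a b) (h2 : P.lt b c) :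
    P.lt a c := @lt_trans X (@PartialOrder.toPreorder X P) a b c h1 h2

theorem plt_asymm (P : PartialOrder X) {a b : X} (h1 : P.lt a b) : ¬ P.lt b a :=
  @lt_asymm X (@PartialOrder.toPreorder X P) a b h1

theorem plt_irrefl (P : PartialOrder X) (a : X) : ¬ P.lt a a :=
  @lt_irrefl X (@PartialOrder.toPreorder X P) a

theorem plt_le (P : PartialOrder X) {a b : X} (h1 : P.lt a b) : P.le a b :=
  @le_of_lt X (@PartialOrder.toPreorder X P) a b h1

/-- the backward greedy walk: from current element `cur`, scan the list for the
first element below `cur`, move there, continue. -/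
noncomputable def walkFrom (P : PartialOrder X) (cur : X) : List X → List X
  | [] => []
  | w :: t => if P.lt w cur then w :: walkFrom P w t else walkFrom P cur t

/-- whole walk of a list (meant to be applied to the reversal of a linear extension). -/
noncomputable def wWalk (P : PartialOrder X) : List X → List X
  | [] => []
  | z :: t => z :: walkFrom P z t

/-- bump insertion of `x` into a sorted list. -/
noncomputable def bump (P : PartialOrder X) (x : X) : List X → List X
  | [] => [x]
  | y :: t => if P.lt x y then x :: bump P y t else y :: bump P x t

/-- sortedness w.r.t. a partial order: no later element is strictly below an earlier one. -/
def PSorted (P : PartialOrder X) (l : List X) : Prop :=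
  List.Pairwise (fun a b => ¬ P.lt b a) l

theorem bump_perm (P : PartialOrder X) : ∀ (l : List X) (x : X), (bump P x l).Perm (x :: l)
  | [], x => by simp [bump]
  | y :: t, x => by
    rw [bump]
    split
    · exact (bump_perm P t y).cons x
    · exact ((bump_perm P t x).cons y).trans (List.Perm.swap x y t)

theorem length_bump (P : PartialOrder X) (l : List X) (x : X) :
    (bump P x l).length = l.length + 1 := by
  simpa using (bump_perm P l x).length_eq

theorem mem_bump (P : PartialOrder X) {l : List X} {x a : X} :
    a ∈ bump P x l ↔ a = x ∨ a ∈ l := by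
  rw [(bump_perm P l x).mem_iff]; simp

theorem bump_sorted (P : PartialOrder X) :
    ∀ (l : List X) (x : X), PSorted P l → PSorted P (bump P x l)
  | [], x, _ => by simp [bump, PSorted]
  | y :: t, x, hs => by
    rw [PSorted, List.pairwise_cons] at hs
    obtain ⟨hy, ht⟩ := hs
    rw [bump]
    split
    · next hxy =>
      rw [PSorted, List.pairwise_cons]
      refine ⟨?_, bump_sorted P t y ht⟩
      intro z hz
      rcases (mem_bump P).1 hz with rfl | hzt
      · exact plt_asymm P hxy
      · intro hzx
        exact hy z hzt (plt_trans P hzx hxy)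
    · next hxy =>
      rw [PSorted, List.pairwise_cons]
      refine ⟨?_, bump_sorted P t x ht⟩
      intro z hz
      rcases (mem_bump P).1 hz with rfl | hzt
      · exact hxy
      · exact hy z hzt

theorem walkFrom_lt (P : PartialOrder X) :
    ∀ (t : List X) (cur : X), ∀ a ∈ walkFrom P cur t, P.lt a cur
  | [], cur => by simp [walkFrom]
  | w :: t, cur => by
    intro a ha
    rw [walkFrom] at ha
    split at ha
    · next hw =>
      rcases ha with _ | ha
      · exact hw
      · exact plt_trans P (walkFrom_lt P t w a (by assumption)) hw
    · exact walkFrom_lt P t cur a ha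

theorem walk_pairwise (P : PartialOrder X) :
    ∀ (t : List X) (cur : X), List.Pairwise (fun a b => P.lt b a) (cur :: walkFrom P cur t)
  | [], cur => by simp [walkFrom]
  | w :: t, cur => by
    rw [walkFrom]
    split
    · next hw =>
      rw [List.pairwise_cons]
      refine ⟨?_, walk_pairwise P t w⟩
      intro b hb
      rcases hb with _ | hb
      · exact hw
      · exact plt_trans P (walkFrom_lt P t w b (by assumption)) hw
    · exact walk_pairwise P t cur

theorem wWalk_pairwise (P : PartialOrder X) (m : List X) :
    List.Pairwise (fun a b => P.lt b a) (wWalk P m) := by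
  cases m with
  | nil => simp [wWalk]
  | cons z t => exact walk_pairwise P t z

theorem wWalk_chain (P : PartialOrder X) (m : List X) :
    IsChain P.le {a | a ∈ wWalk P m} := by
  intro a ha b hb hab
  have hp : List.Pairwise (fun a b => P.le a b ∨ P.le b a) (wWalk P m) :=
    (wWalk_pairwise P m).imp (fun hab => Or.inr (plt_le P hab))
  have hsymm : Symmetric (fun a b : X => P.le a b ∨ P.le b a) := fun _ _ hh => hh.symm
  exact (haveI : Std.Symm (fun a b : X => P.le a b ∨ P.le b a) := ⟨fun _ _ hh => hsymm hh⟩; hp.forall ha hb hab)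


theorem getLast?_cons_eq (z : X) : ∀ (w : List X), (z :: w).getLast? = some (w.getLastD z)
  | [] => rfl
  | b :: w' => by
    rw [List.getLast?_cons_cons, getLast?_cons_eq b w', List.getLastD_cons]

theorem walkFrom_append (P : PartialOrder X) :
    ∀ (t : List X) (cur a : X),
      walkFrom P cur (t ++ [a]) =
        if P.lt a ((walkFrom P cur t).getLastD cur) then walkFrom P cur t ++ [a]
        else walkFrom P cur t
  | [], cur, a => by
    show walkFrom P cur [a] = _
    rw [walkFrom, List.getLastD_nil]
    split <;> simp_all [walkFrom]
  | w :: t, cur, a => by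
    rw [List.cons_append, walkFrom]
    split
    · next hw =>
      rw [walkFrom_append P t w a]
      have : walkFrom P cur (w :: t) = w :: walkFrom P w t := by rw [walkFrom, if_pos hw]
      rw [this, List.getLastD_cons]
      split <;> simp
    · next hw =>
      rw [walkFrom_append P t cur a]
      have : walkFrom P cur (w :: t) = walkFrom P cur t := by rw [walkFrom, if_neg hw]
      rw [this]

theorem wWalk_append_mem (P : PartialOrder X) {m : List X} {b : X} (a : X)
    (hb : b ∈ wWalk P m) : b ∈ wWalk P (m ++ [a]) := by
  cases m with
  | nil => simp [wWalk] at hb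
  | cons z t =>
    rw [List.cons_append, wWalk] at *
    rw [walkFrom_append P t z a]
    rcases hb with _ | hb
    · exact List.mem_cons_self
    · refine List.mem_cons_of_mem _ ?_
      split
      · exact List.mem_append_left _ (by assumption)
      · assumption

theorem wWalk_append_pos (P : PartialOrder X) {m : List X} {a b : X}
    (hlast : (wWalk P m).getLast? = some b) (hab : P.lt a b) :
    wWalk P (m ++ [a]) = wWalk P m ++ [a] := by
  cases m with
  | nil => simp [wWalk] at hlast
  | cons z t =>
    rw [wWalk, getLast?_cons_eq] at hlast
    rw [List.cons_append, wWalk, walkFrom_append P t z a, if_pos (by rw [Option.some_inj] at hlast; rwa [hlast]), wWalk]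
    simp

theorem wWalk_append_neg (P : PartialOrder X) {m : List X} {a b : X}
    (hlast : (wWalk P m).getLast? = some b) (hab : ¬ P.lt a b) :
    wWalk P (m ++ [a]) = wWalk P m := by
  cases m with
  | nil => simp [wWalk] at hlast
  | cons z t =>
    rw [wWalk, getLast?_cons_eq] at hlast
    rw [List.cons_append, wWalk, walkFrom_append P t z a, if_neg (by rw [Option.some_inj] at hlast; rwa [hlast]), wWalk]


/-- Key lemma: after bump-inserting `x` into a sorted list `l`, `x` lies on the
backward greedy walk of the reversal; moreover if no element of `l` is strictly
below `x`, then `x` is the final element of the walk. -/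
theorem bump_walk (P : PartialOrder X) :
    ∀ (l : List X) (x : X), PSorted P l →
      x ∈ wWalk P (bump P x l).reverse ∧
        ((∀ z ∈ l, ¬ P.lt z x) → (wWalk P (bump P x l).reverse).getLast? = some x)
  | [], x, _ => by
    constructor
    · simp [bump, wWalk, walkFrom]
    · intro _; simp [bump, wWalk, walkFrom]
  | y :: t, x, hs => by
    rw [PSorted, List.pairwise_cons] at hs
    obtain ⟨hy, ht⟩ := hs
    rw [bump]
    split
    · next hxy =>
      have ih := bump_walk P t y ht
      have hlast : (wWalk P (bump P y t).reverse).getLast? = some y := ih.2 hy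
      rw [List.reverse_cons, wWalk_append_pos P hlast hxy]
      constructor
      · exact List.mem_append_right _ (List.mem_singleton_self x)
      · intro _; exact List.getLast?_concat
    · next hxy =>
      have ih := bump_walk P t x ht
      rw [List.reverse_cons]
      constructor
      · exact wWalk_append_mem P y ih.1
      · intro hz
        have hlast : (wWalk P (bump P x t).reverse).getLast? = some x :=
          ih.2 (fun z hzt => hz z (List.mem_cons_of_mem y hzt))
        rw [wWalk_append_neg P hlast (hz y (List.mem_cons_self)), hlast]

theorem bump_inj (P : PartialOrder X) :
    ∀ (l₁ : List X) {x : X} {l₂ : List X}, PSorted P l₁ → PSorted P l₂ →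
      l₁.Nodup → l₂.Nodup → x ∉ l₁ → x ∉ l₂ →
      bump P x l₁ = bump P x l₂ → l₁ = l₂
  | [], x, l₂, _, _, _, _, _, _, heq => by
    cases l₂ with
    | nil => rfl
    | cons y t =>
      exfalso
      have := congrArg List.length heq
      rw [length_bump, length_bump] at this
      simp at this
  | y₁ :: t₁, x, l₂, hs₁, hs₂, hn₁, hn₂, hx₁, hx₂, heq => by
    cases l₂ with
    | nil =>
      exfalso
      have := congrArg List.length heq
      rw [length_bump, length_bump] at this
      simp at this
    | cons y₂ t₂ =>
      rw [PSorted, List.pairwise_cons] at hs₁ hs₂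
      obtain ⟨hy₁, ht₁⟩ := hs₁
      obtain ⟨hy₂, ht₂⟩ := hs₂
      rw [List.nodup_cons] at hn₁ hn₂
      rw [bump, bump] at heq
      by_cases hxy₁ : P.lt x y₁ <;> by_cases hxy₂ : P.lt x y₂
      · rw [if_pos hxy₁, if_pos hxy₂] at heq
        have htl : bump P y₁ t₁ = bump P y₂ t₂ := by
          injection heq
        have h₁ := (bump_walk P t₁ y₁ ht₁).2 hy₁
        have h₂ := (bump_walk P t₂ y₂ ht₂).2 hy₂
        rw [htl] at h₁
        rw [h₂] at h₁
        have hyy : y₂ = y₁ := by injection h₁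
        subst hyy
        have : t₁ = t₂ :=
          bump_inj P t₁ ht₁ ht₂ hn₁.2 hn₂.2 hn₁.1 hn₂.1 htl
        rw [this]
      · rw [if_pos hxy₁, if_neg hxy₂] at heq
        exfalso
        have : x = y₂ := by injection heq
        exact hx₂ (this ▸ List.mem_cons_self)
      · rw [if_neg hxy₁, if_pos hxy₂] at heq
        exfalso
        have : y₁ = x := by injection heq
        exact hx₁ (this ▸ List.mem_cons_self)
      · rw [if_neg hxy₁, if_neg hxy₂] at heq
        have hyy : y₁ = y₂ := by injection heq
        have htl : bump P x t₁ = bump P x t₂ := by injection heq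
        subst hyy
        have : t₁ = t₂ :=
          bump_inj P t₁ ht₁ ht₂ hn₁.2 hn₂.2
            (fun hmem => hx₁ (List.mem_cons_of_mem _ hmem))
            (fun hmem => hx₂ (List.mem_cons_of_mem _ hmem)) htl
        rw [this]

/-- Simultaneously build linear extensions of `P` and `Q` from an arbitrary
enumeration of the elements, by bump insertion. -/
noncomputable def G2 (P Q : PartialOrder X) : List X → List X × List X
  | [] => ([], [])
  | a :: m => (bump P a (G2 P Q m).1, bump Q a (G2 P Q m).2)

theorem G2_fst_perm (P Q : PartialOrder X) : ∀ m : List X, ((G2 P Q m).1).Perm m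
  | [] => List.Perm.refl _
  | a :: m => ((bump_perm P _ a).trans ((G2_fst_perm P Q m).cons a))

theorem G2_snd_perm (P Q : PartialOrder X) : ∀ m : List X, ((G2 P Q m).2).Perm m
  | [] => List.Perm.refl _
  | a :: m => ((bump_perm Q _ a).trans ((G2_snd_perm P Q m).cons a))

theorem G2_fst_sorted (P Q : PartialOrder X) : ∀ m : List X, PSorted P (G2 P Q m).1
  | [] => List.Pairwise.nil
  | a :: m => bump_sorted P _ a (G2_fst_sorted P Q m)

theorem G2_snd_sorted (P Q : PartialOrder X) : ∀ m : List X, PSorted Q (G2 P Q m).2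
  | [] => List.Pairwise.nil
  | a :: m => bump_sorted Q _ a (G2_snd_sorted P Q m)

theorem G2_inj (P Q : PartialOrder X)
    (h : ∀ C C' : Set X, IsChain P.le C → IsChain Q.le C' → (C ∩ C').Subsingleton) :
    ∀ (m₁ : List X) {m₂ : List X}, m₁.Nodup → m₂.Nodup →
      G2 P Q m₁ = G2 P Q m₂ → m₁ = m₂
  | [], m₂, _, _, heq => by
    cases m₂ with
    | nil => rfl
    | cons a₂ m₂' =>
      exfalso
      have := congrArg (fun p => (Prod.fst p).length) heq
      simp only [G2, length_bump] at this
      simp at this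
  | a₁ :: m₁', m₂, hn₁, hn₂, heq => by
    cases m₂ with
    | nil =>
      exfalso
      have := congrArg (fun p => (Prod.fst p).length) heq
      simp only [G2, length_bump] at this
      simp at this
    | cons a₂ m₂' =>
      rw [List.nodup_cons] at hn₁ hn₂
      simp only [G2, Prod.mk.injEq] at heq
      obtain ⟨heqP, heqQ⟩ := heq
      -- both a₁ and a₂ lie on the P-walk of the first component and the Q-walk
      -- of the second component
      have haa : a₁ = a₂ := by
        have h₁P : a₁ ∈ wWalk P (bump P a₁ (G2 P Q m₁').1).reverse :=
          (bump_walk P _ a₁ (G2_fst_sorted P Q m₁')).1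
        have h₂P : a₂ ∈ wWalk P (bump P a₂ (G2 P Q m₂').1).reverse :=
          (bump_walk P _ a₂ (G2_fst_sorted P Q m₂')).1
        have h₁Q : a₁ ∈ wWalk Q (bump Q a₁ (G2 P Q m₁').2).reverse :=
          (bump_walk Q _ a₁ (G2_snd_sorted P Q m₁')).1
        have h₂Q : a₂ ∈ wWalk Q (bump Q a₂ (G2 P Q m₂').2).reverse :=
          (bump_walk Q _ a₂ (G2_snd_sorted P Q m₂')).1
        rw [heqP] at h₁P
        rw [heqQ] at h₁Q
        exact h {y | y ∈ wWalk P (bump P a₂ (G2 P Q m₂').1).reverse}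
          {y | y ∈ wWalk Q (bump Q a₂ (G2 P Q m₂').2).reverse}
          (wWalk_chain P _) (wWalk_chain Q _) ⟨h₁P, h₁Q⟩ ⟨h₂P, h₂Q⟩
      subst haa
      have hrP : (G2 P Q m₁').1 = (G2 P Q m₂').1 :=
        bump_inj P _ (G2_fst_sorted P Q m₁') (G2_fst_sorted P Q m₂')
          ((G2_fst_perm P Q m₁').nodup_iff.mpr hn₁.2)
          ((G2_fst_perm P Q m₂').nodup_iff.mpr hn₂.2)
          (fun hmem => hn₁.1 ((G2_fst_perm P Q m₁').mem_iff.mp hmem))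
          (fun hmem => hn₂.1 ((G2_fst_perm P Q m₂').mem_iff.mp hmem)) heqP
      have hrQ : (G2 P Q m₁').2 = (G2 P Q m₂').2 :=
        bump_inj Q _ (G2_snd_sorted P Q m₁') (G2_snd_sorted P Q m₂')
          ((G2_snd_perm P Q m₁').nodup_iff.mpr hn₁.2)
          ((G2_snd_perm P Q m₂').nodup_iff.mpr hn₂.2)
          (fun hmem => hn₁.1 ((G2_snd_perm P Q m₁').mem_iff.mp hmem))
          (fun hmem => hn₂.1 ((G2_snd_perm P Q m₂').mem_iff.mp hmem)) heqQ
      have : m₁' = m₂' :=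
        G2_inj P Q h m₁' hn₁.2 hn₂.2 (Prod.ext hrP hrQ)
      rw [this]

section Assemble

variable [Fintype X]

theorem list_length_eq_card {l : List X} (nd : l.Nodup) (cm : ∀ x, x ∈ l) :
    l.length = Fintype.card X := by
  classical
  have h1 : l.toFinset = Finset.univ :=
    Finset.eq_univ_iff_forall.mpr (fun x => List.mem_toFinset.mpr (cm x))
  rw [← List.toFinset_card_of_nodup nd, h1, Finset.card_univ]

open Classical in
/-- the equiv `X ≃ Fin n` sending an element to its index in the list `l`. -/
noncomputable def extEquivOfList (l : List X) (nd : l.Nodup) (cm : ∀ x, x ∈ l) :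
    X ≃ Fin (Fintype.card X) :=
  Equiv.ofBijective
    (fun x => ⟨l.idxOf x, by
      rw [← list_length_eq_card nd cm]; exact List.idxOf_lt_length_iff.mpr (cm x)⟩)
    (by
      refine (Fintype.bijective_iff_injective_and_card _).mpr ⟨?_, by simp⟩
      intro x y hxy
      have hidx : l.idxOf x = l.idxOf y := congrArg Fin.val hxy
      have hx : l.idxOf x < l.length := List.idxOf_lt_length_iff.mpr (cm x)
      have hy : l.idxOf y < l.length := List.idxOf_lt_length_iff.mpr (cm y)
      calc x = l.get ⟨l.idxOf x, hx⟩ := (List.idxOf_get hx).symm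
        _ = l.get ⟨l.idxOf y, hy⟩ := by congr 1; exact Fin.ext hidx
        _ = y := List.idxOf_get hy)

open Classical in
theorem extEquivOfList_val (l : List X) (nd : l.Nodup) (cm : ∀ x, x ∈ l) (x : X) :
    (extEquivOfList l nd cm x : ℕ) = l.idxOf x := rfl

open Classical in
omit [Fintype X] in
theorem nodup_indexOf_get {l : List X} (nd : l.Nodup) (i : Fin l.length) :
    l.idxOf (l.get i) = (i : ℕ) := by
  have hmem : l.get i ∈ l := l.get_mem _
  have h1 : l.idxOf (l.get i) < l.length := List.idxOf_lt_length_iff.mpr hmem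
  have h2 : l.get ⟨l.idxOf (l.get i), h1⟩ = l.get i := List.idxOf_get h1
  have := (nd.get_inj_iff).mp h2
  exact congrArg Fin.val this

theorem extEquivOfList_inj {l₁ l₂ : List X} (nd₁ : l₁.Nodup) (cm₁ : ∀ x, x ∈ l₁)
    (nd₂ : l₂.Nodup) (cm₂ : ∀ x, x ∈ l₂)
    (heq : extEquivOfList l₁ nd₁ cm₁ = extEquivOfList l₂ nd₂ cm₂) : l₁ = l₂ := by
  classical
  have hlen : l₁.length = l₂.length := by
    rw [list_length_eq_card nd₁ cm₁, list_length_eq_card nd₂ cm₂]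
  refine List.ext_get hlen ?_
  intro i hi₁ hi₂
  set x := l₁.get ⟨i, hi₁⟩ with hx
  have h1 : l₁.idxOf x = i := nodup_indexOf_get nd₁ ⟨i, hi₁⟩
  have h2 : l₂.idxOf x = i := by
    have := congrArg (fun e => ((e : X ≃ Fin (Fintype.card X)) x : ℕ)) heq
    simp only [extEquivOfList_val] at this
    rw [← this, h1]
  have hx2 : l₂.idxOf x < l₂.length := List.idxOf_lt_length_iff.mpr (cm₂ x)
  have hget : l₂.get ⟨l₂.idxOf x, hx2⟩ = x := List.idxOf_get hx2
  rw [← hget]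
  congr 1
  exact Fin.ext (by simpa using h2)

theorem extEquivOfList_mono (P : PartialOrder X) {l : List X} (nd : l.Nodup)
    (cm : ∀ x, x ∈ l) (hs : PSorted P l) {x y : X} (hxy : P.lt x y) :
    extEquivOfList l nd cm x < extEquivOfList l nd cm y := by
  classical
  have hx : l.idxOf x < l.length := List.idxOf_lt_length_iff.mpr (cm x)
  have hy : l.idxOf y < l.length := List.idxOf_lt_length_iff.mpr (cm y)
  have hgx : l.get ⟨l.idxOf x, hx⟩ = x := List.idxOf_get hx
  have hgy : l.get ⟨l.idxOf y, hy⟩ = y := List.idxOf_get hy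
  have hne : l.idxOf x ≠ l.idxOf y := by
    intro hcon
    apply plt_irrefl P x
    have : x = y := by
      rw [← hgx, ← hgy]; congr 1; exact Fin.ext hcon
    exact this ▸ hxy
  rcases Nat.lt_or_ge (l.idxOf x) (l.idxOf y) with hlt | hge
  · exact hlt
  · exfalso
    have hlt2 : (⟨l.idxOf y, hy⟩ : Fin l.length) < ⟨l.idxOf x, hx⟩ :=
      Nat.lt_of_le_of_ne hge (fun hc => hne hc.symm)
    have := (List.pairwise_iff_get.mp hs) _ _ hlt2
    rw [hgx, hgy] at this
    exact this hxy

end Assemble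

end SidorenkoAux

open SidorenkoAux in
/-- Sidorenko's inequality: if `P` and `Q` are two partial orders on the same
finite set `X` such that every chain of `P` and every chain of `Q` intersect
in at most one element, then `e(P) * e(Q) ≥ n!`, where `e` counts linear
extensions. -/
theorem sidorenko_inequality (X : Type) [Fintype X] (P Q : PartialOrder X)
    (h : ∀ C C' : Set X, IsChain P.le C → IsChain Q.le C' → (C ∩ C').Subsingleton) :
    Nat.factorial (Fintype.card X) ≤
      Nat.card {ρ : X ≃ Fin (Fintype.card X) // ∀ x y : X, P.lt x y → ρ x < ρ y} *
      Nat.card {ρ : X ≃ Fin (Fintype.card X) // ∀ x y : X, Q.lt x y → ρ x < ρ y} := by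
  classical
  let mL : (X ≃ Fin (Fintype.card X)) → List X := fun lam => List.ofFn (fun i => lam.symm i)
  have hmn : ∀ lam, (mL lam).Nodup := fun lam => List.nodup_ofFn.mpr lam.symm.injective
  have hmc : ∀ lam, ∀ x : X, x ∈ mL lam := fun lam x => by
    simp only [mL, List.mem_ofFn]
    exact ⟨lam x, by simp⟩
  let rP := fun lam => (G2 P Q (mL lam)).1
  let rQ := fun lam => (G2 P Q (mL lam)).2
  have hrPnd : ∀ lam, (rP lam).Nodup :=
    fun lam => ((G2_fst_perm P Q (mL lam)).nodup_iff).mpr (hmn lam)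
  have hrPcm : ∀ lam (x : X), x ∈ rP lam :=
    fun lam x => ((G2_fst_perm P Q (mL lam)).mem_iff).mpr (hmc lam x)
  have hrQnd : ∀ lam, (rQ lam).Nodup :=
    fun lam => ((G2_snd_perm P Q (mL lam)).nodup_iff).mpr (hmn lam)
  have hrQcm : ∀ lam (x : X), x ∈ rQ lam :=
    fun lam x => ((G2_snd_perm P Q (mL lam)).mem_iff).mpr (hmc lam x)
  let F : (X ≃ Fin (Fintype.card X)) →
      ({ρ : X ≃ Fin (Fintype.card X) // ∀ x y : X, P.lt x y → ρ x < ρ y} ×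
       {ρ : X ≃ Fin (Fintype.card X) // ∀ x y : X, Q.lt x y → ρ x < ρ y}) :=
    fun lam =>
      (⟨extEquivOfList (rP lam) (hrPnd lam) (hrPcm lam),
        fun _ _ hxy => extEquivOfList_mono P (hrPnd lam) (hrPcm lam)
          (G2_fst_sorted P Q (mL lam)) hxy⟩,
       ⟨extEquivOfList (rQ lam) (hrQnd lam) (hrQcm lam),
        fun _ _ hxy => extEquivOfList_mono Q (hrQnd lam) (hrQcm lam)
          (G2_snd_sorted P Q (mL lam)) hxy⟩)
  have hFinj : Function.Injective F := by
    intro l1 l2 he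
    have heP : extEquivOfList (rP l1) (hrPnd l1) (hrPcm l1)
        = extEquivOfList (rP l2) (hrPnd l2) (hrPcm l2) :=
      Subtype.ext_iff.mp (Prod.ext_iff.mp he).1
    have heQ : extEquivOfList (rQ l1) (hrQnd l1) (hrQcm l1)
        = extEquivOfList (rQ l2) (hrQnd l2) (hrQcm l2) :=
      Subtype.ext_iff.mp (Prod.ext_iff.mp he).2
    have h1 : rP l1 = rP l2 := extEquivOfList_inj _ _ _ _ heP
    have h2 : rQ l1 = rQ l2 := extEquivOfList_inj _ _ _ _ heQ
    have hG : G2 P Q (mL l1) = G2 P Q (mL l2) := Prod.ext h1 h2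
    have hm : mL l1 = mL l2 := G2_inj P Q h _ (hmn l1) (hmn l2) hG
    have hfun : (fun i => l1.symm i) = fun i => l2.symm i := List.ofFn_injective hm
    have hsymm : l1.symm = l2.symm := Equiv.ext (fun i => congrFun hfun i)
    rw [← l1.symm_symm, hsymm, l2.symm_symm]
  have hcard : Nat.card (X ≃ Fin (Fintype.card X)) = Nat.factorial (Fintype.card X) := by
    rw [Nat.card_eq_fintype_card, Fintype.card_equiv (Fintype.equivFin X)]
  calc Nat.factorial (Fintype.card X)
      = Nat.card (X ≃ Fin (Fintype.card X)) := hcard.symm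
    _ ≤ Nat.card ({ρ : X ≃ Fin (Fintype.card X) // ∀ x y : X, P.lt x y → ρ x < ρ y} ×
         {ρ : X ≃ Fin (Fintype.card X) // ∀ x y : X, Q.lt x y → ρ x < ρ y}) :=
        Nat.card_le_card_of_injective F hFinj
    _ = _ := Nat.card_prod _ _
end

section
/- The sum over all partitions λ of n of the square of the number of standard Young tableaux of shape λ equals n!: ∑_{λ⊢n} (f^λ)^2 = n!. -/
/-- The number of standard Young tableaux of shape `μ`: bijective fillings of the
cells of `μ` by `0, …, n-1` that strictly increase along rows and columns. -/
noncomputable def sytCard (μ : YoungDiagram) : ℕ :=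
  Nat.card {T : {c : ℕ × ℕ // c ∈ μ} ≃ Fin μ.card //
    ∀ c d : {c : ℕ × ℕ // c ∈ μ},
      ((c.1.1 = d.1.1 ∧ c.1.2 < d.1.2) ∨ (c.1.2 = d.1.2 ∧ c.1.1 < d.1.1)) → T c < T d}

namespace BurnsideAux

open YoungDiagram

/-- The set of SYT of shape μ. -/
def SYT (μ : YoungDiagram) :=
  {T : {c : ℕ × ℕ // c ∈ μ} ≃ Fin μ.card //
    ∀ c d : {c : ℕ × ℕ // c ∈ μ},
      ((c.1.1 = d.1.1 ∧ c.1.2 < d.1.2) ∨ (c.1.2 = d.1.2 ∧ c.1.1 < d.1.1)) → T c < T d}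

instance fintypeCells (μ : YoungDiagram) : Fintype {c : ℕ × ℕ // c ∈ μ} := by
  apply Fintype.subtype μ.cells; simp [YoungDiagram.mem_cells]

instance (μ : YoungDiagram) : Finite (SYT μ) := by
  unfold SYT; infer_instance

lemma card_cells (μ : YoungDiagram) : Fintype.card {c : ℕ × ℕ // c ∈ μ} = μ.card :=
  Fintype.card_of_subtype μ.cells (fun x => YoungDiagram.mem_cells x)

lemma fst_lt_card {μ : YoungDiagram} {i j : ℕ} (h : (i,j) ∈ μ) : i < μ.card :=
  calc i < μ.colLen j := YoungDiagram.mem_iff_lt_colLen.mp h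
    _ = (μ.col j).card := μ.colLen_eq_card
    _ ≤ μ.card := Finset.card_le_card (by
        intro c hc; simp only [YoungDiagram.mem_col_iff] at hc
        simpa [YoungDiagram.mem_cells] using hc.1)

lemma snd_lt_card {μ : YoungDiagram} {i j : ℕ} (h : (i,j) ∈ μ) : j < μ.card :=
  calc j < μ.rowLen i := YoungDiagram.mem_iff_lt_rowLen.mp h
    _ = (μ.row i).card := μ.rowLen_eq_card
    _ ≤ μ.card := Finset.card_le_card (by
        intro c hc; simp only [YoungDiagram.mem_row_iff] at hc
        simpa [YoungDiagram.mem_cells] using hc.1)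

/-- covering relation: `Cov μ ν` means ν covers μ. -/
def Cov (μ ν : YoungDiagram) : Prop := μ ≤ ν ∧ ν.card = μ.card + 1

instance finitePartitions (n : ℕ) : Finite {μ : YoungDiagram // μ.card = n} := by
  apply Finite.of_injective
    (fun x => (⟨x.1.cells, by
      simp only [Finset.mem_powerset]
      intro c hc
      rw [YoungDiagram.mem_cells] at hc
      obtain ⟨i, j⟩ := c
      simp only [Finset.mem_product, Finset.mem_range]
      exact ⟨x.2 ▸ fst_lt_card hc, x.2 ▸ snd_lt_card hc⟩⟩ :
      {s // s ∈ (Finset.range n ×ˢ Finset.range n).powerset}))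
  intro a b hab
  ext1
  ext1
  simpa [YoungDiagram.mem_cells] using congrArg (fun s => s.1) hab

instance finiteCovering (μ : YoungDiagram) : Finite {ν : YoungDiagram // Cov μ ν} :=
  Finite.of_injective (fun x => (⟨x.1, x.2.2⟩ : {ν : YoungDiagram // ν.card = μ.card + 1}))
    (fun a b hab => Subtype.ext (by simpa using congrArg Subtype.val hab))

instance finiteCovered (μ : YoungDiagram) : Finite {ν : YoungDiagram // Cov ν μ} :=
  Finite.of_injective (fun x => (⟨x.1, by have := x.2.2; omega⟩ :
    {ν : YoungDiagram // ν.card = μ.card - 1}))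
    (fun a b hab => Subtype.ext (by simpa using congrArg Subtype.val hab))


def Removable (μ : YoungDiagram) (c : ℕ × ℕ) : Prop :=
  c ∈ μ ∧ (c.1 + 1, c.2) ∉ μ ∧ (c.1, c.2 + 1) ∉ μ

def Addable (μ : YoungDiagram) (c : ℕ × ℕ) : Prop :=
  c ∉ μ ∧ (c.1 = 0 ∨ (c.1 - 1, c.2) ∈ μ) ∧ (c.2 = 0 ∨ (c.1, c.2 - 1) ∈ μ)

def eraseY (μ : YoungDiagram) (c : ℕ × ℕ) (h : Removable μ c) : YoungDiagram where
  cells := μ.cells.erase c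
  isLowerSet := by
    intro x y hxy hy
    obtain ⟨i, j⟩ := x
    obtain ⟨k, l⟩ := y
    obtain ⟨h1, h2⟩ := Prod.mk_le_mk.mp hxy
    simp only [Finset.coe_erase, Set.mem_diff, Set.mem_singleton_iff, Finset.mem_coe,
      YoungDiagram.mem_cells] at hy ⊢
    obtain ⟨hyμ, hyc⟩ := hy
    refine ⟨μ.up_left_mem h1 h2 hyμ, ?_⟩
    rintro rfl
    rcases lt_or_eq_of_le h1 with h1 | h1
    · exact h.2.1 (μ.up_left_mem h1 h2 hyμ)
    · rcases lt_or_eq_of_le h2 with h2 | h2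
      · exact h.2.2 (μ.up_left_mem h1.le h2 hyμ)
      · exact hyc (by simp [h1, h2])

def insertY (μ : YoungDiagram) (c : ℕ × ℕ) (h : Addable μ c) : YoungDiagram where
  cells := insert c μ.cells
  isLowerSet := by
    intro x y hxy hy
    obtain ⟨i, j⟩ := x
    obtain ⟨k, l⟩ := y
    obtain ⟨h1, h2⟩ := Prod.mk_le_mk.mp hxy
    simp only [Finset.coe_insert, Set.mem_insert_iff, Finset.mem_coe,
      YoungDiagram.mem_cells] at hy ⊢
    rcases hy with hy | hyμ
    · subst hy
      obtain ⟨-, ha1, ha2⟩ := h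
      simp only at ha1 ha2
      rcases lt_or_eq_of_le h1 with h1' | h1'
      · rcases ha1 with h0 | hm
        · omega
        · exact Or.inr (μ.up_left_mem (by omega) h2 hm)
      · rcases lt_or_eq_of_le h2 with h2' | h2'
        · rcases ha2 with h0 | hm
          · omega
          · exact Or.inr (μ.up_left_mem (by omega) (by omega) hm)
        · exact Or.inl (by simp [h1', h2'])
    · exact Or.inr (μ.up_left_mem h1 h2 hyμ)

@[simp] lemma mem_eraseY {μ : YoungDiagram} {c : ℕ × ℕ} {h : Removable μ c} {x : ℕ × ℕ} :
    x ∈ eraseY μ c h ↔ x ∈ μ ∧ x ≠ c := by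
  change x ∈ (μ.cells.erase c) ↔ _
  simp [Finset.mem_erase, YoungDiagram.mem_cells, and_comm]

@[simp] lemma mem_insertY {μ : YoungDiagram} {c : ℕ × ℕ} {h : Addable μ c} {x : ℕ × ℕ} :
    x ∈ insertY μ c h ↔ x = c ∨ x ∈ μ := by
  change x ∈ (insert c μ.cells) ↔ _
  simp [YoungDiagram.mem_cells]

lemma card_eraseY {μ : YoungDiagram} {c : ℕ × ℕ} (h : Removable μ c) :
    (eraseY μ c h).card = μ.card - 1 := by
  change (μ.cells.erase c).card = _
  rw [Finset.card_erase_of_mem (by simpa [YoungDiagram.mem_cells] using h.1)]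

lemma card_insertY {μ : YoungDiagram} {c : ℕ × ℕ} (h : Addable μ c) :
    (insertY μ c h).card = μ.card + 1 := by
  change (insert c μ.cells).card = _
  rw [Finset.card_insert_of_notMem (by simpa [YoungDiagram.mem_cells] using h.1)]




lemma card_pos_of_mem {μ : YoungDiagram} {c : ℕ × ℕ} (h : c ∈ μ) : 0 < μ.card :=
  Finset.card_pos.mpr ⟨c, (YoungDiagram.mem_cells c).mpr h⟩

lemma sdiff_singleton_of_cov {ν μ : YoungDiagram} (h : Cov ν μ) :
    ∃ c, μ.cells \ ν.cells = {c} := by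
  apply Finset.card_eq_one.mp
  rw [Finset.card_sdiff_of_subset (YoungDiagram.cells_subset_iff.mpr h.1)]
  have h2 : μ.cells.card = ν.cells.card + 1 := h.2
  omega

def remOfCov {ν μ : YoungDiagram} (h : Cov ν μ) : ∃ c, ∃ hc : Removable μ c, eraseY μ c hc = ν := by
  obtain ⟨c, hc⟩ := sdiff_singleton_of_cov h
  have hcμ : c ∈ μ := by
    have : c ∈ μ.cells \ ν.cells := hc ▸ Finset.mem_singleton_self c
    simpa [YoungDiagram.mem_cells] using (Finset.mem_sdiff.mp this).1
  have hcν : c ∉ ν := by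
    have : c ∈ μ.cells \ ν.cells := hc ▸ Finset.mem_singleton_self c
    simpa [YoungDiagram.mem_cells] using (Finset.mem_sdiff.mp this).2
  have key : ∀ x, x ∈ μ → x ≠ c → x ∈ ν := by
    intro x hx hxc
    by_contra hxν
    have : x ∈ μ.cells \ ν.cells := Finset.mem_sdiff.mpr
      ⟨(YoungDiagram.mem_cells x).mpr hx, by simpa [YoungDiagram.mem_cells] using hxν⟩
    rw [hc, Finset.mem_singleton] at this
    exact hxc this
  have hrem : Removable μ c := by
    refine ⟨hcμ, ?_, ?_⟩
    · intro hmem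
      have : (c.1 + 1, c.2) ∈ ν := key _ hmem (by simp [Prod.ext_iff])
      exact hcν (ν.up_left_mem (Nat.le_succ _) le_rfl (by simpa using this))
    · intro hmem
      have : (c.1, c.2 + 1) ∈ ν := key _ hmem (by simp [Prod.ext_iff])
      exact hcν (ν.up_left_mem le_rfl (Nat.le_succ _) (by simpa using this))
  refine ⟨c, hrem, ?_⟩
  ext x
  rw [YoungDiagram.mem_cells, YoungDiagram.mem_cells, mem_eraseY]
  constructor
  · rintro ⟨hx, hxc⟩; exact key x hx hxc
  · intro hx
    exact ⟨h.1 hx, fun hxc => hcν (hxc ▸ hx)⟩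

noncomputable def covdEquivRem (μ : YoungDiagram) :
    {c : ℕ × ℕ // Removable μ c} ≃ {ν : YoungDiagram // Cov ν μ} := by
  apply Equiv.ofBijective (fun c => ⟨eraseY μ c.1 c.2, by
    constructor
    · intro x hx; exact (mem_eraseY.mp hx).1
    · rw [card_eraseY c.2]
      have := card_pos_of_mem c.2.1
      omega⟩)
  constructor
  · rintro ⟨c, hc⟩ ⟨c', hc'⟩ hcc
    have hcells : eraseY μ c hc = eraseY μ c' hc' := by
      exact congrArg Subtype.val hcc
    by_contra hne
    have hne' : c ≠ c' := by simpa using hne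
    have : c ∈ eraseY μ c' hc' := mem_eraseY.mpr ⟨hc.1, hne'⟩
    rw [← hcells] at this
    exact (mem_eraseY.mp this).2 rfl
  · rintro ⟨ν, hν⟩
    obtain ⟨c, hrem, hc⟩ := remOfCov hν
    exact ⟨⟨c, hrem⟩, Subtype.ext hc⟩

lemma addOfCov {μ ν : YoungDiagram} (h : Cov μ ν) :
    ∃ c, ∃ hc : Addable μ c, insertY μ c hc = ν := by
  obtain ⟨c, hc⟩ := sdiff_singleton_of_cov h
  have hcν : c ∈ ν := by
    have : c ∈ ν.cells \ μ.cells := hc ▸ Finset.mem_singleton_self c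
    simpa [YoungDiagram.mem_cells] using (Finset.mem_sdiff.mp this).1
  have hcμ : c ∉ μ := by
    have : c ∈ ν.cells \ μ.cells := hc ▸ Finset.mem_singleton_self c
    simpa [YoungDiagram.mem_cells] using (Finset.mem_sdiff.mp this).2
  have key : ∀ x, x ∈ ν → x ≠ c → x ∈ μ := by
    intro x hx hxc
    by_contra hxμ
    have : x ∈ ν.cells \ μ.cells := Finset.mem_sdiff.mpr
      ⟨(YoungDiagram.mem_cells x).mpr hx, by simpa [YoungDiagram.mem_cells] using hxμ⟩
    rw [hc, Finset.mem_singleton] at this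
    exact hxc this
  have hadd : Addable μ c := by
    refine ⟨hcμ, ?_, ?_⟩
    · rcases Nat.eq_zero_or_pos c.1 with h0 | h0
      · exact Or.inl h0
      · refine Or.inr (key (c.1 - 1, c.2) (ν.up_left_mem (Nat.sub_le _ _) le_rfl (by simpa using hcν)) ?_)
        simp only [ne_eq, Prod.ext_iff]
        omega
    · rcases Nat.eq_zero_or_pos c.2 with h0 | h0
      · exact Or.inl h0
      · refine Or.inr (key (c.1, c.2 - 1) (ν.up_left_mem le_rfl (Nat.sub_le _ _) (by simpa using hcν)) ?_)
        simp only [ne_eq, Prod.ext_iff]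
        omega
  refine ⟨c, hadd, ?_⟩
  ext x
  rw [YoungDiagram.mem_cells, YoungDiagram.mem_cells, mem_insertY]
  constructor
  · rintro (rfl | hx)
    · exact hcν
    · exact h.1 hx
  · intro hx
    rcases eq_or_ne x c with rfl | hxc
    · exact Or.inl rfl
    · exact Or.inr (key x hx hxc)

noncomputable def covEquivAdd (μ : YoungDiagram) :
    {c : ℕ × ℕ // Addable μ c} ≃ {ν : YoungDiagram // Cov μ ν} := by
  apply Equiv.ofBijective (fun c => ⟨insertY μ c.1 c.2, by
    constructor
    · intro x hx; exact mem_insertY.mpr (Or.inr hx)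
    · exact card_insertY c.2⟩)
  constructor
  · rintro ⟨c, hc⟩ ⟨c', hc'⟩ hcc
    have hcells : insertY μ c hc = insertY μ c' hc' := by exact congrArg Subtype.val hcc
    have : c ∈ insertY μ c' hc' := hcells ▸ mem_insertY.mpr (Or.inl rfl)
    rcases mem_insertY.mp this with h | h
    · exact Subtype.ext h
    · exact absurd h hc.1
  · rintro ⟨ν, hν⟩
    obtain ⟨c, hadd, hc⟩ := addOfCov hν
    exact ⟨⟨c, hadd⟩, Subtype.ext hc⟩


section Branching

variable {μ : YoungDiagram}

/-- The sigma type of a removable corner together with an SYT of the smaller shape. -/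
abbrev BSig (μ : YoungDiagram) :=
  Σ c : {c : ℕ × ℕ // Removable μ c}, SYT (eraseY μ c.1 c.2)

/-- A "value function" determining an element of `BSig μ`. -/
noncomputable def V (μ : YoungDiagram) (z : BSig μ) :
    (ℕ × ℕ) × ({x : ℕ × ℕ // x ∈ μ} → ℕ) :=
  ⟨z.1.1, fun x => if h : x.1 = z.1.1 then μ.card - 1
    else (z.2.1 ⟨x.1, mem_eraseY.mpr ⟨x.2, h⟩⟩).1⟩

lemma V_injective : Function.Injective (V μ) := by
  rintro ⟨⟨c, hc⟩, S⟩ ⟨⟨c', hc'⟩, S'⟩ h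
  simp only [V, Prod.mk.injEq] at h
  obtain ⟨h1, h2⟩ := h
  subst h1
  have hcc : hc = hc' := rfl
  subst hcc
  suffices hS : S = S' by rw [hS]
  apply Subtype.ext
  apply Equiv.ext
  intro x
  apply Fin.ext
  have hx := congrFun h2 ⟨x.1, (mem_eraseY.mp x.2).1⟩
  rw [dif_neg (mem_eraseY.mp x.2).2, dif_neg (mem_eraseY.mp x.2).2] at hx
  have hxx : (⟨x.1, mem_eraseY.mpr ⟨(mem_eraseY.mp x.2).1, (mem_eraseY.mp x.2).2⟩⟩ :
      {y : ℕ × ℕ // y ∈ eraseY μ c hc}) = x := Subtype.ext rfl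
  rwa [hxx] at hx

end Branching


section Branching2

variable {μ : YoungDiagram}

lemma removable_symm_top (T : SYT μ) (hm : 0 < μ.card) :
    Removable μ (T.1.symm ⟨μ.card - 1, by omega⟩).1 := by
  set top : Fin μ.card := ⟨μ.card - 1, by omega⟩ with htop
  set c := T.1.symm top with hc
  refine ⟨c.2, ?_, ?_⟩
  · intro hmem
    have hlt := T.2 c ⟨(c.1.1 + 1, c.1.2), hmem⟩ (Or.inr ⟨rfl, Nat.lt_succ_self _⟩)
    rw [Equiv.apply_symm_apply] at hlt
    have h2 := (T.1 ⟨(c.1.1 + 1, c.1.2), hmem⟩).isLt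
    have h3 : μ.card - 1 < (T.1 ⟨(c.1.1 + 1, c.1.2), hmem⟩).1 := hlt
    omega
  · intro hmem
    have hlt := T.2 c ⟨(c.1.1, c.1.2 + 1), hmem⟩ (Or.inl ⟨rfl, Nat.lt_succ_self _⟩)
    rw [Equiv.apply_symm_apply] at hlt
    have h2 := (T.1 ⟨(c.1.1, c.1.2 + 1), hmem⟩).isLt
    have h3 : μ.card - 1 < (T.1 ⟨(c.1.1, c.1.2 + 1), hmem⟩).1 := hlt
    omega

/-- The restriction of an SYT to the diagram with its top corner removed. -/
noncomputable def branch (hm : 0 < μ.card) (T : SYT μ) : BSig μ := by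
  set top : Fin μ.card := ⟨μ.card - 1, by omega⟩ with htop
  set c := T.1.symm top with hc
  have hrem : Removable μ c.1 := removable_symm_top T hm
  set μ' := eraseY μ c.1 hrem with hμ'
  have hcard' : μ'.card = μ.card - 1 := card_eraseY hrem
  have hne : ∀ x : {x : ℕ × ℕ // x ∈ μ'}, (T.1 ⟨x.1, (mem_eraseY.mp x.2).1⟩).1 < μ'.card := by
    intro x
    have h1 : T.1 ⟨x.1, (mem_eraseY.mp x.2).1⟩ ≠ top := by
      intro he
      have : (⟨x.1, (mem_eraseY.mp x.2).1⟩ : {y : ℕ × ℕ // y ∈ μ}) = c := by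
        have h4 := congrArg T.1.symm he
        rw [Equiv.symm_apply_apply] at h4
        exact h4
      exact (mem_eraseY.mp x.2).2 (congrArg Subtype.val this)
    have h2 := (T.1 ⟨x.1, (mem_eraseY.mp x.2).1⟩).isLt
    have h3 : (T.1 ⟨x.1, (mem_eraseY.mp x.2).1⟩).1 ≠ μ.card - 1 := by
      intro hv
      exact h1 (Fin.ext hv)
    omega
  set S0 : {x : ℕ × ℕ // x ∈ μ'} → Fin μ'.card :=
    fun x => ⟨(T.1 ⟨x.1, (mem_eraseY.mp x.2).1⟩).1, hne x⟩ with hS0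
  have hinj : Function.Injective S0 := by
    intro x y hxy
    have hv := congrArg Fin.val hxy
    simp only [hS0] at hv
    have := T.1.injective (Fin.ext hv)
    exact Subtype.ext (Subtype.mk_eq_mk.mp this)
  have hbij : Function.Bijective S0 :=
    (Fintype.bijective_iff_injective_and_card S0).mpr ⟨hinj, by rw [card_cells, Fintype.card_fin]⟩
  refine ⟨⟨c.1, hrem⟩, ⟨Equiv.ofBijective S0 hbij, ?_⟩⟩
  intro x y hxy
  have hrel := T.2 ⟨x.1, (mem_eraseY.mp x.2).1⟩ ⟨y.1, (mem_eraseY.mp y.2).1⟩ hxy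
  exact hrel

lemma V_branch (hm : 0 < μ.card) (T : SYT μ) :
    V μ (branch hm T) = ⟨(T.1.symm ⟨μ.card - 1, by omega⟩).1, fun x => (T.1 x).1⟩ := by
  refine Prod.ext rfl ?_
  funext x
  simp only [V, branch]
  by_cases h : x.1 = (T.1.symm ⟨μ.card - 1, by omega⟩).1
  · refine (dif_pos h).trans ?_
    have hx : x = T.1.symm ⟨μ.card - 1, by omega⟩ := Subtype.ext h
    rw [hx, Equiv.apply_symm_apply]
  · exact (dif_neg h).trans rfl

end Branching2


section Branching3

variable {μ : YoungDiagram}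

lemma branch_injective (hm : 0 < μ.card) : Function.Injective (branch (μ := μ) hm) := by
  intro T T' h
  have hV := congrArg (V μ) h
  rw [V_branch hm T, V_branch hm T'] at hV
  have h2 := congrArg Prod.snd hV
  apply Subtype.ext
  apply Equiv.ext
  intro x
  exact Fin.ext (congrFun h2 x)

lemma branch_surjective (hm : 0 < μ.card) : Function.Surjective (branch (μ := μ) hm) := by
  rintro ⟨⟨c, hrem⟩, S⟩
  have hcard' : (eraseY μ c hrem).card = μ.card - 1 := card_eraseY hrem
  set U : {x : ℕ × ℕ // x ∈ μ} → Fin μ.card := fun x =>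
    if h : x.1 = c then ⟨μ.card - 1, by omega⟩
    else ⟨(S.1 ⟨x.1, mem_eraseY.mpr ⟨x.2, h⟩⟩).1, by
      have h5 : ((S.1 ⟨x.1, mem_eraseY.mpr ⟨x.2, h⟩⟩).1 : ℕ) < μ.card - 1 :=
        lt_of_lt_of_le (S.1 ⟨x.1, mem_eraseY.mpr ⟨x.2, h⟩⟩).isLt (le_of_eq hcard')
      omega⟩ with hU
  have hUinj : Function.Injective U := by
    intro x y hxy
    have hv := congrArg Fin.val hxy
    by_cases hx : x.1 = c <;> by_cases hy : y.1 = c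
    · exact Subtype.ext (hx.trans hy.symm)
    · simp only [hU, dif_pos hx, dif_neg hy] at hv
      have h5 : ((S.1 ⟨y.1, mem_eraseY.mpr ⟨y.2, hy⟩⟩).1 : ℕ) < μ.card - 1 :=
        lt_of_lt_of_le (S.1 ⟨y.1, mem_eraseY.mpr ⟨y.2, hy⟩⟩).isLt (le_of_eq hcard')
      omega
    · simp only [hU, dif_neg hx, dif_pos hy] at hv
      have h5 : ((S.1 ⟨x.1, mem_eraseY.mpr ⟨x.2, hx⟩⟩).1 : ℕ) < μ.card - 1 :=
        lt_of_lt_of_le (S.1 ⟨x.1, mem_eraseY.mpr ⟨x.2, hx⟩⟩).isLt (le_of_eq hcard')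
      omega
    · simp only [hU, dif_neg hx, dif_neg hy] at hv
      have := S.1.injective (Fin.ext hv)
      exact Subtype.ext (Subtype.mk_eq_mk.mp this)
  have hUbij : Function.Bijective U :=
    (Fintype.bijective_iff_injective_and_card U).mpr ⟨hUinj, by rw [card_cells, Fintype.card_fin]⟩
  have hprop : ∀ x y : {z : ℕ × ℕ // z ∈ μ},
      ((x.1.1 = y.1.1 ∧ x.1.2 < y.1.2) ∨ (x.1.2 = y.1.2 ∧ x.1.1 < y.1.1)) →
      Equiv.ofBijective U hUbij x < Equiv.ofBijective U hUbij y := by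
    intro x y hxy
    show U x < U y
    by_cases hx : x.1 = c
    · exfalso
      have e1 : x.1.1 = c.1 := congrArg Prod.fst hx
      have e2 : x.1.2 = c.2 := congrArg Prod.snd hx
      have hcell : (y.1.1, y.1.2) ∈ μ := by simpa using y.2
      rcases hxy with ⟨he, hlt⟩ | ⟨he, hlt⟩
      · exact hrem.2.2 (μ.up_left_mem (by omega) (by omega) hcell)
      · exact hrem.2.1 (μ.up_left_mem (by omega) (by omega) hcell)
    · by_cases hy : y.1 = c
      · rw [Fin.lt_def]
        simp only [hU, dif_neg hx, dif_pos hy]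
        exact lt_of_lt_of_le (S.1 ⟨x.1, mem_eraseY.mpr ⟨x.2, hx⟩⟩).isLt (le_of_eq hcard')
      · rw [Fin.lt_def]
        simp only [hU, dif_neg hx, dif_neg hy]
        exact S.2 ⟨x.1, mem_eraseY.mpr ⟨x.2, hx⟩⟩ ⟨y.1, mem_eraseY.mpr ⟨y.2, hy⟩⟩ hxy
  refine ⟨⟨Equiv.ofBijective U hUbij, hprop⟩, ?_⟩
  apply V_injective
  rw [V_branch hm ⟨Equiv.ofBijective U hUbij, hprop⟩]
  have htopc : (Equiv.ofBijective U hUbij).symm ⟨μ.card - 1, by omega⟩ = ⟨c, hrem.1⟩ := by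
    rw [Equiv.symm_apply_eq]
    show _ = U ⟨c, hrem.1⟩
    rw [hU]
    simp only [dif_pos]
  simp only [V, htopc]
  refine Prod.ext rfl ?_
  funext x
  show ((Equiv.ofBijective U hUbij) x).1 =
    if h : x.1 = c then μ.card - 1 else ((S.1 ⟨x.1, mem_eraseY.mpr ⟨x.2, h⟩⟩).1 : ℕ)
  show (U x).1 = _
  rw [hU]
  by_cases hx : x.1 = c
  · simp only [dif_pos hx]
  · simp only [dif_neg hx]

lemma card_SYT_eq_sigma (hm : 0 < μ.card) : Nat.card (SYT μ) = Nat.card (BSig μ) :=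
  Nat.card_eq_of_bijective (branch hm) ⟨branch_injective hm, branch_surjective hm⟩

end Branching3


section Corners

variable {μ : YoungDiagram}

lemma removable_iff {i j : ℕ} :
    Removable μ (i, j) ↔ j + 1 = μ.rowLen i ∧ μ.rowLen (i + 1) ≤ j := by
  unfold Removable
  simp only [YoungDiagram.mem_iff_lt_rowLen, not_lt]
  constructor
  · rintro ⟨h1, h2, h3⟩
    constructor
    · omega
    · omega
  · rintro ⟨h1, h2⟩
    refine ⟨by omega, by omega, by omega⟩

lemma addable_iff {i j : ℕ} :
    Addable μ (i, j) ↔ j = μ.rowLen i ∧ (i = 0 ∨ μ.rowLen i < μ.rowLen (i - 1)) := by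
  unfold Addable
  simp only [YoungDiagram.mem_iff_lt_rowLen, not_lt]
  constructor
  · rintro ⟨h1, h2, h3⟩
    have hj : j = μ.rowLen i := by
      rcases h3 with h3 | h3
      · omega
      · omega
    refine ⟨hj, ?_⟩
    rcases h2 with h2 | h2
    · exact Or.inl h2
    · exact Or.inr (by omega)
  · rintro ⟨h1, h2⟩
    refine ⟨by omega, ?_, ?_⟩
    · rcases h2 with h2 | h2
      · exact Or.inl h2
      · exact Or.inr (by omega)
    · rcases Nat.eq_zero_or_pos j with h | h
      · exact Or.inl h
      · exact Or.inr (by omega)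

lemma rowLen_pos_of_removable {i j : ℕ} (h : Removable μ (i, j)) : 0 < μ.rowLen i := by
  have := removable_iff.mp h
  omega

instance finiteRemovable (μ : YoungDiagram) : Finite {c : ℕ × ℕ // Removable μ c} :=
  Finite.of_injective (fun c => (⟨c.1, c.2.1⟩ : {x : ℕ × ℕ // x ∈ μ}))
    (fun a b hab => Subtype.ext (Subtype.mk_eq_mk.mp hab))

noncomputable def optionRemEquivAdd (μ : YoungDiagram) :
    Option {c : ℕ × ℕ // Removable μ c} ≃ {c : ℕ × ℕ // Addable μ c} := by
  apply Equiv.ofBijective (fun o => Option.rec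
    ⟨(0, μ.rowLen 0), addable_iff.mpr ⟨rfl, Or.inl rfl⟩⟩
    (fun c => ⟨(c.1.1 + 1, μ.rowLen (c.1.1 + 1)), by
      have h := removable_iff.mp (show Removable μ (c.1.1, c.1.2) from by
        simpa using c.2)
      exact addable_iff.mpr ⟨rfl, Or.inr (by simpa using by omega)⟩⟩) o)
  constructor
  · rintro (_ | ⟨⟨⟨i, j⟩, hc⟩⟩) (_ | ⟨⟨⟨i', j'⟩, hc'⟩⟩) h
    · rfl
    · exfalso
      have := congrArg (fun x => x.1.1) h
      simp at this
    · exfalso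
      have := congrArg (fun x => x.1.1) h
      simp at this
    · have h1 : i + 1 = i' + 1 := congrArg (fun x => x.1.1) h
      have hi : i = i' := by omega
      subst hi
      have hr := removable_iff.mp hc
      have hr' := removable_iff.mp hc'
      have : j = j' := by omega
      subst this
      rfl
  · rintro ⟨⟨i, j⟩, ha⟩
    obtain ⟨hj, hcase⟩ := addable_iff.mp ha
    rcases Nat.eq_zero_or_pos i with h0 | h0
    · refine ⟨none, ?_⟩
      apply Subtype.ext
      subst h0
      simp [hj]
    · rcases hcase with h | h
      · omega
      · obtain ⟨k, rfl⟩ : ∃ k, i = k + 1 := ⟨i - 1, by omega⟩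
        simp only [Nat.add_sub_cancel] at h
        have hrk : Removable μ (k, μ.rowLen k - 1) := by
          apply removable_iff.mpr
          omega
      
        refine ⟨some ⟨(k, μ.rowLen k - 1), hrk⟩, ?_⟩
        apply Subtype.ext
        simp [hj]

instance finiteAddable (μ : YoungDiagram) : Finite {c : ℕ × ℕ // Addable μ c} := by
  have : Fintype {c : ℕ × ℕ // Removable μ c} := Fintype.ofFinite _
  exact Finite.of_equiv _ (optionRemEquivAdd μ)

lemma card_addable_eq (μ : YoungDiagram) :
    Nat.card {c : ℕ × ℕ // Addable μ c} = Nat.card {c : ℕ × ℕ // Removable μ c} + 1 := by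
  rw [← Nat.card_congr (optionRemEquivAdd μ)]
  have : Fintype {c : ℕ × ℕ // Removable μ c} := Fintype.ofFinite _
  simp [Nat.card_eq_fintype_card]

lemma card_cov_up_eq (μ : YoungDiagram) :
    Nat.card {ν : YoungDiagram // Cov μ ν} = Nat.card {ν : YoungDiagram // Cov ν μ} + 1 := by
  rw [← Nat.card_congr (covEquivAdd μ), ← Nat.card_congr (covdEquivRem μ)]
  exact card_addable_eq μ

end Corners


section Common

lemma eq_of_le_of_card_le {μ ν : YoungDiagram} (h : μ ≤ ν) (hc : ν.card ≤ μ.card) : μ = ν := by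
  ext x
  rw [YoungDiagram.mem_cells, YoungDiagram.mem_cells]
  have := Finset.eq_of_subset_of_card_le (YoungDiagram.cells_subset_iff.mpr h) hc
  constructor
  · intro hx; exact h hx
  · intro hx
    rw [← YoungDiagram.mem_cells, ← this, YoungDiagram.mem_cells] at hx
    exact hx

lemma card_sup_add_card_inf (μ ν : YoungDiagram) :
    (μ ⊔ ν).card + (μ ⊓ ν).card = μ.card + ν.card := by
  show ((μ ⊔ ν).cells).card + ((μ ⊓ ν).cells).card = _
  rw [YoungDiagram.cells_sup, YoungDiagram.cells_inf]
  exact Finset.card_union_add_card_inter μ.cells ν.cells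

lemma nat_card_eq_ite {α : Type*} (P : α → Prop) (a : α) (h : ∀ x, P x → x = a)
    [Decidable (P a)] : Nat.card {x // P x} = if P a then 1 else 0 := by
  split
  · next hPa =>
    have : Unique {x // P x} := ⟨⟨⟨a, hPa⟩⟩, fun x => Subtype.ext (h x.1 x.2)⟩
    exact Nat.card_unique
  · next hPa =>
    have : IsEmpty {x // P x} := ⟨fun x => hPa (h x.1 x.2 ▸ x.2)⟩
    exact Nat.card_of_isEmpty

lemma count_common (μ ν : YoungDiagram) (h : μ.card = ν.card) (hne : μ ≠ ν) :
    Nat.card {l : YoungDiagram // Cov μ l ∧ Cov ν l} =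
    Nat.card {r : YoungDiagram // Cov r μ ∧ Cov r ν} := by
  classical
  have n1 : μ.card = μ.cells.card := rfl
  have n2 : ν.card = ν.cells.card := rfl
  have n3 : (μ ⊔ ν).card = (μ ⊔ ν).cells.card := rfl
  have n4 : (μ ⊓ ν).card = (μ ⊓ ν).cells.card := rfl
  have hsupinf := card_sup_add_card_inf μ ν
  have hsupne : μ ≠ μ ⊔ ν := by
    intro he
    have : ν ≤ μ := le_sup_right.trans (le_of_eq he.symm)
    exact hne (eq_of_le_of_card_le this (le_of_eq h)).symm
  have hsupcard : μ.card + 1 ≤ (μ ⊔ ν).card := by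
    have hlt : μ.cells ⊂ (μ ⊔ ν).cells := by
      rw [YoungDiagram.cells_ssubset_iff]
      exact lt_of_le_of_ne le_sup_left hsupne
    have := Finset.card_lt_card hlt
    omega
  have hinfne : μ ⊓ ν ≠ μ := by
    intro he
    have : μ ≤ ν := le_of_eq he.symm |>.trans inf_le_right
    exact hne (eq_of_le_of_card_le this (le_of_eq h.symm))
  have hinfcard : (μ ⊓ ν).card + 1 ≤ μ.card := by
    have hlt : (μ ⊓ ν).cells ⊂ μ.cells := by
      rw [YoungDiagram.cells_ssubset_iff]
      exact lt_of_le_of_ne inf_le_left hinfne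
    have := Finset.card_lt_card hlt
    omega
  have hup : ∀ l : YoungDiagram, (Cov μ l ∧ Cov ν l) → l = μ ⊔ ν := by
    rintro l ⟨⟨h1, h2⟩, ⟨h3, h4⟩⟩
    symm
    apply eq_of_le_of_card_le (sup_le h1 h3)
    omega
  have hdown : ∀ r : YoungDiagram, (Cov r μ ∧ Cov r ν) → r = μ ⊓ ν := by
    rintro r ⟨⟨h1, h2⟩, ⟨h3, h4⟩⟩
    apply eq_of_le_of_card_le (le_inf h1 h3)
    omega
  rw [nat_card_eq_ite _ _ hup, nat_card_eq_ite _ _ hdown]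
  have hiff : (Cov μ (μ ⊔ ν) ∧ Cov ν (μ ⊔ ν)) ↔ (Cov (μ ⊓ ν) μ ∧ Cov (μ ⊓ ν) ν) := by
    unfold Cov
    constructor
    · rintro ⟨⟨-, h2⟩, ⟨-, h4⟩⟩
      exact ⟨⟨inf_le_left, by omega⟩, ⟨inf_le_right, by omega⟩⟩
    · rintro ⟨⟨-, h2⟩, ⟨-, h4⟩⟩
      exact ⟨⟨le_sup_left, by omega⟩, ⟨le_sup_right, by omega⟩⟩
  split
  · next hc => rw [if_pos (hiff.mp hc)]
  · next hc => rw [if_neg (fun hc2 => hc (hiff.mpr hc2))]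

end Common


section Sums
open scoped Classical

/-- matches the root-level definition `sytCard`. -/
noncomputable def sytCardA (μ : YoungDiagram) : ℕ := Nat.card (SYT μ)

noncomputable instance (n : ℕ) : Fintype {μ : YoungDiagram // μ.card = n} := Fintype.ofFinite _
noncomputable instance (μ : YoungDiagram) : Fintype {ν : YoungDiagram // Cov μ ν} := Fintype.ofFinite _
noncomputable instance (μ : YoungDiagram) : Fintype {ν : YoungDiagram // Cov ν μ} := Fintype.ofFinite _
noncomputable instance (μ : YoungDiagram) : Fintype {c : ℕ × ℕ // Removable μ c} := Fintype.ofFinite _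

lemma nat_card_sigma {ι : Type*} [Fintype ι] (f : ι → Type*) [∀ i, Finite (f i)] :
    Nat.card (Σ i, f i) = ∑ i, Nat.card (f i) := by
  letI : ∀ i, Fintype (f i) := fun i => Fintype.ofFinite _
  rw [Nat.card_eq_fintype_card, Fintype.card_sigma]
  exact Finset.sum_congr rfl (fun i _ => Nat.card_eq_fintype_card.symm)

lemma sum_ext {α : Type*} {m : ℕ} {P : α → ℕ → Prop} (p : α → Prop)
    [Fintype {x : α // p x}] [Fintype {y : α // P y m}]
    (hp : ∀ l, p l → P l m) (g : α → ℕ) :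
    ∑ x : {x : α // p x}, g x.1 = ∑ y : {y : α // P y m}, if p y.1 then g y.1 else 0 := by
  calc ∑ x : {x : α // p x}, g x.1
      = ∑ z : {z : {y : α // P y m} // p z.1}, g z.1.1 :=
        Fintype.sum_equiv
          (⟨fun x => ⟨⟨x.1, hp _ x.2⟩, x.2⟩, fun z => ⟨z.1.1, z.2⟩,
            fun x => rfl, fun z => rfl⟩ :
            {x : α // p x} ≃ {z : {y : α // P y m} // p z.1})
          _ _ (fun x => rfl)
    _ = ∑ y ∈ Finset.univ.filter (fun y : {y : α // P y m} => p y.1), g y.1 :=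
        (Finset.sum_subtype (Finset.univ.filter (fun y : {y : α // P y m} => p y.1))
          (fun x => by simp) (fun y => g y.1)).symm
    _ = ∑ y : {y : α // P y m}, if p y.1 then g y.1 else 0 := Finset.sum_filter _ _

lemma nat_card_restrict {α : Type*} (p q : α → Prop) [Fintype {x : α // p x}] :
    Nat.card {l : α // p l ∧ q l} =
      (Finset.univ.filter (fun x : {x : α // p x} => q x.1)).card := by
  rw [← Fintype.card_subtype, ← Nat.card_eq_fintype_card]
  apply Nat.card_congr
  exact ⟨fun l => ⟨⟨l.1, l.2.1⟩, l.2.2⟩, fun z => ⟨z.1.1, z.1.2, z.2⟩,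
    fun l => rfl, fun z => rfl⟩

lemma branch_sum (l : YoungDiagram) (h : 0 < l.card) :
    sytCardA l = ∑ ν : {ν : YoungDiagram // Cov ν l}, sytCardA ν.1 := by
  rw [sytCardA, card_SYT_eq_sigma h, nat_card_sigma]
  apply Fintype.sum_equiv (covdEquivRem l)
  intro c
  rfl

end Sums


section Key
open scoped Classical

lemma key_identity (μ : YoungDiagram) (n : ℕ) (hμ : μ.card = n) :
    ∑ ν : {ν : YoungDiagram // Cov μ ν}, sytCardA ν.1
      = sytCardA μ +
        ∑ ρ : {ρ : YoungDiagram // Cov ρ μ},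
          ∑ σ : {σ : YoungDiagram // Cov ρ.1 σ}, sytCardA σ.1 := by
  have step1 : ∑ ν : {ν : YoungDiagram // Cov μ ν}, sytCardA ν.1
      = ∑ l : {l : YoungDiagram // Cov μ l}, ∑ ν : {y : YoungDiagram // y.card = n},
          if Cov ν.1 l.1 then sytCardA ν.1 else 0 := by
    apply Finset.sum_congr rfl
    intro l _
    rw [branch_sum l.1 (by have := l.2.2; omega)]
    exact sum_ext (m := n) (P := fun y m => y.card = m) (fun ν => Cov ν l.1)
      (fun x hx => by have h1 := hx.2; have h2 := l.2.2; omega) sytCardA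
  have step5 : ∑ ρ : {ρ : YoungDiagram // Cov ρ μ},
        ∑ σ : {σ : YoungDiagram // Cov ρ.1 σ}, sytCardA σ.1
      = ∑ ρ : {ρ : YoungDiagram // Cov ρ μ}, ∑ ν : {y : YoungDiagram // y.card = n},
          if Cov ρ.1 ν.1 then sytCardA ν.1 else 0 := by
    apply Finset.sum_congr rfl
    intro ρ _
    exact sum_ext (m := n) (P := fun y m => y.card = m) (fun σ => Cov ρ.1 σ)
      (fun x hx => by have h1 := hx.2; have h2 := ρ.2.2; omega) sytCardA
  rw [step1, step5, Finset.sum_comm]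
  conv_rhs => rw [Finset.sum_comm]
  have inner_up : ∀ ν : {y : YoungDiagram // y.card = n},
      ∑ l : {l : YoungDiagram // Cov μ l}, (if Cov ν.1 l.1 then sytCardA ν.1 else 0)
        = Nat.card {l : YoungDiagram // Cov μ l ∧ Cov ν.1 l} * sytCardA ν.1 := by
    intro ν
    rw [← Finset.sum_filter, Finset.sum_const, smul_eq_mul,
      nat_card_restrict (fun l => Cov μ l) (fun l => Cov ν.1 l)]
  have inner_down : ∀ ν : {y : YoungDiagram // y.card = n},
      ∑ ρ : {ρ : YoungDiagram // Cov ρ μ}, (if Cov ρ.1 ν.1 then sytCardA ν.1 else 0)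
        = Nat.card {r : YoungDiagram // Cov r μ ∧ Cov r ν.1} * sytCardA ν.1 := by
    intro ν
    rw [← Finset.sum_filter, Finset.sum_const, smul_eq_mul,
      nat_card_restrict (fun r => Cov r μ) (fun r => Cov r ν.1)]
  calc ∑ ν : {y : YoungDiagram // y.card = n},
        ∑ l : {l : YoungDiagram // Cov μ l}, (if Cov ν.1 l.1 then sytCardA ν.1 else 0)
      = ∑ ν : {y : YoungDiagram // y.card = n},
          ((if ν = ⟨μ, hμ⟩ then sytCardA μ else 0) +
            Nat.card {r : YoungDiagram // Cov r μ ∧ Cov r ν.1} * sytCardA ν.1) := by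
        apply Finset.sum_congr rfl
        intro ν _
        rw [inner_up ν]
        by_cases hv : ν = ⟨μ, hμ⟩
        · rw [if_pos hv]
          have hv1 : ν.1 = μ := congrArg Subtype.val hv
          subst hv1
          have h1 : Nat.card {l : YoungDiagram // Cov ν.1 l ∧ Cov ν.1 l}
              = Nat.card {l : YoungDiagram // Cov ν.1 l} :=
            Nat.card_congr (Equiv.subtypeEquivRight (fun l => by simp))
          have h2 : Nat.card {r : YoungDiagram // Cov r ν.1 ∧ Cov r ν.1}
              = Nat.card {r : YoungDiagram // Cov r ν.1} :=
            Nat.card_congr (Equiv.subtypeEquivRight (fun l => by simp))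
          rw [h1, h2, card_cov_up_eq]
          ring
        · rw [if_neg hv, zero_add]
          congr 1
          exact count_common μ ν.1 (by rw [hμ, ν.2]) (fun he => hv (Subtype.ext he.symm))
    _ = sytCardA μ + ∑ ν : {y : YoungDiagram // y.card = n},
          Nat.card {r : YoungDiagram // Cov r μ ∧ Cov r ν.1} * sytCardA ν.1 := by
        rw [Finset.sum_add_distrib]
        congr 1
        simp
    _ = sytCardA μ + ∑ ν : {y : YoungDiagram // y.card = n},
          ∑ ρ : {ρ : YoungDiagram // Cov ρ μ}, (if Cov ρ.1 ν.1 then sytCardA ν.1 else 0) := by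
        congr 1
        exact Finset.sum_congr rfl (fun ν _ => (inner_down ν).symm)

end Key


section UpDown
open scoped Classical

lemma up_down : ∀ (n : ℕ) (μ : YoungDiagram), μ.card = n →
    ∑ ν : {ν : YoungDiagram // Cov μ ν}, sytCardA ν.1 = (n + 1) * sytCardA μ := by
  intro n
  induction n with
  | zero =>
    intro μ hμ
    rw [key_identity μ 0 hμ]
    have : IsEmpty {ρ : YoungDiagram // Cov ρ μ} := ⟨fun ρ => by have := ρ.2.2; omega⟩
    rw [Finset.univ_eq_empty, Finset.sum_empty]
    omega
  | succ m ih =>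
    intro μ hμ
    rw [key_identity μ (m + 1) hμ]
    rw [Finset.sum_congr rfl (fun (ρ : {ρ : YoungDiagram // Cov ρ μ}) _ =>
      ih ρ.1 (by have := ρ.2.2; omega)), ← Finset.mul_sum]
    rw [← branch_sum μ (by omega)]
    ring

lemma F_succ (n : ℕ) :
    (∑ μ : {μ : YoungDiagram // μ.card = n + 1}, sytCardA μ.1 ^ 2)
      = (n + 1) * ∑ μ : {μ : YoungDiagram // μ.card = n}, sytCardA μ.1 ^ 2 := by
  have step1 : ∀ l : {l : YoungDiagram // l.card = n + 1},
      sytCardA l.1 ^ 2 = ∑ ν : {y : YoungDiagram // y.card = n},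
        if Cov ν.1 l.1 then sytCardA ν.1 * sytCardA l.1 else 0 := by
    intro l
    have h1 : sytCardA l.1 ^ 2 = (∑ ν : {ν : YoungDiagram // Cov ν l.1}, sytCardA ν.1) * sytCardA l.1 := by
      rw [← branch_sum l.1 (by have := l.2; omega)]
      ring
    rw [h1, Finset.sum_mul]
    exact sum_ext (m := n) (P := fun y m => y.card = m) (fun ν => Cov ν l.1)
      (fun x hx => by have h2 := hx.2; have h3 := l.2; omega)
      (fun ν => sytCardA ν * sytCardA l.1)
  rw [Finset.sum_congr rfl (fun l _ => step1 l), Finset.sum_comm]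
  have step2 : ∀ ν : {y : YoungDiagram // y.card = n},
      (∑ l : {l : YoungDiagram // l.card = n + 1},
        if Cov ν.1 l.1 then sytCardA ν.1 * sytCardA l.1 else 0)
      = (n + 1) * sytCardA ν.1 ^ 2 := by
    intro ν
    have h1 : (∑ l : {l : YoungDiagram // Cov ν.1 l}, sytCardA ν.1 * sytCardA l.1)
        = ∑ l : {l : YoungDiagram // l.card = n + 1},
            if Cov ν.1 l.1 then sytCardA ν.1 * sytCardA l.1 else 0 :=
      sum_ext (m := n + 1) (P := fun y m => y.card = m) (fun l => Cov ν.1 l)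
        (fun x hx => by have h2 := hx.2; have h3 := ν.2; omega)
        (fun l => sytCardA ν.1 * sytCardA l)
    rw [← h1, ← Finset.mul_sum, up_down n ν.1 ν.2]
    ring
  rw [Finset.sum_congr rfl (fun ν _ => step2 ν), ← Finset.mul_sum]

end UpDown


section Final

lemma sytCardA_eq (μ : YoungDiagram) : sytCardA μ = sytCard μ := rfl

instance : IsEmpty {c : ℕ × ℕ // c ∈ (⊥ : YoungDiagram)} :=
  ⟨fun c => YoungDiagram.notMem_bot c.1 c.2⟩

instance : IsEmpty (Fin (⊥ : YoungDiagram).card) := by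
  have h : (⊥ : YoungDiagram).card = 0 := by
    show (⊥ : YoungDiagram).cells.card = 0
    rw [YoungDiagram.cells_bot]
    rfl
  rw [h]
  infer_instance

lemma sytCardA_bot : sytCardA (⊥ : YoungDiagram) = 1 := by
  have : Unique (SYT (⊥ : YoungDiagram)) :=
    { default := ⟨Equiv.equivOfIsEmpty _ _, fun c _ _ => isEmptyElim c⟩
      uniq := fun T => Subtype.ext (Equiv.ext fun c => isEmptyElim c) }
  exact Nat.card_unique

instance : Unique {μ : YoungDiagram // μ.card = 0} where
  default := ⟨⊥, by show (⊥ : YoungDiagram).cells.card = 0; rw [YoungDiagram.cells_bot]; rfl⟩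
  uniq := by
    rintro ⟨μ, hμ⟩
    apply Subtype.ext
    show μ = ⊥
    ext x
    rw [YoungDiagram.mem_cells, YoungDiagram.mem_cells]
    have : μ.cells = ∅ := Finset.card_eq_zero.mp hμ
    simp [← YoungDiagram.mem_cells, this, YoungDiagram.cells_bot]

lemma F_eq (n : ℕ) :
    (∑ μ : {μ : YoungDiagram // μ.card = n}, sytCardA μ.1 ^ 2) = Nat.factorial n := by
  induction n with
  | zero =>
    have h : ∀ μ : {μ : YoungDiagram // μ.card = 0}, sytCardA μ.1 ^ 2 = 1 := by
      rintro ⟨μ, hμ⟩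
      have hb : μ = ⊥ := congrArg Subtype.val (Subsingleton.elim (⟨μ, hμ⟩ : {μ : YoungDiagram // μ.card = 0}) ⟨⊥, by show (⊥ : YoungDiagram).cells.card = 0; rw [YoungDiagram.cells_bot]; rfl⟩)
      show sytCardA μ ^ 2 = 1
      rw [hb, sytCardA_bot]
      rfl
    rw [Finset.sum_congr rfl (fun μ _ => h μ)]
    simp [Nat.factorial]
  | succ m ih =>
    rw [F_succ, ih, Nat.factorial_succ]

end Final
end BurnsideAux

/-- Burnside identity / RSK: `∑_{λ ⊢ n} (f^λ)^2 = n!`, the sum being over all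
Young diagrams with `n` cells. -/
theorem sum_syt_sq_eq_factorial (n : ℕ) :
    ∑ᶠ μ : {μ : YoungDiagram // μ.card = n}, (sytCard μ.1) ^ 2 = Nat.factorial n := by
  rw [finsum_eq_sum_of_fintype]
  exact BurnsideAux.F_eq n
end

section
/- Let λ be a partition with λ_1 = a columns and ℓ(λ) = b rows. Then the product over cells (i,j) of λ of (i+j−1) is at least the product over cells of λ of the hook lengths h_λ(i,j). -/
open Finset

private lemma exchange_mul (u v p q : ℕ) (huv : v ≤ u) (hpq : q ≤ p) :
    (u + p) * (v + q) ≤ (u + q) * (v + p) := by nlinarith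

/-- Rearrangement-type lemma on an interval. -/
private lemma lemA_ico (c : ℕ → ℕ) (hc : ∀ j j', j ≤ j' → c j' ≤ c j) :
    ∀ n lo, ∏ j ∈ Ico lo (lo + n), (c j + (2 * lo + n - 1 - j)) ≤
      ∏ j ∈ Ico lo (lo + n), (c j + j) := by
  intro n
  induction n using Nat.strong_induction_on with
  | _ n ih =>
    match n with
    | 0 => intro lo; simp
    | 1 =>
      intro lo
      rw [Finset.prod_Ico_succ_top le_rfl, Finset.prod_Ico_succ_top le_rfl]
      simp only [Finset.Ico_self, Finset.prod_empty, one_mul]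
      omega
    | (m+2) =>
      intro lo
      have h1 : lo ≤ lo + (m+1) := by omega
      have h2 : lo < lo + (m+1) := by omega
      rw [show lo + (m+2) = (lo + (m+1)) + 1 by omega]
      rw [Finset.prod_Ico_succ_top h1, Finset.prod_Ico_succ_top h1,
          Finset.prod_eq_prod_Ico_succ_bot h2, Finset.prod_eq_prod_Ico_succ_bot h2]
      have hmid : ∏ j ∈ Ico (lo+1) (lo + (m+1)), (c j + (2 * lo + (m+2) - 1 - j)) ≤
          ∏ j ∈ Ico (lo+1) (lo + (m+1)), (c j + j) := by
        have h3 := ih m (by omega) (lo+1)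
        rw [show lo + 1 + m = lo + (m+1) by omega] at h3
        calc ∏ j ∈ Ico (lo+1) (lo + (m+1)), (c j + (2 * lo + (m+2) - 1 - j))
            = ∏ j ∈ Ico (lo+1) (lo + (m+1)), (c j + (2 * (lo+1) + m - 1 - j)) := by
              apply Finset.prod_congr rfl; intro j hj; rw [Finset.mem_Ico] at hj
              congr 1; omega
          _ ≤ _ := h3
      have hlo : c lo + (2 * lo + (m+2) - 1 - lo) = c lo + (lo + m + 1) := by congr 1; omega
      have htop : c (lo + (m+1)) + (2 * lo + (m+2) - 1 - (lo + (m+1))) = c (lo + (m+1)) + lo := by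
        congr 1; omega
      rw [hlo, htop]
      have hex : (c lo + (lo + m + 1)) * (c (lo + (m+1)) + lo) ≤
          (c lo + lo) * (c (lo + (m+1)) + (lo + (m+1))) := by
        have h4 := exchange_mul (c lo) (c (lo + (m+1))) (lo + m + 1) lo (hc lo _ (by omega)) (by omega)
        calc (c lo + (lo + m + 1)) * (c (lo + (m+1)) + lo) ≤
            (c lo + lo) * (c (lo + (m+1)) + (lo + m + 1)) := h4
          _ = (c lo + lo) * (c (lo + (m+1)) + (lo + (m+1))) := by ring_nf
      calc ((c lo + (lo + m + 1)) * ∏ j ∈ Ico (lo+1) (lo + (m+1)), (c j + (2 * lo + (m+2) - 1 - j)))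
            * (c (lo + (m+1)) + lo)
          ≤ ((c lo + (lo + m + 1)) * ∏ j ∈ Ico (lo+1) (lo + (m+1)), (c j + j))
            * (c (lo + (m+1)) + lo) :=
            Nat.mul_le_mul (Nat.mul_le_mul le_rfl hmid) le_rfl
        _ = ((c lo + (lo + m + 1)) * (c (lo + (m+1)) + lo)) *
            ∏ j ∈ Ico (lo+1) (lo + (m+1)), (c j + j) := by ring
        _ ≤ ((c lo + lo) * (c (lo + (m+1)) + (lo + (m+1)))) *
            ∏ j ∈ Ico (lo+1) (lo + (m+1)), (c j + j) := Nat.mul_le_mul_right _ hex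
        _ = ((c lo + lo) * ∏ j ∈ Ico (lo+1) (lo + (m+1)), (c j + j))
            * (c (lo + (m+1)) + (lo + (m+1))) := by ring

private lemma lemA (c : ℕ → ℕ) (hc : ∀ j j', j ≤ j' → c j' ≤ c j) (a : ℕ) :
    ∏ j ∈ range a, (c j + (a - 1 - j)) ≤ ∏ j ∈ range a, (c j + j) := by
  calc ∏ j ∈ range a, (c j + (a - 1 - j))
      = ∏ j ∈ Ico 0 (0 + a), (c j + (2 * 0 + a - 1 - j)) := by
        rw [Finset.range_eq_Ico, show (0:ℕ) + a = a by omega]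
    _ ≤ ∏ j ∈ Ico 0 (0 + a), (c j + j) := lemA_ico c hc a 0
    _ = ∏ j ∈ range a, (c j + j) := by
        rw [Finset.range_eq_Ico, show (0:ℕ) + a = a by omega]

private lemma prod_swap_diagram (b a : ℕ) (r c : ℕ → ℕ)
    (h : ∀ i j, i < c j ↔ j < r i)
    (hra : ∀ i, r i ≤ a) (hcb : ∀ j, c j ≤ b) (F : ℕ → ℕ → ℕ) :
    ∏ i ∈ range b, ∏ j ∈ range (r i), F i j =
      ∏ j ∈ range a, ∏ i ∈ range (c j), F i j := by
  have e1 : ∀ i, ∏ j ∈ range (r i), F i j =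
      ∏ j ∈ range a, (if j < r i then F i j else 1) := by
    intro i
    rw [← Finset.prod_subset (Finset.range_subset_range.2 (hra i))
        (fun x _ hx => if_neg (by simpa using hx))]
    apply Finset.prod_congr rfl
    intro j hj; rw [Finset.mem_range] at hj; rw [if_pos hj]
  have e2 : ∀ j, ∏ i ∈ range (c j), F i j =
      ∏ i ∈ range b, (if j < r i then F i j else 1) := by
    intro j
    rw [← Finset.prod_subset (Finset.range_subset_range.2 (hcb j))
        (fun x _ hx => if_neg (by rw [← h]; simpa using hx))]
    apply Finset.prod_congr rfl
    intro i hi; rw [Finset.mem_range] at hi; rw [if_pos ((h i j).1 hi)]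
  calc ∏ i ∈ range b, ∏ j ∈ range (r i), F i j
      = ∏ i ∈ range b, ∏ j ∈ range a, (if j < r i then F i j else 1) :=
        Finset.prod_congr rfl (fun i _ => e1 i)
    _ = ∏ j ∈ range a, ∏ i ∈ range b, (if j < r i then F i j else 1) :=
        Finset.prod_comm
    _ = ∏ j ∈ range a, ∏ i ∈ range (c j), F i j :=
        Finset.prod_congr rfl (fun j _ => (e2 j).symm)

private lemma tele_col (j : ℕ) : ∀ m : ℕ,
    (j + 1) * ∏ i ∈ range m, (i + j + 2) = (m + j + 1) * ∏ i ∈ range m, (i + j + 1) := by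
  intro m
  induction m with
  | zero => simp
  | succ m ih =>
    rw [Finset.prod_range_succ, Finset.prod_range_succ, ← mul_assoc, ih]
    ring
private lemma key : ∀ (b : ℕ) (r c : ℕ → ℕ),
    (∀ i j, i < c j ↔ j < r i) → (∀ i, b ≤ i → r i = 0) →
    ∏ i ∈ range b, ∏ j ∈ range (r i), (r i + c j - i - j - 1) ≤
      ∏ i ∈ range b, ∏ j ∈ range (r i), (i + j + 1) := by
  intro b
  induction b with
  | zero => intro r c _ _; simp
  | succ b ih =>
    intro r c hrc hr0
    set a := r 0 with ha
    set r' : ℕ → ℕ := fun i => r (i + 1) with hr'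
    set c' : ℕ → ℕ := fun j => c j - 1 with hc'
    have hrc' : ∀ i j, i < c' j ↔ j < r' i := by
      intro i j
      have h1 := hrc (i + 1) j
      simp only [hr', hc']
      omega
    have hr0' : ∀ i, b ≤ i → r' i = 0 := fun i hi => hr0 (i + 1) (by omega)
    -- bounds
    have hra' : ∀ i, r' i ≤ a := by
      intro i
      by_contra hcon
      push_neg at hcon
      have h1 : a < r' i := hcon
      have h2 : i + 1 < c a := (hrc (i + 1) a).2 h1
      have h3 : a < r 0 := (hrc 0 a).1 (by omega)
      omega
    have hcb' : ∀ j, c' j ≤ b := by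
      intro j
      by_contra hcon
      push_neg at hcon
      have h1 : b < c' j := hcon
      have h2 : j < r' b := (hrc' b j).1 h1
      have := hr0' b le_rfl
      omega
    have hcpos : ∀ j, j < a → 0 < c j := fun j hj => (hrc 0 j).2 hj
    have hcanti : ∀ j j', j ≤ j' → c j' ≤ c j := by
      intro j j' hjj
      by_contra hcon
      push_neg at hcon
      have h1 : c j < c j' := hcon
      have h2 : j' < r (c j) := (hrc (c j) j').1 h1
      have h3 : ¬ (c j) < c j := lt_irrefl _
      rw [hrc] at h3
      omega
    -- split off the first row
    rw [Finset.prod_range_succ', Finset.prod_range_succ']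
    -- rewrite hooks of the lower rows
    have hlow : ∏ i ∈ range b, ∏ j ∈ range (r (i + 1)), (r (i + 1) + c j - (i + 1) - j - 1) =
        ∏ i ∈ range b, ∏ j ∈ range (r' i), (r' i + c' j - i - j - 1) := by
      apply Finset.prod_congr rfl
      intro i _
      apply Finset.prod_congr rfl
      intro j hj
      rw [Finset.mem_range] at hj
      have h1 : i + 1 < c j := (hrc (i + 1) j).2 hj
      simp only [hr', hc']
      omega
    rw [hlow]
    have hIH := ih r' c' hrc' hr0'
    -- first-row hooks
    have hrow0 : ∏ j ∈ range (r 0), (r 0 + c j - 0 - j - 1) =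
        ∏ j ∈ range a, (c j + (a - 1 - j)) := by
      apply Finset.prod_congr rfl
      intro j hj
      rw [Finset.mem_range] at hj
      have := hcpos j hj
      omega
    rw [hrow0]
    -- swap to column form
    have swap1 := prod_swap_diagram b a r' c' hrc' hra' hcb' (fun i j => i + j + 1)
    have swap2 := prod_swap_diagram b a r' c' hrc' hra' hcb' (fun i j => i + j + 2)
    -- telescope identity
    have htel : (∏ j ∈ range a, (0 + j + 1)) * (∏ i ∈ range b, ∏ j ∈ range (r' i), (i + 1 + j + 1)) =
        (∏ j ∈ range a, (c j + j)) * (∏ i ∈ range b, ∏ j ∈ range (r' i), (i + j + 1)) := by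
      have e2 : (∏ i ∈ range b, ∏ j ∈ range (r' i), (i + 1 + j + 1)) =
          ∏ j ∈ range a, ∏ i ∈ range (c' j), (i + j + 2) := by
        rw [← swap2]
        apply Finset.prod_congr rfl; intro i _; apply Finset.prod_congr rfl; intro j _; omega
      rw [e2, swap1, ← Finset.prod_mul_distrib, ← Finset.prod_mul_distrib]
      apply Finset.prod_congr rfl
      intro j hj
      rw [Finset.mem_range] at hj
      have h1 := tele_col j (c' j)
      have h2 : c' j + j + 1 = c j + j := by have := hcpos j hj; simp only [hc']; omega
      rw [show (0 + j + 1) = j + 1 from by omega, h1, h2]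
    calc (∏ i ∈ range b, ∏ j ∈ range (r' i), (r' i + c' j - i - j - 1)) *
          ∏ j ∈ range a, (c j + (a - 1 - j))
        ≤ (∏ i ∈ range b, ∏ j ∈ range (r' i), (i + j + 1)) * ∏ j ∈ range a, (c j + j) :=
          Nat.mul_le_mul hIH (lemA c hcanti a)
      _ = (∏ j ∈ range a, (c j + j)) * (∏ i ∈ range b, ∏ j ∈ range (r' i), (i + j + 1)) := by ring
      _ = (∏ j ∈ range a, (0 + j + 1)) * (∏ i ∈ range b, ∏ j ∈ range (r' i), (i + 1 + j + 1)) :=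
          htel.symm
      _ = (∏ i ∈ range b, ∏ j ∈ range (r (i + 1)), (i + 1 + j + 1)) * ∏ j ∈ range (r 0), (0 + j + 1) := by
          rw [ha]; ring

private lemma prod_cells_eq (μ : YoungDiagram) (f : ℕ × ℕ → ℕ) :
    ∏ c ∈ μ.cells, f c =
      ∏ i ∈ range (μ.colLen 0), ∏ j ∈ range (μ.rowLen i), f (i, j) := by
  rw [Finset.prod_sigma']
  symm
  apply Finset.prod_nbij' (i := fun (x : Σ _ : ℕ, ℕ) => (x.1, x.2))
    (j := fun (p : ℕ × ℕ) => (⟨p.1, p.2⟩ : Σ _ : ℕ, ℕ))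
  · intro x hx
    rw [Finset.mem_sigma] at hx
    obtain ⟨h1, h2⟩ := hx
    rw [Finset.mem_range] at h2
    rw [YoungDiagram.mem_cells, YoungDiagram.mem_iff_lt_rowLen]
    exact h2
  · intro p hp
    rw [YoungDiagram.mem_cells] at hp
    rw [Finset.mem_sigma, Finset.mem_range, Finset.mem_range]
    constructor
    · have h1 : p ∈ μ := hp
      have h2 : (p.1, p.2) ∈ μ := by rwa [Prod.mk.eta]
      rw [YoungDiagram.mem_iff_lt_colLen] at h2
      exact lt_of_lt_of_le h2 (μ.colLen_anti 0 p.2 (Nat.zero_le _))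
    · have h2 : (p.1, p.2) ∈ μ := by rwa [Prod.mk.eta]
      rwa [YoungDiagram.mem_iff_lt_rowLen] at h2
  · intro x _; rfl
  · intro p _; rfl
  · intro x _; rfl

/-- For a Young diagram `λ` with `a = λ_1` columns and `b = ℓ(λ)` rows, the
product over all cells of the rectangle hook lengths `i + j - 1` (1-based), i.e.
`i + j + 1` in 0-based coordinates, is at least the product of the hook lengths
`h_λ(i,j)` (which in 0-based coordinates equal `rowLen i + colLen j - i - j - 1`). -/
theorem rectangle_hooks_ge_hooks (μ : YoungDiagram) (a b : ℕ)
    (ha : μ.rowLen 0 = a) (hb : μ.colLen 0 = b) :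
    ∏ c ∈ μ.cells, (μ.rowLen c.1 + μ.colLen c.2 - c.1 - c.2 - 1) ≤
      ∏ c ∈ μ.cells, (c.1 + c.2 + 1) := by
  rw [prod_cells_eq μ (fun c => μ.rowLen c.1 + μ.colLen c.2 - c.1 - c.2 - 1),
      prod_cells_eq μ (fun c => c.1 + c.2 + 1)]
  apply key (μ.colLen 0) μ.rowLen μ.colLen
  · intro i j
    rw [← YoungDiagram.mem_iff_lt_colLen, YoungDiagram.mem_iff_lt_rowLen]
  · intro i hi
    by_contra h0
    have h1 : (i, 0) ∈ μ := YoungDiagram.mem_iff_lt_rowLen.2 (Nat.pos_of_ne_zero h0)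
    rw [YoungDiagram.mem_iff_lt_colLen] at h1
    omega
end

section
/- Let T(λ,μ) denote the number of nonnegative integer matrices with row sums λ and column sums μ. If λ majorizes ν and μ majorizes τ (with equal total sums), then T(λ,μ) ≤ T(ν,τ). -/
open Finset


/-- Vectors supported on `range n`, bounded by `m`, with sum `s`. -/
def IsVec (n : ℕ) (m : ℕ → ℕ) (s : ℕ) (x : ℕ → ℕ) : Prop :=
  (∀ c, x c ≠ 0 → c < n) ∧ (∀ c, x c ≤ m c) ∧ ∑ c ∈ range n, x c = s

lemma IsVec.le_s {n m s x} (hx : IsVec n m s x) {c : ℕ} (hc : c < n) : x c ≤ s :=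
  le_trans (Finset.single_le_sum (f := x) (fun c _ => Nat.zero_le _) (mem_range.2 hc))
    (le_of_eq hx.2.2)

lemma vec_finite (n : ℕ) (m : ℕ → ℕ) (s : ℕ) : Finite {x // IsVec n m s x} := by
  classical
  let F : {x // IsVec n m s x} → (Fin n → Fin (s + 1)) := fun x i =>
    ⟨x.1 i, by have := x.2.le_s i.2; omega⟩
  have hF : Function.Injective F := by
    rintro ⟨x, hx⟩ ⟨y, hy⟩ h
    ext c
    by_cases hc : c < n
    · have := congrFun h ⟨c, hc⟩
      simpa [F] using congrArg (Fin.val) this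
    · have h1 : x c = 0 := by by_contra h'; exact hc (hx.1 c h')
      have h2 : y c = 0 := by by_contra h'; exact hc (hy.1 c h')
      simp [h1, h2]
  exact Finite.of_injective F hF

attribute [local instance] vec_finite

/-- Cardinality of the vector set. -/
noncomputable def vCard (n : ℕ) (m : ℕ → ℕ) (s : ℕ) : ℕ := Nat.card {x // IsVec n m s x}

lemma vCard_zero_of_gt (n : ℕ) (m : ℕ → ℕ) (s : ℕ) (h : ∑ c ∈ range n, m c < s) :
    vCard n m s = 0 := by
  rw [vCard, Nat.card_eq_zero]
  left
  constructor
  rintro ⟨x, hx⟩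
  have h1 : ∑ c ∈ range n, x c ≤ ∑ c ∈ range n, m c :=
    Finset.sum_le_sum fun c _ => hx.2.1 c
  have h2 := hx.2.2
  omega

/-- Symmetry via `x ↦ m - x`. -/
lemma vCard_symm (n : ℕ) (m : ℕ → ℕ) (s t : ℕ) (hst : s + t = ∑ c ∈ range n, m c) :
    vCard n m s = vCard n m t := by
  classical
  have key : ∀ s t : ℕ, s + t = ∑ c ∈ range n, m c → ∀ x : ℕ → ℕ, IsVec n m s x →
      IsVec n m t (fun c => if c < n then m c - x c else 0) := by
    intro s t hst x hx
    refine ⟨fun c hc => by by_contra h; simp [h] at hc, fun c => by dsimp; split <;> omega, ?_⟩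
    show ∑ c ∈ range n, (if c < n then m c - x c else 0) = t
    have h1 : ∑ c ∈ range n, (if c < n then m c - x c else 0) = ∑ c ∈ range n, (m c - x c) :=
      Finset.sum_congr rfl fun c hc => by simp [mem_range.1 hc]
    have h2 : ∑ c ∈ range n, (m c - x c) + ∑ c ∈ range n, x c = ∑ c ∈ range n, m c := by
      rw [← Finset.sum_add_distrib]
      exact Finset.sum_congr rfl fun c _ => by have := hx.2.1 c; omega
    have h3 := hx.2.2
    omega
  refine Nat.card_congr ?_
  refine ⟨fun x => ⟨_, key s t hst x.1 x.2⟩, fun x => ⟨_, key t s (by omega) x.1 x.2⟩, ?_, ?_⟩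
  all_goals
    rintro ⟨x, hx⟩
    ext c
    by_cases hc : c < n
  case _ => have := hx.2.1 c; simp only [hc, if_true]; omega
  case _ =>
    have h1 : x c = 0 := by by_contra h'; exact hc (hx.1 c h')
    simp [hc, h1]
  case _ => have := hx.2.1 c; simp only [hc, if_true]; omega
  case _ =>
    have h1 : x c = 0 := by by_contra h'; exact hc (hx.1 c h')
    simp [hc, h1]

lemma nat_card_sigma {ι : Type*} [Fintype ι] (β : ι → Type*) [∀ i, Finite (β i)] :
    Nat.card (Σ i, β i) = ∑ i, Nat.card (β i) := by
  classical
  letI := fun i => Fintype.ofFinite (β i)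
  simp [Nat.card_eq_fintype_card, Fintype.card_sigma]

/-- The recurrence: peel off coordinate `n`. -/
lemma vCard_rec (n : ℕ) (m : ℕ → ℕ) (s : ℕ) :
    vCard (n + 1) m s = ∑ j ∈ Icc (s - m n) s, vCard n m j := by
  classical
  set α := {x // IsVec (n + 1) m s x}
  have hmem : ∀ x : α, s - x.1 n ∈ Icc (s - m n) s := by
    intro x
    have h1 := x.2.le_s (show n < n + 1 by omega)
    have h2 := x.2.2.1 n
    simp only [mem_Icc]
    omega
  let f : α → (Icc (s - m n) s : Finset ℕ) := fun x => ⟨s - x.1 n, hmem x⟩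
  have e1 : α ≃ Σ j : (Icc (s - m n) s : Finset ℕ), {x : α // f x = j} :=
    (Equiv.sigmaFiberEquiv f).symm
  have e2 : ∀ j : (Icc (s - m n) s : Finset ℕ),
      {x : α // f x = j} ≃ {y // IsVec n m (j : ℕ) y} := by
    intro ⟨j, hj⟩
    simp only [mem_Icc] at hj
    refine ⟨fun x => ⟨Function.update x.1.1 n 0, ?_, ?_, ?_⟩,
      fun y => ⟨⟨Function.update y.1 n (s - j), ?_, ?_, ?_⟩, ?_⟩, ?_, ?_⟩
    · intro c hc
      rcases eq_or_ne c n with rfl | hcn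
      · simp at hc
      · rw [Function.update_of_ne hcn] at hc
        have := x.1.2.1 c hc
        omega
    · intro c
      rcases eq_or_ne c n with rfl | hcn
      · simp
      · rw [Function.update_of_ne hcn]; exact x.1.2.2.1 c
    · show ∑ c ∈ range n, Function.update x.1.1 n 0 c = j
      have h1 : ∑ c ∈ range n, Function.update x.1.1 n 0 c = ∑ c ∈ range n, x.1.1 c :=
        Finset.sum_congr rfl fun c hc =>
          Function.update_of_ne (by have := mem_range.1 hc; omega) _ _
      have h2 : ∑ c ∈ range (n + 1), x.1.1 c = ∑ c ∈ range n, x.1.1 c + x.1.1 n :=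
        Finset.sum_range_succ _ _
      have h3 := x.1.2.2.2
      have h4 : s - x.1.1 n = j := by simpa using congrArg Subtype.val x.2
      have h5 := x.1.2.le_s (show n < n + 1 by omega)
      omega
    · intro c hc
      rcases eq_or_ne c n with rfl | hcn
      · omega
      · rw [Function.update_of_ne hcn] at hc
        have := y.2.1 c hc
        omega
    · intro c
      rcases eq_or_ne c n with rfl | hcn
      · simp; omega
      · rw [Function.update_of_ne hcn]; exact y.2.2.1 c
    · have h1 : ∑ c ∈ range n, Function.update y.1 n (s - j) c = ∑ c ∈ range n, y.1 c :=
        Finset.sum_congr rfl fun c hc =>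
          Function.update_of_ne (by have := mem_range.1 hc; omega) _ _
      rw [Finset.sum_range_succ, h1, y.2.2.2]
      simp only [Function.update_self]
      omega
    · show (⟨s - Function.update y.1 n (s - j) n, _⟩ : (Icc (s - m n) s : Finset ℕ)) = ⟨j, _⟩
      simp only [Function.update_self, Subtype.mk.injEq]
      omega
    · rintro ⟨⟨x, hx⟩, hfx⟩
      have h4 : s - x n = j := by simpa using congrArg Subtype.val hfx
      have h5 := hx.le_s (show n < n + 1 by omega)
      ext c
      rcases eq_or_ne c n with rfl | hcn
      · simp only [Function.update_self]; omega
      · simp [Function.update_of_ne hcn]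
    · rintro ⟨y, hy⟩
      have h0 : y n = 0 := by by_contra h'; have := hy.1 n h'; omega
      ext c
      rcases eq_or_ne c n with rfl | hcn
      · simp only [Function.update_self]; omega
      · simp [Function.update_of_ne hcn]
  have := Nat.card_congr (e1.trans (Equiv.sigmaCongrRight e2))
  rw [vCard, this, nat_card_sigma]
  rw [Finset.univ_eq_attach, ← Finset.sum_attach (Icc (s - m n) s) (fun j => vCard n m j)]
  rfl


lemma mono_of_adj (f : ℕ → ℕ) (T : ℕ) (adj : ∀ s, 2 * (s + 1) ≤ T → f s ≤ f (s + 1)) :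
    ∀ j k, j ≤ k → 2 * k ≤ T → f j ≤ f k := by
  intro j k hjk h2k
  induction k with
  | zero => have : j = 0 := by omega
            subst this; exact le_rfl
  | succ k ih =>
      rcases Nat.lt_or_ge j (k + 1) with h | h
      · exact le_trans (ih (by omega) (by omega)) (adj k (by omega))
      · have : j = k + 1 := by omega
        subst this; exact le_rfl

lemma sum_Icc_bot (a b : ℕ) (h : a ≤ b) (f : ℕ → ℕ) :
    ∑ k ∈ Icc a b, f k = f a + ∑ k ∈ Icc (a + 1) b, f k := by
  rw [Finset.Icc_eq_cons_Ioc h, Finset.sum_cons, Finset.Icc_add_one_left_eq_Ioc]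

lemma vCard_adj (n : ℕ) (m : ℕ → ℕ) :
    ∀ s, 2 * (s + 1) ≤ ∑ c ∈ range n, m c → vCard n m s ≤ vCard n m (s + 1) := by
  induction n with
  | zero => intro s hs; simp at hs
  | succ n ih =>
    intro s hs
    rw [Finset.sum_range_succ] at hs
    set T := ∑ c ∈ range n, m c with hT
    have mono := mono_of_adj (fun s => vCard n m s) T ih
    rw [vCard_rec, vCard_rec]
    rcases Nat.lt_or_ge s (m n) with h | h
    · have h1 : s - m n = 0 := by omega
      have h2 : s + 1 - m n = 0 := by omega
      rw [h1, h2, Finset.sum_Icc_succ_top (by omega)]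
      omega
    · have h1 : s + 1 - m n = (s - m n) + 1 := by omega
      rw [h1, Finset.sum_Icc_succ_top (by omega), sum_Icc_bot (s - m n) s (by omega)]
      have key : vCard n m (s - m n) ≤ vCard n m (s + 1) := by
        rcases Nat.lt_or_ge T (2 * (s + 1)) with h2 | h2
        · -- reflect s+1
          have hsT : s + 2 ≤ T := by omega
          have hrefl : vCard n m (s + 1) = vCard n m (T - (s + 1)) :=
            vCard_symm n m _ _ (by omega)
          rw [hrefl]
          exact mono (s - m n) (T - (s + 1)) (by omega) (by omega)
        · exact mono (s - m n) (s + 1) (by omega) h2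
      omega

lemma vCard_dec (n : ℕ) (m : ℕ → ℕ) (s : ℕ) (h : ∑ c ∈ range n, m c + 1 ≤ 2 * s) :
    vCard n m s ≤ vCard n m (s - 1) := by
  set T := ∑ c ∈ range n, m c with hT
  have mono := mono_of_adj (fun s => vCard n m s) T (vCard_adj n m)
  rcases Nat.lt_or_ge T s with h1 | h1
  · rw [vCard_zero_of_gt n m s h1]; exact Nat.zero_le _
  · rcases Nat.eq_or_lt_of_le h with h2 | h2
    · -- 2s = T+1
      exact le_of_eq (vCard_symm n m s (s - 1) (by omega))
    · -- 2s ≥ T+2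
      have hs : vCard n m s = vCard n m (T - s) := vCard_symm n m _ _ (by omega)
      rcases Nat.lt_or_ge T (2 * (s - 1)) with h3 | h3
      · have hs1 : vCard n m (s - 1) = vCard n m (T - s + 1) :=
          vCard_symm n m _ _ (by omega)
        rw [hs, hs1]
        exact mono (T - s) (T - s + 1) (by omega) (by omega)
      · rw [hs]
        exact mono (T - s) (s - 1) (by omega) (by omega)


lemma IsVec_def (n : ℕ) (m : ℕ → ℕ) (s : ℕ) (x : ℕ → ℕ) : IsVec n m s x ↔
  ((∀ c, x c ≠ 0 → c < n) ∧ (∀ c, x c ≤ m c) ∧ ∑ c ∈ range n, x c = s) := Iff.rfl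

lemma vCard_dec' (n : ℕ) (m : ℕ → ℕ) (s : ℕ) (h : ∑ c ∈ range n, m c + 1 ≤ 2 * s) :
    Nat.card {x // IsVec n m s x} ≤ Nat.card {x // IsVec n m (s-1) x} :=
  vCard_dec n m s h

/-- The number `T(λ,μ)` of contingency tables: nonnegative integer matrices
(supported on an `N × N` grid) with row sums `λ` and column sums `μ`. -/
noncomputable def contTables (N : ℕ) (lam mu : ℕ → ℕ) : ℕ :=
  Nat.card {M : ℕ → ℕ → ℕ //
    (∀ i j, M i j ≠ 0 → i < N ∧ j < N) ∧
    (∀ i, ∑ j ∈ Finset.range N, M i j = lam i) ∧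
    (∀ j, ∑ i ∈ Finset.range N, M i j = mu j)}

section Tables

/-- Table predicate. -/
def IsTable (N : ℕ) (lam mu : ℕ → ℕ) (M : ℕ → ℕ → ℕ) : Prop :=
  (∀ i j, M i j ≠ 0 → i < N ∧ j < N) ∧
  (∀ i, ∑ j ∈ Finset.range N, M i j = lam i) ∧
  (∀ j, ∑ i ∈ Finset.range N, M i j = mu j)

lemma contTables_eq (N : ℕ) (lam mu : ℕ → ℕ) :
    contTables N lam mu = Nat.card {M // IsTable N lam mu M} := rfl

lemma table_finite (N : ℕ) (lam mu : ℕ → ℕ) : Finite {M // IsTable N lam mu M} := by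
  classical
  set B := ∑ i ∈ range N, lam i with hB
  have hbound : ∀ (M : {M // IsTable N lam mu M}) (i j : ℕ), i < N → M.1 i j ≤ B := by
    rintro ⟨M, hM⟩ i j hi
    show M i j ≤ B
    by_cases hj : j < N
    · calc M i j ≤ ∑ j' ∈ range N, M i j' :=
            Finset.single_le_sum (fun c _ => Nat.zero_le _) (mem_range.2 hj)
        _ = lam i := hM.2.1 i
        _ ≤ B := Finset.single_le_sum (fun c _ => Nat.zero_le _) (mem_range.2 hi)
    · have : M i j = 0 := by by_contra h'; exact hj (hM.1 i j h').2
      omega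
  let F : {M // IsTable N lam mu M} → (Fin N → Fin N → Fin (B + 1)) := fun M i j =>
    ⟨M.1 i j, by have := hbound M i j i.2; omega⟩
  have hF : Function.Injective F := by
    rintro ⟨M, hM⟩ ⟨M', hM'⟩ h
    ext i j
    by_cases hij : i < N ∧ j < N
    · have := congrFun (congrFun h ⟨i, hij.1⟩) ⟨j, hij.2⟩
      simpa [F] using congrArg Fin.val this
    · have h1 : M i j = 0 := by by_contra h'; exact hij (hM.1 i j h')
      have h2 : M' i j = 0 := by by_contra h'; exact hij (hM'.1 i j h')
      simp [h1, h2]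
  exact Finite.of_injective F hF

/-- Transposition symmetry. -/
lemma contTables_comm (N : ℕ) (p q : ℕ → ℕ) : contTables N p q = contTables N q p := by
  rw [contTables_eq, contTables_eq]
  refine Nat.card_congr ⟨fun M => ⟨fun i j => M.1 j i, ?_, M.2.2.2, M.2.2.1⟩,
    fun M => ⟨fun i j => M.1 j i, ?_, M.2.2.2, M.2.2.1⟩, fun M => rfl, fun M => rfl⟩
  · exact fun i j h => ⟨(M.2.1 j i h).2, (M.2.1 j i h).1⟩
  · exact fun i j h => ⟨(M.2.1 j i h).2, (M.2.1 j i h).1⟩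

/-- Tables only depend on the row-sum function below `N` (given support). -/
lemma contTables_congr (N : ℕ) (lam nu mu : ℕ → ℕ)
    (h : ∀ i, i < N → lam i = nu i)
    (hlam : ∀ i, N ≤ i → lam i = 0) (hnu : ∀ i, N ≤ i → nu i = 0) :
    contTables N lam mu = contTables N nu mu := by
  rw [contTables_eq, contTables_eq]
  refine Nat.card_congr (Equiv.subtypeEquivRight fun M => ?_)
  have key : ∀ lam' nu' : ℕ → ℕ, (∀ i, i < N → lam' i = nu' i) → (∀ i, N ≤ i → lam' i = 0) →
      (∀ i, N ≤ i → nu' i = 0) → IsTable N lam' mu M → IsTable N nu' mu M := by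
    rintro lam' nu' h h0 h0' ⟨h1, h2, h3⟩
    refine ⟨h1, fun i => ?_, h3⟩
    by_cases hi : i < N
    · rw [h2 i, h i hi]
    · rw [h0' i (by omega)]
      apply Finset.sum_eq_zero
      intro j _
      by_contra h'
      exact hi (h1 i j h').1
  exact ⟨key lam nu h hlam hnu, key nu lam (fun i hi => (h i hi).symm) hnu hlam⟩

end Tables

section Step

variable (N a b : ℕ) (r r' mu : ℕ → ℕ)

lemma sum_sub_pointwise (n : ℕ) (f g : ℕ → ℕ) (h : ∀ c, g c ≤ f c) :
    ∑ c ∈ range n, (f c - g c) + ∑ c ∈ range n, g c = ∑ c ∈ range n, f c := by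
  rw [← Finset.sum_add_distrib]
  exact Finset.sum_congr rfl fun c _ => by have := h c; omega

lemma sum_split_two (n : ℕ) (ha : a < n) (hb : b < n) (hab : a ≠ b) (f : ℕ → ℕ) :
    ∑ i ∈ range n, f i = f a + f b + ∑ i ∈ ((range n).erase a).erase b, f i := by
  classical
  rw [← Finset.add_sum_erase _ f (mem_range.2 ha),
    ← Finset.add_sum_erase ((range n).erase a) f
      (Finset.mem_erase.2 ⟨Ne.symm hab, mem_range.2 hb⟩)]
  ring

lemma step_lemma (ha : a < N) (hb : b < N) (hab : a ≠ b) (hba : r b < r a)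
    (h'a : r' a + 1 = r a) (h'b : r' b = r b + 1)
    (h'o : ∀ i, i ≠ a → i ≠ b → r' i = r i) :
    contTables N r mu ≤ contTables N r' mu := by
  classical
  rw [contTables_eq, contTables_eq]
  haveI := table_finite N r' mu
  -- function-level family of injections on fibers
  have embF : ∀ m : ℕ → ℕ, ∃ e : (ℕ → ℕ) → (ℕ → ℕ),
      (∑ c ∈ range N, m c = r a + r b) →
      ((∀ x, IsVec N m (r a) x → IsVec N m (r a - 1) (e x)) ∧
       (∀ x y, IsVec N m (r a) x → IsVec N m (r a) y → e x = e y → x = y)) := by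
    intro m
    by_cases hm : ∑ c ∈ range N, m c = r a + r b
    · have hcard : Nat.card {x // IsVec N m (r a) x} ≤ Nat.card {x // IsVec N m (r a - 1) x} :=
        vCard_dec' N m (r a) (by omega)
      haveI := vec_finite N m (r a)
      haveI := vec_finite N m (r a - 1)
      letI := Fintype.ofFinite {x // IsVec N m (r a) x}
      letI := Fintype.ofFinite {x // IsVec N m (r a - 1) x}
      rw [Nat.card_eq_fintype_card, Nat.card_eq_fintype_card] at hcard
      obtain ⟨f⟩ := Function.Embedding.nonempty_of_card_le hcard
      refine ⟨fun x => if h : IsVec N m (r a) x then (f ⟨x, h⟩).1 else x, fun _ => ⟨?_, ?_⟩⟩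
      · intro x hx
        simpa only [dif_pos hx] using (f ⟨x, hx⟩).2
      · intro x y hx hy hxy
        simp only [dif_pos hx, dif_pos hy] at hxy
        have := f.injective (Subtype.ext hxy)
        exact congrArg Subtype.val this
    · exact ⟨id, fun h => absurd h hm⟩
  choose e he using embF
  -- the global map
  set mf : (ℕ → ℕ → ℕ) → (ℕ → ℕ) := fun M c => M a c + M b c with hmf
  set xf : (ℕ → ℕ → ℕ) → (ℕ → ℕ) := fun M => e (mf M) (fun c => M a c) with hxf
  set build : (ℕ → ℕ → ℕ) → (ℕ → ℕ → ℕ) := fun M i c =>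
    if i = a then xf M c else if i = b then mf M c - xf M c else M i c with hbuild
  have build_a : ∀ M c, build M a c = xf M c := fun M c => by
    rw [hbuild]; simp
  have build_b : ∀ M c, build M b c = mf M c - xf M c := fun M c => by
    rw [hbuild]; simp [Ne.symm hab]
  have build_o : ∀ M i, i ≠ a → i ≠ b → ∀ c, build M i c = M i c := fun M i hia hib c => by
    rw [hbuild]; simp [hia, hib]
  -- facts about tables
  have hmsum : ∀ M : ℕ → ℕ → ℕ, IsTable N r mu M → ∑ c ∈ range N, mf M c = r a + r b := by
    intro M hM
    show ∑ c ∈ range N, (M a c + M b c) = r a + r b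
    rw [Finset.sum_add_distrib, hM.2.1 a, hM.2.1 b]
  have hrowa : ∀ M : ℕ → ℕ → ℕ, IsTable N r mu M → IsVec N (mf M) (r a) (fun c => M a c) := by
    intro M hM
    rw [IsVec_def]
    exact ⟨fun c hc => (hM.1 a c hc).2, fun c => Nat.le_add_right _ _, hM.2.1 a⟩
  have hx' : ∀ M : ℕ → ℕ → ℕ, IsTable N r mu M → IsVec N (mf M) (r a - 1) (xf M) := by
    intro M hM
    exact ((he (mf M) (hmsum M hM)).1 (fun c => M a c) (hrowa M hM))
  have hx'le : ∀ M : ℕ → ℕ → ℕ, IsTable N r mu M → ∀ c, xf M c ≤ mf M c := by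
    intro M hM c
    exact ((IsVec_def _ _ _ _).1 (hx' M hM)).2.1 c
  -- build M is a table
  have hbuild_table : ∀ M : ℕ → ℕ → ℕ, IsTable N r mu M → IsTable N r' mu (build M) := by
    intro M hM
    obtain ⟨hx1, hx2, hx3⟩ := (IsVec_def _ _ _ _).1 (hx' M hM)
    refine ⟨?_, ?_, ?_⟩
    · intro i c hc
      by_cases hia : i = a
      · subst hia
        rw [build_a] at hc
        exact ⟨ha, hx1 c hc⟩
      · by_cases hib : i = b
        · rw [hib] at hc ⊢
          rw [build_b] at hc
          have hne : M a c + M b c ≠ 0 := by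
            have : mf M c = M a c + M b c := rfl
            omega
          refine ⟨hb, ?_⟩
          rcases Nat.eq_zero_or_pos (M a c) with h0 | h0
          · exact (hM.1 b c (by omega)).2
          · exact (hM.1 a c (by omega)).2
        · rw [build_o M i hia hib] at hc
          exact hM.1 i c hc
    · intro i
      by_cases hia : i = a
      · subst hia
        rw [Finset.sum_congr rfl fun c _ => build_a M c, hx3]
        omega
      · by_cases hib : i = b
        · rw [hib]
          rw [Finset.sum_congr rfl fun c _ => build_b M c]
          have hsub := sum_sub_pointwise N (mf M) (xf M) (hx'le M hM)
          have hmm := hmsum M hM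
          omega
        · rw [Finset.sum_congr rfl fun c _ => build_o M i hia hib c, hM.2.1 i, h'o i hia hib]
    · intro c
      rw [sum_split_two a b N ha hb hab]
      have h3 : ∑ i ∈ ((range N).erase a).erase b, build M i c
          = ∑ i ∈ ((range N).erase a).erase b, M i c := by
        refine Finset.sum_congr rfl fun i hi => ?_
        have hi' := Finset.mem_erase.1 hi
        have hi'' := Finset.mem_erase.1 hi'.2
        exact build_o M i hi''.1 hi'.1 c
      have h4 := hx'le M hM c
      have h5 : mf M c = M a c + M b c := rfl
      have hcol := hM.2.2 c
      rw [sum_split_two a b N ha hb hab (fun i => M i c)] at hcol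
      have hcol2 : M a c + M b c + ∑ i ∈ ((range N).erase a).erase b, M i c = mu c := hcol
      rw [build_a, build_b, h3]
      omega
  -- the injection
  let Phi : {M // IsTable N r mu M} → {M // IsTable N r' mu M} :=
    fun M => ⟨build M.1, hbuild_table M.1 M.2⟩
  apply Nat.card_le_card_of_injective Phi
  rintro ⟨M, hM⟩ ⟨M₂, hM₂⟩ hMM
  have hfun : build M = build M₂ := congrArg Subtype.val hMM
  have hxeq : xf M = xf M₂ := funext fun c => by
    have e1 : build M a c = build M₂ a c := by rw [hfun]
    rwa [build_a, build_a] at e1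
  have hmeq : mf M = mf M₂ := by
    funext c
    have h1 := hx'le M hM c
    have h2 := hx'le M₂ hM₂ c
    have e2 : build M b c = build M₂ b c := by rw [hfun]
    rw [build_b, build_b] at e2
    have e1 := congrFun hxeq c
    omega
  have hrow2 : IsVec N (mf M) (r a) (fun c => M₂ a c) := by
    rw [hmeq]; exact hrowa M₂ hM₂
  have hrowe : (fun c => M a c) = (fun c => M₂ a c) := by
    refine (he (mf M) (hmsum M hM)).2 _ _ (hrowa M hM) hrow2 ?_
    show e (mf M) (fun c => M a c) = e (mf M) (fun c => M₂ a c)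
    calc e (mf M) (fun c => M a c) = xf M := rfl
      _ = xf M₂ := hxeq
      _ = e (mf M₂) (fun c => M₂ a c) := rfl
      _ = e (mf M) (fun c => M₂ a c) := by rw [hmeq]
  apply Subtype.ext
  funext i c
  show M i c = M₂ i c
  by_cases hia : i = a
  · subst hia; exact congrFun hrowe c
  · by_cases hib : i = b
    · rw [hib]
      have h5 : M a c + M b c = M₂ a c + M₂ b c := congrFun hmeq c
      have h6 : M a c = M₂ a c := congrFun hrowe c
      omega
    · have e3 : build M i c = build M₂ i c := by rw [hfun]
      rwa [build_o M i hia hib, build_o M₂ i hia hib] at e3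

end Step

section Maj

lemma sum_update_two (lam : ℕ → ℕ) (a b : ℕ) (hab : a ≠ b) (h1 : 1 ≤ lam a) (k : ℕ) :
    ∑ i ∈ range k, (Function.update (Function.update lam a (lam a - 1)) b (lam b + 1)) i
      + (if a < k then 1 else 0)
    = ∑ i ∈ range k, lam i + (if b < k then 1 else 0) := by
  classical
  set lam' := Function.update (Function.update lam a (lam a - 1)) b (lam b + 1) with hl
  have key : ∀ i, lam' i + (if i = a then 1 else 0) = lam i + (if i = b then 1 else 0) := by
    intro i
    rcases eq_or_ne i a with rfl | hia
    · rw [hl, Function.update_of_ne hab, Function.update_self]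
      simp [hab]
      omega
    · rcases eq_or_ne i b with rfl | hib
      · rw [hl, Function.update_self]
        simp [Ne.symm hab]
      · rw [hl, Function.update_of_ne hib, Function.update_of_ne hia]
        simp [hia, hib]
  have h2 : ∑ i ∈ range k, (lam' i + (if i = a then 1 else 0))
      = ∑ i ∈ range k, (lam i + (if i = b then 1 else 0)) :=
    Finset.sum_congr rfl fun i _ => key i
  rw [Finset.sum_add_distrib, Finset.sum_add_distrib, Finset.sum_ite_eq' (range k) a (fun _ => 1),
    Finset.sum_ite_eq' (range k) b (fun _ => 1)] at h2
  simpa [Finset.mem_range] using h2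

lemma maj_le (N : ℕ) (mu nu : ℕ → ℕ) (hnu_dec : ∀ i, nu (i + 1) ≤ nu i)
    (hnu_supp : ∀ i, N ≤ i → nu i = 0) :
    ∀ (D : ℕ) (lam : ℕ → ℕ), (∀ i, N ≤ i → lam i = 0) →
      (∑ i ∈ range N, lam i = ∑ i ∈ range N, nu i) →
      (∀ k, ∑ i ∈ range k, nu i ≤ ∑ i ∈ range k, lam i) →
      (∑ k ∈ range (N + 1), (∑ i ∈ range k, lam i - ∑ i ∈ range k, nu i)) ≤ D →
      contTables N lam mu ≤ contTables N nu mu := by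
  classical
  intro D
  induction D with
  | zero =>
    intro lam hsupp htot hmaj hD
    -- all partial sums agree, so lam = nu below N
    have hps : ∀ k, k ≤ N → ∑ i ∈ range k, lam i = ∑ i ∈ range k, nu i := by
      intro k hk
      have h1 : ∑ i ∈ range k, lam i - ∑ i ∈ range k, nu i = 0 := by
        have : (∑ i ∈ range k, lam i - ∑ i ∈ range k, nu i) ≤ 0 := by
          calc _ ≤ ∑ k ∈ range (N + 1), (∑ i ∈ range k, lam i - ∑ i ∈ range k, nu i) :=
                Finset.single_le_sum (fun _ _ => Nat.zero_le _) (mem_range.2 (by omega))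
            _ ≤ 0 := hD
        omega
      have := hmaj k
      omega
    have heq : ∀ i, i < N → lam i = nu i := by
      intro i hi
      have h1 := hps i (by omega)
      have h2 := hps (i + 1) (by omega)
      rw [Finset.sum_range_succ, Finset.sum_range_succ] at h2
      omega
    exact le_of_eq (contTables_congr N lam nu mu heq hsupp hnu_supp)
  | succ D ih =>
    intro lam hsupp htot hmaj hD
    by_cases hD' : (∑ k ∈ range (N + 1), (∑ i ∈ range k, lam i - ∑ i ∈ range k, nu i)) ≤ D
    · exact ih lam hsupp htot hmaj hD'
    -- lam ≠ nu somewhere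
    have hex : ∃ i, lam i ≠ nu i := by
      by_contra hc
      push_neg at hc
      have : ∀ k, ∑ i ∈ range k, lam i = ∑ i ∈ range k, nu i :=
        fun k => Finset.sum_congr rfl fun i _ => hc i
      have : (∑ k ∈ range (N + 1), (∑ i ∈ range k, lam i - ∑ i ∈ range k, nu i)) = 0 :=
        Finset.sum_eq_zero fun k _ => by rw [this k]; omega
      omega
    obtain ⟨a, haP, halt'⟩ : ∃ n, lam n ≠ nu n ∧ ∀ m, m < n → ¬ lam m ≠ nu m :=
      ⟨Nat.find hex, Nat.find_spec hex, fun m hm => Nat.find_min hex hm⟩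
    have halt : ∀ i, i < a → lam i = nu i := fun i hi => by
      have := halt' i hi
      omega
    have haN : a < N := by
      by_contra hc
      push_neg at hc
      rw [hsupp a hc, hnu_supp a hc] at haP
      exact haP rfl
    have hagt : nu a < lam a := by
      have h1 := hmaj (a + 1)
      rw [Finset.sum_range_succ, Finset.sum_range_succ] at h1
      have h2 : ∑ i ∈ range a, lam i = ∑ i ∈ range a, nu i :=
        Finset.sum_congr rfl fun i hi => halt i (mem_range.1 hi)
      omega
    have hexb : ∃ i, lam i < nu i := by
      by_contra hc
      push_neg at hc
      have : ∑ i ∈ range N, nu i < ∑ i ∈ range N, lam i :=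
        Finset.sum_lt_sum (fun i _ => hc i) ⟨a, mem_range.2 haN, hagt⟩
      omega
    obtain ⟨b, hbP, hblt'⟩ : ∃ n, lam n < nu n ∧ ∀ m, m < n → ¬ lam m < nu m :=
      ⟨Nat.find hexb, Nat.find_spec hexb, fun m hm => Nat.find_min hexb hm⟩
    have hblt : ∀ i, i < b → nu i ≤ lam i := fun i hi => by
      have := hblt' i hi
      omega
    have hab : a < b := by
      rcases Nat.lt_trichotomy a b with h | h | h
      · exact h
      · exfalso
        rw [h] at hagt
        omega
      · exfalso
        have h2 := halt b h
        omega
    have hbN : b < N := by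
      by_contra hc
      push_neg at hc
      rw [hnu_supp b hc] at hbP
      omega
    have hba : lam b < lam a := by
      have h1 : nu b ≤ nu a := antitone_nat_of_succ_le hnu_dec (le_of_lt hab)
      omega
    set lam' := Function.update (Function.update lam a (lam a - 1)) b (lam b + 1) with hl'
    have hl'a : lam' a = lam a - 1 := by
      rw [hl', Function.update_of_ne (by omega), Function.update_self]
    have hl'b : lam' b = lam b + 1 := by
      rw [hl', Function.update_self]
    have hl'o : ∀ i, i ≠ a → i ≠ b → lam' i = lam i := fun i hia hib => by
      rw [hl', Function.update_of_ne hib, Function.update_of_ne hia]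
    have hstep : contTables N lam mu ≤ contTables N lam' mu :=
      step_lemma N a b lam lam' mu haN hbN (by omega) hba (by omega) hl'b hl'o
    -- partial sums of lam'
    have hsums : ∀ k, ∑ i ∈ range k, lam' i + (if a < k then 1 else 0)
        = ∑ i ∈ range k, lam i + (if b < k then 1 else 0) := by
      intro k
      have := sum_update_two lam a b (by omega) (by omega) k
      rw [← hl'] at this
      exact this
    -- strict dominance in the middle
    have hmid : ∀ k, a < k → k ≤ b → ∑ i ∈ range k, nu i + 1 ≤ ∑ i ∈ range k, lam i := by
      intro k hk1 hk2
      have key : ∀ i ∈ range k, nu i + (if i = a then 1 else 0) ≤ lam i := by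
        intro i hi
        have hik := mem_range.1 hi
        rcases Nat.lt_trichotomy i a with h | h | h
        · rw [halt i h]; simp [Nat.ne_of_lt h]
        · subst h; simp; omega
        · have : nu i ≤ lam i := hblt i (by omega)
          simp [Nat.ne_of_gt h]
          omega
      have h2 := Finset.sum_le_sum key
      rw [Finset.sum_add_distrib, Finset.sum_ite_eq' (range k) a (fun _ => 1)] at h2
      simpa [mem_range.2 (by omega : a < k)] using h2
    refine le_trans hstep (ih lam' ?_ ?_ ?_ ?_)
    · intro i hi
      rw [hl'o i (by omega) (by omega), hsupp i hi]
    · have := hsums N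
      simp only [if_pos haN, if_pos hbN] at this
      omega
    · intro k
      have hs := hsums k
      by_cases hak : a < k
      · by_cases hbk : b < k
        · simp only [if_pos hak, if_pos hbk] at hs
          have := hmaj k
          omega
        · simp only [if_pos hak, if_neg hbk] at hs
          have := hmid k hak (by omega)
          omega
      · have hbk : ¬ b < k := by omega
        simp only [if_neg hak, if_neg hbk] at hs
        have := hmaj k
        omega
    · -- measure decreases
      have hterm : ∀ k ∈ range (N + 1),
          (∑ i ∈ range k, lam' i - ∑ i ∈ range k, nu i)
            ≤ (∑ i ∈ range k, lam i - ∑ i ∈ range k, nu i) := by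
        intro k _
        have hs := hsums k
        by_cases hak : a < k <;> by_cases hbk : b < k <;>
          simp only [if_pos, if_neg, hak, hbk, if_true, if_false] at hs <;> omega
      have hstrict : (∑ i ∈ range (a+1), lam' i - ∑ i ∈ range (a+1), nu i)
            < (∑ i ∈ range (a+1), lam i - ∑ i ∈ range (a+1), nu i) := by
        have hs := hsums (a + 1)
        have h1 : a < a + 1 := by omega
        have h2 : ¬ b < a + 1 := by omega
        simp only [if_pos h1, if_neg h2] at hs
        have h3 := hmid (a + 1) (by omega) (by omega)
        omega
      have hlt : (∑ k ∈ range (N + 1), (∑ i ∈ range k, lam' i - ∑ i ∈ range k, nu i))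
          < (∑ k ∈ range (N + 1), (∑ i ∈ range k, lam i - ∑ i ∈ range k, nu i)) :=
        Finset.sum_lt_sum hterm ⟨a + 1, mem_range.2 (by omega), hstrict⟩
      omega

end Maj


/-- Barvinok's inequality: if `λ ⊵ ν` and `μ ⊵ τ` (majorization with equal
total sums), then `T(λ,μ) ≤ T(ν,τ)`. Partitions are encoded as weakly
decreasing functions `ℕ → ℕ` supported on `{0, …, N-1}`. -/
theorem barvinok_inequality (N : ℕ) (lam mu nu tau : ℕ → ℕ)
    (hlam_dec : ∀ i, lam (i + 1) ≤ lam i) (hmu_dec : ∀ i, mu (i + 1) ≤ mu i)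
    (hnu_dec : ∀ i, nu (i + 1) ≤ nu i) (htau_dec : ∀ i, tau (i + 1) ≤ tau i)
    (hlam_supp : ∀ i, N ≤ i → lam i = 0) (hmu_supp : ∀ i, N ≤ i → mu i = 0)
    (hnu_supp : ∀ i, N ≤ i → nu i = 0) (htau_supp : ∀ i, N ≤ i → tau i = 0)
    (htot1 : ∑ i ∈ Finset.range N, lam i = ∑ i ∈ Finset.range N, nu i)
    (htot2 : ∑ i ∈ Finset.range N, mu i = ∑ i ∈ Finset.range N, tau i)
    (hmaj1 : ∀ k, ∑ i ∈ Finset.range k, nu i ≤ ∑ i ∈ Finset.range k, lam i)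
    (hmaj2 : ∀ k, ∑ i ∈ Finset.range k, tau i ≤ ∑ i ∈ Finset.range k, mu i) :
    contTables N lam mu ≤ contTables N nu tau := by
  have h1 : contTables N lam mu ≤ contTables N nu mu :=
    maj_le N mu nu hnu_dec hnu_supp _ lam hlam_supp htot1 hmaj1 le_rfl
  have h2 : contTables N nu mu = contTables N mu nu := contTables_comm N nu mu
  have h3 : contTables N mu nu ≤ contTables N tau nu :=
    maj_le N nu tau htau_dec htau_supp _ mu hmu_supp htot2 hmaj2 le_rfl
  have h4 : contTables N tau nu = contTables N nu tau := contTables_comm N tau nu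
  omega
end
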